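/- arXiv:1704.07907 — 6 statements merged into one kernel-verified Lean document; each statement's English description precedes it below -/
import Mathlib

section
/- For every integer r ≥ 2, ((r−1)/(e·r))^{r−1} ≤ f(r,0) ≤ (r−1)!/r^{r−1}. -/
open Finset

namespace ListCol

/-! ### Preference orders and the functions `f(r,θ,m)`, `f(r,θ)`, `β(α)` and `g(r,α)`

A total order `<ᵢ` of `[m]` is encoded by a permutation `σ : Equiv.Perm (Fin m)`,
where `σ k` is the number of elements strictly below `k` in the order; the relative
position of `k` is then `(σ k + 1)/m`. An `(r,m)`-preference order is an `r`-tuple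
of such orders. -/

/-- `x ∈ P`: `x` is the `r`-tuple of relative positions of some element `k ∈ [m]`. -/
def MemPref {r m : ℕ} (P : Fin r → Equiv.Perm (Fin m)) (x : Fin r → ℝ) : Prop :=
  ∃ k : Fin m, ∀ i, x i = (((P i k : ℕ) : ℝ) + 1) / (m : ℝ)

/-- `i` is the least index at which `x : Fin r → ℝ` attains its maximum. -/
def IsMaxIdxR {r : ℕ} (x : Fin r → ℝ) (i : Fin r) : Prop :=
  (∀ j, x j ≤ x i) ∧ ∀ j, (∀ l, x l ≤ x j) → i ≤ j

/-- `f_P(θ) = max { ∏_{i ≠ i_x} x_i : x ∈ [θ,1]^r, x ∈ P }`. -/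
noncomputable def fP {r m : ℕ} (P : Fin r → Equiv.Perm (Fin m)) (θ : ℝ) : ℝ :=
  sSup {y : ℝ | ∃ x : Fin r → ℝ, MemPref P x ∧ (∀ i, θ ≤ x i ∧ x i ≤ 1) ∧
    ∃ i, IsMaxIdxR x i ∧ y = ∏ j ∈ univ.erase i, x j}

/-- `f(r,θ,m) = min { f_P(θ) : P an (r,m)-preference order }`. -/
noncomputable def fMin (r m : ℕ) (θ : ℝ) : ℝ :=
  sInf {y : ℝ | ∃ P : Fin r → Equiv.Perm (Fin m), y = fP P θ}

/-- `f(r,θ) = inf { f(r,θ,m) : m ∈ ℕ, m ≥ 1 }`. -/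
noncomputable def fInf (r : ℕ) (θ : ℝ) : ℝ :=
  sInf {y : ℝ | ∃ m : ℕ, 1 ≤ m ∧ y = fMin r m θ}

/-- `β(α) = sup { θ ∈ [0,1/r] : θ^α ≤ f(r,θ) }`, the unique solution of
`θ^α = f(r,θ)` in `[0,1/r]` (for `0 < α ≤ r-1`). -/
noncomputable def betaVal (r : ℕ) (α : ℝ) : ℝ :=
  sSup {θ : ℝ | θ ∈ Set.Icc 0 (1 / (r : ℝ)) ∧ θ ^ α ≤ fInf r θ}

/-- `g(r,α) = -1 / log_r f(r,β(α))` for `α > 0`, with `g(r,0)` defined as the common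
value of `g(r,α)` on `(0,1]` (namely `g(r,1)`). -/
noncomputable def gFun (r : ℕ) (α : ℝ) : ℝ :=
  -1 / Real.logb r (fInf r (betaVal r (if α = 0 then 1 else α)))


/-- `n^n ≤ n! * e^n`. -/
lemma pow_le_factorial_mul_exp (n : ℕ) :
    (n : ℝ) ^ n ≤ (n.factorial : ℝ) * Real.exp 1 ^ n := by
  have h1 : ((n : ℝ)) ^ n / (n.factorial : ℝ) ≤ Real.exp n := by
    have h2 := Real.sum_le_exp_of_nonneg (x := (n : ℝ)) (by positivity) (n + 1)
    refine le_trans ?_ h2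
    have := Finset.single_le_sum (f := fun i => (n : ℝ) ^ i / i.factorial)
      (fun i _ => by positivity) (Finset.self_mem_range_succ n)
    simpa using this
  have hfac : (0 : ℝ) < (n.factorial : ℝ) := by exact_mod_cast n.factorial_pos
  rw [div_le_iff₀ hfac] at h1
  calc (n : ℝ) ^ n ≤ Real.exp n * n.factorial := h1
    _ = (n.factorial : ℝ) * Real.exp 1 ^ n := by
        rw [← Real.exp_one_rpow (n : ℝ), Real.rpow_natCast, mul_comm]

/-- distinct-values product bound -/
lemma prod_mul_factorial_le :
    ∀ (m : ℕ) (T : Finset ℕ), T ⊆ Finset.range m →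
      (∏ t ∈ T, (t + 1)) * (m - T.card).factorial ≤ m.factorial := by
  intro m
  induction m with
  | zero =>
    intro T hT
    have : T = ∅ := Finset.subset_empty.mp (by simpa using hT)
    simp [this]
  | succ m ih =>
    intro T hT
    by_cases hm : m ∈ T
    · have hT' : T.erase m ⊆ Finset.range m := by
        intro t ht
        rw [Finset.mem_erase] at ht
        have := hT ht.2
        rw [Finset.mem_range] at this ⊢
        omega
      have h1 := ih (T.erase m) hT'
      have hcard : T.card = (T.erase m).card + 1 := by
        rw [Finset.card_erase_of_mem hm]
        have : 1 ≤ T.card := Finset.card_pos.mpr ⟨m, hm⟩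
        omega
      have hprod : (∏ t ∈ T, (t + 1)) = (m + 1) * ∏ t ∈ T.erase m, (t + 1) :=
        (Finset.mul_prod_erase T _ hm).symm
      have hsub : m + 1 - T.card = m - (T.erase m).card := by
        have := Finset.card_le_card hT'
        rw [Finset.card_range] at this
        omega
      calc (∏ t ∈ T, (t + 1)) * (m + 1 - T.card).factorial
          = (m + 1) * ((∏ t ∈ T.erase m, (t + 1)) * (m - (T.erase m).card).factorial) := by
            rw [hprod, hsub]; ring
        _ ≤ (m + 1) * m.factorial := Nat.mul_le_mul_left _ h1
        _ = (m + 1).factorial := (Nat.factorial_succ m).symm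
    · have hT' : T ⊆ Finset.range m := by
        intro t ht
        have h2 := hT ht
        rw [Finset.mem_range] at h2 ⊢
        rcases Nat.lt_succ_iff_lt_or_eq.mp h2 with h | h
        · exact h
        · exact absurd (h ▸ ht) hm
      have h1 := ih T hT'
      have hc : T.card ≤ m := by
        have := Finset.card_le_card hT'
        simpa using this
      have hsub : m + 1 - T.card = (m - T.card) + 1 := by omega
      calc (∏ t ∈ T, (t + 1)) * (m + 1 - T.card).factorial
          = (m + 1 - T.card) * ((∏ t ∈ T, (t + 1)) * (m - T.card).factorial) := by
            rw [hsub, Nat.factorial_succ]; ring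
        _ ≤ (m + 1) * m.factorial := Nat.mul_le_mul (by omega) h1
        _ = (m + 1).factorial := (Nat.factorial_succ m).symm


/-- AM-GM consequence: `(S/card)^S ≤ ∏ xᵢ^xᵢ` when `∑ xᵢ = S`. -/
lemma key_amgm {ι : Type*} [Fintype ι] (x : ι → ℕ) (S : ℕ) (hS : ∑ i, x i = S) :
    ((S : ℝ) / (Fintype.card ι : ℝ)) ^ S ≤ ∏ i, (x i : ℝ) ^ (x i) := by
  rcases Nat.eq_zero_or_pos S with hS0 | hSpos
  · subst hS0
    have hx0 : ∀ i, x i = 0 := by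
      intro i
      have := Finset.sum_eq_zero_iff.mp hS i (Finset.mem_univ i)
      exact this
    simp [hx0]
  have hcard : 0 < Fintype.card ι := by
    rcases Nat.eq_zero_or_pos (Fintype.card ι) with h | h
    · exfalso
      have : IsEmpty ι := Fintype.card_eq_zero_iff.mp h
      rw [Finset.univ_eq_empty] at hS
      simp at hS; omega
    · exact h
  set c : ℝ := (Fintype.card ι : ℝ) with hc
  have hcpos : (0:ℝ) < c := by rw [hc]; exact_mod_cast hcard
  have hSposR : (0:ℝ) < (S:ℝ) := by exact_mod_cast hSpos
  set w : ι → ℝ := fun i => (x i : ℝ) / S with hw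
  set z : ι → ℝ := fun i => (S : ℝ) / (c * (x i : ℝ)) with hz
  have hwnn : ∀ i ∈ Finset.univ, 0 ≤ w i := fun i _ => by positivity
  have hwsum : ∑ i, w i = 1 := by
    rw [hw, ← Finset.sum_div]
    rw [show ∑ i, (x i : ℝ) = (S:ℝ) by exact_mod_cast congrArg Nat.cast hS]
    exact div_self hSposR.ne'
  have hznn : ∀ i ∈ Finset.univ, 0 ≤ z i := fun i _ => by positivity
  have hgm := Real.geom_mean_le_arith_mean_weighted Finset.univ w z hwnn hwsum hznn
  have hsum1 : ∑ i, w i * z i ≤ 1 := by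
    have : ∀ i ∈ Finset.univ, w i * z i ≤ 1 / c := by
      intro i _
      by_cases hxi : x i = 0
      · simp [hw, hz, hxi]
        positivity
      · have hxipos : (0:ℝ) < (x i : ℝ) := by positivity
        have : w i * z i = 1 / c := by
          simp only [hw, hz]
          rw [div_mul_div_comm, div_eq_div_iff (by positivity) (by positivity)]
          ring
        rw [this]
    calc ∑ i, w i * z i ≤ ∑ _i : ι, 1 / c := Finset.sum_le_sum this
      _ = c * (1 / c) := by rw [Finset.sum_const, Finset.card_univ]; simp [hc, mul_comm]
      _ = 1 := by field_simp
  have hgm1 : ∏ i, z i ^ w i ≤ 1 := le_trans hgm hsum1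
  -- raise to the S-th power
  have hpow : ∏ i, z i ^ (x i) ≤ 1 := by
    have h1 : (∏ i, z i ^ w i) ^ S ≤ 1 ^ S :=
      pow_le_pow_left₀ (Finset.prod_nonneg fun i _ => Real.rpow_nonneg (hznn i (Finset.mem_univ i)) _) hgm1 S
    rw [one_pow, ← Finset.prod_pow] at h1
    refine le_trans (le_of_eq ?_) h1
    refine Finset.prod_congr rfl fun i _ => ?_
    rw [← Real.rpow_natCast (z i ^ w i) S, ← Real.rpow_mul (hznn i (Finset.mem_univ i)),
      ← Real.rpow_natCast (z i) (x i)]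
    congr 1
    rw [hw]
    field_simp
  have hprodpos : (0:ℝ) < ∏ i, (x i : ℝ) ^ (x i) := by
    apply Finset.prod_pos
    intro i _
    by_cases hxi : x i = 0
    · simp [hxi]
    · positivity
  have hzx : ∏ i, z i ^ (x i) = ((S:ℝ)/c) ^ S / ∏ i, (x i : ℝ) ^ (x i) := by
    have h2 : ∏ i, z i ^ (x i) = ∏ i, (((S:ℝ)/c) ^ (x i) / (x i : ℝ) ^ (x i)) := by
      refine Finset.prod_congr rfl fun i _ => ?_
      by_cases hxi : x i = 0
      · simp [hz, hxi]
      · have : z i = ((S:ℝ)/c) / (x i : ℝ) := by rw [hz, div_div]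
        rw [this, div_pow]
    rw [h2, Finset.prod_div_distrib, Finset.prod_pow_eq_pow_sum, hS]
  rw [hzx, div_le_one hprodpos] at hpow
  exact hpow

/-- the least index of a maximal coordinate -/
lemma exists_max_filter {r : ℕ} [NeZero r] (x : Fin r → ℝ) :
    (Finset.univ.filter (fun i => ∀ j, x j ≤ x i)).Nonempty := by
  obtain ⟨i, -, hi⟩ := Finset.exists_max_image Finset.univ x ⟨default, Finset.mem_univ _⟩
  refine ⟨i, ?_⟩
  simp only [Finset.mem_filter, Finset.mem_univ, true_and]
  exact fun j => hi j (Finset.mem_univ j)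

noncomputable def maxIdx {r : ℕ} [NeZero r] (x : Fin r → ℝ) : Fin r :=
  (Finset.univ.filter (fun i => ∀ j, x j ≤ x i)).min' (exists_max_filter x)

lemma isMaxIdxR_maxIdx {r : ℕ} [NeZero r] (x : Fin r → ℝ) : IsMaxIdxR x (maxIdx x) := by
  constructor
  · have := Finset.min'_mem (Finset.univ.filter (fun i => ∀ j, x j ≤ x i)) (exists_max_filter x)
    rw [Finset.mem_filter] at this
    exact this.2
  · intro j hj
    exact Finset.min'_le _ j (by simp only [Finset.mem_filter, Finset.mem_univ, true_and]; exact hj)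

/-- Lower bound for `fP` at `θ = 0`. -/
lemma fP_lower {r m : ℕ} (hr : 2 ≤ r) (hm : 1 ≤ m) (P : Fin r → Equiv.Perm (Fin m)) :
    (((r : ℝ) - 1) / (Real.exp 1 * (r : ℝ))) ^ (r - 1) ≤ fP P 0 := by
  haveI : NeZero r := ⟨by omega⟩
  haveI : NeZero m := ⟨by omega⟩
  have hrR : (1:ℝ) ≤ (r:ℝ) := by exact_mod_cast Nat.one_le_of_lt hr
  have hmR : (0:ℝ) < (m:ℝ) := by exact_mod_cast hm
  set e1 := Real.exp 1 with he1
  have he1pos : (0:ℝ) < e1 := Real.exp_pos 1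
  set X : ℝ := ((r:ℝ) - 1) / (e1 * r) with hX
  have hXnn : 0 ≤ X := by
    apply div_nonneg (by linarith) (by positivity)
  set p : Fin m → Fin r → ℝ := fun k i => (((P i k : ℕ) : ℝ) + 1) / (m : ℝ) with hp
  have hppos : ∀ k i, 0 < p k i := by intro k i; simp only [hp]; positivity
  have hple : ∀ k i, p k i ≤ 1 := by
    intro k i
    simp only [hp]
    rw [div_le_one hmR]
    have h1 : (P i k : ℕ) < m := (P i k).isLt
    have h2 : ((P i k : ℕ) : ℝ) + 1 ≤ (m : ℝ) := by exact_mod_cast h1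
    exact h2
  set idx : Fin m → Fin r := fun k => maxIdx (p k) with hidx
  set Pk : Fin m → ℝ := fun k => ∏ j ∈ Finset.univ.erase (idx k), p k j with hPk
  have hPkpos : ∀ k, 0 < Pk k := by
    intro k
    simp only [hPk]
    exact Finset.prod_pos fun j _ => hppos k j
  obtain ⟨k0, -, hk0⟩ := Finset.exists_max_image Finset.univ Pk
    ⟨⟨0, by omega⟩, Finset.mem_univ _⟩
  have hbdd : BddAbove {y : ℝ | ∃ x : Fin r → ℝ, MemPref P x ∧ (∀ i, (0:ℝ) ≤ x i ∧ x i ≤ 1) ∧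
      ∃ i, IsMaxIdxR x i ∧ y = ∏ j ∈ univ.erase i, x j} := by
    refine ⟨1, ?_⟩
    rintro y ⟨x, -, hx, i, -, rfl⟩
    exact Finset.prod_le_one (fun j _ => (hx j).1) (fun j _ => (hx j).2)
  have hmem : Pk k0 ∈ {y : ℝ | ∃ x : Fin r → ℝ, MemPref P x ∧ (∀ i, (0:ℝ) ≤ x i ∧ x i ≤ 1) ∧
      ∃ i, IsMaxIdxR x i ∧ y = ∏ j ∈ univ.erase i, x j} :=
    ⟨p k0, ⟨k0, fun i => rfl⟩, fun i => ⟨(hppos k0 i).le, hple k0 i⟩,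
      idx k0, isMaxIdxR_maxIdx _, rfl⟩
  have hfP : Pk k0 ≤ fP P 0 := le_csSup hbdd hmem
  refine le_trans ?_ hfP
  -- the fibers of the argmax map
  set s : Fin r → ℕ := fun i => (Finset.univ.filter (fun k => idx k = i)).card with hs
  have hsum : ∑ i, s i = m := by
    have h := Finset.card_eq_sum_card_fiberwise
      (f := idx) (s := (Finset.univ : Finset (Fin m))) (t := (Finset.univ : Finset (Fin r)))
      (fun k _ => Finset.mem_univ _)
    simp only [Finset.card_univ, Fintype.card_fin] at h
    exact h.symm
  have hsle : ∀ i, s i ≤ m := by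
    intro i
    simp only [hs]
    calc (Finset.univ.filter (fun k => idx k = i)).card
        ≤ (Finset.univ : Finset (Fin m)).card := Finset.card_le_card (Finset.filter_subset _ _)
      _ = m := by simp
  set A : ℝ := ∏ i, ((m - s i).factorial : ℝ) with hA
  have hApos : (0:ℝ) < A := by
    simp only [hA]
    exact Finset.prod_pos fun i _ => by exact_mod_cast (m - s i).factorial_pos
  set Mp : ℝ := ∏ k, p k (idx k) with hMp
  have hMppos : (0:ℝ) < Mp := by
    simp only [hMp]
    exact Finset.prod_pos fun k _ => hppos _ _
  -- Step A : the product of all relative positions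
  have hfact : ∏ t : Fin m, (((t:ℕ):ℝ) + 1) = (m.factorial : ℝ) := by
    rw [Fin.prod_univ_eq_prod_range (fun j => ((j:ℝ) + 1)) m]
    rw [show (fun j : ℕ => ((j:ℝ) + 1)) = (fun j : ℕ => (((j + 1 : ℕ) : ℝ))) by
      funext j; push_cast; ring]
    rw [← Nat.cast_prod]
    exact_mod_cast congrArg (Nat.cast (R := ℝ)) (Finset.prod_range_add_one_eq_factorial m)
  have hcol : ∀ i, ∏ k, p k i = (m.factorial : ℝ) / (m:ℝ)^m := by
    intro i
    simp only [hp]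
    rw [Finset.prod_div_distrib, Finset.prod_const, Finset.card_univ, Fintype.card_fin]
    congr 1
    rw [← hfact]
    exact Equiv.prod_comp (P i) (fun t : Fin m => (((t:ℕ):ℝ) + 1))
  have hstepA : (∏ k, Pk k) * Mp = ((m.factorial : ℝ) / (m:ℝ)^m)^r := by
    rw [hMp, ← Finset.prod_mul_distrib]
    have h1 : ∀ k : Fin m, Pk k * p k (idx k) = ∏ i, p k i := by
      intro k
      simp only [hPk]
      exact Finset.prod_erase_mul _ _ (Finset.mem_univ (idx k))
    calc ∏ k, (Pk k * p k (idx k)) = ∏ k, ∏ i, p k i :=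
          Finset.prod_congr rfl fun k _ => h1 k
      _ = ∏ i, ∏ k, p k i := Finset.prod_comm
      _ = ∏ _i : Fin r, ((m.factorial : ℝ) / (m:ℝ)^m) :=
          Finset.prod_congr rfl fun i _ => hcol i
      _ = ((m.factorial : ℝ) / (m:ℝ)^m)^r := by
          rw [Finset.prod_const, Finset.card_univ, Fintype.card_fin]
  -- Step B : bounding the product of the maxima
  have hQ : ∀ i : Fin r, ∏ k ∈ Finset.univ.filter (fun k => idx k = i), p k i
      ≤ (m.factorial : ℝ) / (((m - s i).factorial : ℝ) * (m:ℝ)^(s i)) := by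
    intro i
    set F := Finset.univ.filter (fun k => idx k = i) with hF
    have hcardF : F.card = s i := rfl
    have hinj : ∀ a ∈ F, ∀ b ∈ F, ((P i) a : ℕ) = ((P i) b : ℕ) → a = b := by
      intro a _ b _ h
      exact (P i).injective (Fin.val_injective h)
    set T := F.image (fun k => ((P i) k : ℕ)) with hT
    have hTsub : T ⊆ Finset.range m := by
      intro t ht
      rw [hT, Finset.mem_image] at ht
      obtain ⟨k, -, rfl⟩ := ht
      exact Finset.mem_range.mpr ((P i) k).isLt
    have hTcard : T.card = s i := by
      rw [hT, Finset.card_image_of_injOn (fun a ha b hb h => hinj a ha b hb h), hcardF]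
    have hnat := prod_mul_factorial_le m T hTsub
    rw [hTcard] at hnat
    have hprodT : ∏ t ∈ T, (t + 1) = ∏ k ∈ F, (((P i) k : ℕ) + 1) := by
      rw [hT]
      exact Finset.prod_image fun a ha b hb h => hinj a ha b hb h
    rw [hprodT] at hnat
    have hprodp : ∏ k ∈ F, p k i = (∏ k ∈ F, ((((P i) k : ℕ):ℝ) + 1)) / (m:ℝ)^(s i) := by
      simp only [hp]
      rw [Finset.prod_div_distrib, Finset.prod_const, hcardF]
    rw [hprodp, div_le_div_iff₀ (by positivity) (by positivity)]
    have hcast : (∏ k ∈ F, ((((P i) k : ℕ):ℝ) + 1))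
        = ((∏ k ∈ F, (((P i) k : ℕ) + 1) : ℕ) : ℝ) := by
      push_cast
      rfl
    rw [hcast]
    have hR : ((∏ k ∈ F, (((P i) k : ℕ) + 1) : ℕ) : ℝ) * ((m - s i).factorial : ℝ)
        ≤ (m.factorial : ℝ) := by exact_mod_cast hnat
    calc ((∏ k ∈ F, (((P i) k : ℕ) + 1) : ℕ) : ℝ) * (((m - s i).factorial : ℝ) * (m:ℝ)^(s i))
        = (((∏ k ∈ F, (((P i) k : ℕ) + 1) : ℕ) : ℝ) * ((m - s i).factorial : ℝ)) * (m:ℝ)^(s i) := by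
          ring
      _ ≤ (m.factorial : ℝ) * (m:ℝ)^(s i) :=
          mul_le_mul_of_nonneg_right hR (by positivity)
  have hMle : Mp ≤ (m.factorial : ℝ)^r / (A * (m:ℝ)^m) := by
    have h1 : Mp = ∏ i, ∏ k ∈ Finset.univ.filter (fun k => idx k = i), p k (idx k) := by
      rw [hMp, Finset.prod_fiberwise]
    have h2 : ∀ i : Fin r, ∏ k ∈ Finset.univ.filter (fun k => idx k = i), p k (idx k)
        = ∏ k ∈ Finset.univ.filter (fun k => idx k = i), p k i := by
      intro i
      refine Finset.prod_congr rfl fun k hk => ?_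
      rw [Finset.mem_filter] at hk
      rw [hk.2]
    have h3 : Mp ≤ ∏ i : Fin r, (m.factorial : ℝ) / (((m - s i).factorial : ℝ) * (m:ℝ)^(s i)) := by
      rw [h1, Finset.prod_congr rfl fun i _ => h2 i]
      exact Finset.prod_le_prod
        (fun i _ => Finset.prod_nonneg fun k _ => (hppos _ _).le) (fun i _ => hQ i)
    refine le_trans h3 (le_of_eq ?_)
    rw [Finset.prod_div_distrib, Finset.prod_const, Finset.card_univ, Fintype.card_fin,
      Finset.prod_mul_distrib, ← hA, Finset.prod_pow_eq_pow_sum, hsum]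
  -- Step C : lower-bounding A
  set n : ℕ := (r - 1) * m with hn
  have hsumx : ∑ i, (m - s i) = n := by
    have h1 : ∀ i : Fin r, (m - s i) + s i = m := fun i => Nat.sub_add_cancel (hsle i)
    have h2 : ∑ i, ((m - s i) + s i) = ∑ _i : Fin r, m :=
      Finset.sum_congr rfl fun i _ => by rw [h1 i]
    rw [Finset.sum_add_distrib, hsum] at h2
    have h3 : ∑ _i : Fin r, m = r * m := by
      rw [Finset.sum_const, Finset.card_univ, Fintype.card_fin, smul_eq_mul]
    rw [h3] at h2
    rw [hn, Nat.sub_one_mul]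
    omega
  have hamgm := key_amgm (fun i : Fin r => m - s i) n hsumx
  rw [Fintype.card_fin] at hamgm
  have hCC : ((n:ℝ)/(r:ℝ))^n ≤ A * e1 ^ n := by
    refine le_trans hamgm ?_
    calc ∏ i : Fin r, ((m - s i:ℕ):ℝ)^(m - s i)
        ≤ ∏ i : Fin r, (((m - s i).factorial : ℝ) * e1 ^ (m - s i)) :=
          Finset.prod_le_prod (fun i _ => by positivity)
            (fun i _ => pow_le_factorial_mul_exp _)
      _ = A * e1 ^ n := by
          rw [Finset.prod_mul_distrib, ← hA, Finset.prod_pow_eq_pow_sum, hsumx]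
  have hC : ((n:ℝ)/((r:ℝ) * e1))^n ≤ A := by
    have h4 : ((n:ℝ)/((r:ℝ)*e1))^n = ((n:ℝ)/(r:ℝ))^n / e1^n := by
      rw [← div_div, div_pow]
    rw [h4, div_le_iff₀ (by positivity)]
    exact hCC
  -- combining
  have hXmn : (X^(r-1))^m * ((m:ℝ)^m)^(r-1) ≤ A := by
    have h5 : (X^(r-1))^m * ((m:ℝ)^m)^(r-1) = (X * (m:ℝ))^n := by
      rw [← pow_mul, ← pow_mul, hn, mul_comm m (r-1), mul_pow]
    rw [h5]
    refine le_trans (le_of_eq ?_) hC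
    congr 1
    rw [hX, hn]
    push_cast [Nat.cast_sub (by omega : 1 ≤ r)]
    rw [div_mul_eq_mul_div, mul_comm e1 (r:ℝ)]
  have hprodPk : (X^(r-1))^m ≤ ∏ k, Pk k := by
    rw [← mul_le_mul_iff_of_pos_right hMppos, hstepA]
    calc (X^(r-1))^m * Mp
        ≤ (X^(r-1))^m * ((m.factorial : ℝ)^r / (A * (m:ℝ)^m)) :=
          mul_le_mul_of_nonneg_left hMle (by positivity)
      _ ≤ ((m.factorial : ℝ) / (m:ℝ)^m)^r := by
          rw [div_pow (m.factorial:ℝ) ((m:ℝ)^m) r, ← mul_div_assoc,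
            div_le_div_iff₀ (by positivity) (by positivity)]
          have h6 : ((m:ℝ)^m)^r = ((m:ℝ)^m)^(r-1) * (m:ℝ)^m := by
            rw [← pow_succ]
            congr 1
            omega
          have h7 : (X^(r-1))^m * ((m:ℝ)^m)^(r-1) * (m:ℝ)^m ≤ A * (m:ℝ)^m :=
            mul_le_mul_of_nonneg_right hXmn (by positivity)
          calc (X^(r-1))^m * (m.factorial:ℝ)^r * ((m:ℝ)^m)^r
              = (m.factorial:ℝ)^r * ((X^(r-1))^m * ((m:ℝ)^m)^(r-1) * (m:ℝ)^m) := by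
                rw [h6]; ring
            _ ≤ (m.factorial:ℝ)^r * (A * (m:ℝ)^m) :=
                mul_le_mul_of_nonneg_left h7 (by positivity)
  apply le_of_pow_le_pow_left₀ (by omega : m ≠ 0) (hPkpos k0).le
  calc (X^(r-1))^m ≤ ∏ k, Pk k := hprodPk
    _ ≤ ∏ _k : Fin m, Pk k0 :=
        Finset.prod_le_prod (fun k _ => (hPkpos k).le) (fun k _ => hk0 k (Finset.mem_univ k))
    _ = (Pk k0)^m := by rw [Finset.prod_const, Finset.card_univ, Fintype.card_fin]



/-- product of all `(t+1)` over `Fin m` -/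
lemma prod_fin_cast_add_one (m : ℕ) :
    ∏ t : Fin m, (((t : ℕ) : ℝ) + 1) = (m.factorial : ℝ) := by
  rw [Fin.prod_univ_eq_prod_range (fun j => ((j:ℝ) + 1)) m]
  rw [show (fun j : ℕ => ((j:ℝ) + 1)) = (fun j : ℕ => (((j + 1 : ℕ) : ℝ))) by
    funext j; push_cast; ring]
  rw [← Nat.cast_prod]
  exact_mod_cast congrArg (Nat.cast (R := ℝ)) (Finset.prod_range_add_one_eq_factorial m)

/-- Upper bound: the cyclic preference order has `f_P(0) ≤ (r-1)!/r^(r-1)`. -/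
lemma fP_upper {r : ℕ} (hr : 2 ≤ r) (P : Fin r → Equiv.Perm (Fin r))
    (hP : ∀ i k, P i k = i + k) :
    fP P 0 ≤ ((r - 1).factorial : ℝ) / (r : ℝ) ^ (r - 1) := by
  haveI : NeZero r := ⟨by omega⟩
  have hrR : (0:ℝ) < (r:ℝ) := by exact_mod_cast (by omega : 0 < r)
  apply Real.sSup_le
  · rintro y ⟨x, ⟨k, hxk⟩, hx01, i, ⟨hmax, -⟩, rfl⟩
    have hprod : ∏ j, x j = (r.factorial : ℝ) / (r:ℝ)^r := by
      calc ∏ j, x j = ∏ j : Fin r, ((((P j) k : ℕ):ℝ) + 1)/(r:ℝ) :=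
            Finset.prod_congr rfl fun j _ => hxk j
        _ = (∏ j : Fin r, ((((P j) k : ℕ):ℝ) + 1))/(r:ℝ)^r := by
            rw [Finset.prod_div_distrib, Finset.prod_const, Finset.card_univ, Fintype.card_fin]
        _ = (r.factorial : ℝ) / (r:ℝ)^r := by
            congr 1
            have he : ∀ j : Fin r, (P j) k = (Equiv.addRight k) j := fun j => by
              rw [hP]; rfl
            calc ∏ j : Fin r, ((((P j) k : ℕ):ℝ)+1)
                = ∏ j : Fin r, ((((Equiv.addRight k j : Fin r) : ℕ):ℝ)+1) :=
                  Finset.prod_congr rfl (fun j _ => by rw [he j])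
              _ = ∏ t : Fin r, (((t:ℕ):ℝ)+1) :=
                  Equiv.prod_comp (Equiv.addRight k) (fun t : Fin r => (((t:ℕ):ℝ) + 1))
              _ = (r.factorial : ℝ) := prod_fin_cast_add_one r
    have hxj0 : x (⟨r - 1, by omega⟩ - k) = 1 := by
      rw [hxk, hP]
      have h0 : (⟨r - 1, by omega⟩ - k) + k = (⟨r - 1, by omega⟩ : Fin r) := sub_add_cancel _ _
      rw [h0]
      simp only []
      have h1 : (((⟨r - 1, by omega⟩ : Fin r) : ℕ) : ℝ) = (r:ℝ) - 1 := by
        push_cast [Nat.cast_sub (by omega : 1 ≤ r)]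
        rfl
      rw [h1]
      field_simp
      ring
    have hxi : x i = 1 := le_antisymm (hx01 i).2 (hxj0 ▸ hmax _)
    have hy : (∏ j ∈ univ.erase i, x j) * x i = ∏ j, x j :=
      Finset.prod_erase_mul _ _ (Finset.mem_univ i)
    rw [hxi, mul_one] at hy
    rw [hy, hprod]
    apply le_of_eq
    have hfac : (r.factorial : ℝ) = ((r-1).factorial : ℝ) * r := by
      rw_mod_cast [← Nat.mul_factorial_pred (by omega : r ≠ 0)]
      ring
    have hpow : (r:ℝ)^r = (r:ℝ)^(r-1) * r := by
      rw [← pow_succ]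
      congr 1
      omega
    rw [hfac, hpow]
    exact mul_div_mul_right _ _ (ne_of_gt hrR)
  · positivity

/-- **Theorem.** For every `r ≥ 2`, `((r−1)/(e·r))^{r−1} ≤ f(r,0) ≤ (r−1)!/r^{r−1}`. -/
theorem fInf_zero_bounds (r : ℕ) (hr : 2 ≤ r) :
    (((r : ℝ) - 1) / (Real.exp 1 * (r : ℝ))) ^ (r - 1) ≤ fInf r 0 ∧
    fInf r 0 ≤ ((r - 1).factorial : ℝ) / (r : ℝ) ^ (r - 1) := by
  haveI : NeZero r := ⟨by omega⟩
  set LB := (((r : ℝ) - 1) / (Real.exp 1 * (r : ℝ))) ^ (r - 1) with hLB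
  have hfMin_lb : ∀ m : ℕ, 1 ≤ m → LB ≤ fMin r m 0 := by
    intro m hm
    have hne : {y : ℝ | ∃ Q : Fin r → Equiv.Perm (Fin m), y = fP Q 0}.Nonempty :=
      ⟨fP (fun _ => 1) 0, ⟨fun _ => 1, rfl⟩⟩
    refine le_csInf hne ?_
    rintro y ⟨Q, rfl⟩
    exact fP_lower hr hm Q
  constructor
  · have hne : {y : ℝ | ∃ m : ℕ, 1 ≤ m ∧ y = fMin r m 0}.Nonempty :=
      ⟨fMin r 1 0, 1, le_refl 1, rfl⟩
    refine le_csInf hne ?_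
    rintro y ⟨m, hm, rfl⟩
    exact hfMin_lb m hm
  · have h1 : fInf r 0 ≤ fMin r r 0 := by
      have hbb : BddBelow {y : ℝ | ∃ m : ℕ, 1 ≤ m ∧ y = fMin r m 0} :=
        ⟨LB, by rintro y ⟨m, hm, rfl⟩; exact hfMin_lb m hm⟩
      have hmem : fMin r r 0 ∈ {y : ℝ | ∃ m : ℕ, 1 ≤ m ∧ y = fMin r m 0} :=
        ⟨r, by omega, rfl⟩
      exact csInf_le hbb hmem
    refine le_trans h1 ?_
    have h2 : fMin r r 0 ≤ fP (fun i : Fin r => Equiv.addLeft i) 0 := by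
      have hbb : BddBelow {y : ℝ | ∃ Q : Fin r → Equiv.Perm (Fin r), y = fP Q 0} :=
        ⟨LB, by rintro y ⟨Q, rfl⟩; exact fP_lower hr (by omega : 1 ≤ r) Q⟩
      have hmem : fP (fun i : Fin r => Equiv.addLeft i) 0
          ∈ {y : ℝ | ∃ Q : Fin r → Equiv.Perm (Fin r), y = fP Q 0} :=
        ⟨fun i => Equiv.addLeft i, rfl⟩
      exact csInf_le hbb hmem
    exact le_trans h2 (fP_upper hr _ (fun i k => rfl))


end ListCol
end

section
/- Let ℓ, n ∈ ℕ with ℓ ≥ 3, let ζ ∈ (0,1], and let t = ⌈2ℓ²/ζ⌉. Suppose n·ζ^ℓ ≥ 16t. Then there exists a sequence L_1, …, L_n of ℓ-element subsets of [t] such that for every subset Z ⊆ [t] with |Z| ≥ ζt, writing z = |Z|/t, one has #{i ∈ [n] : L_i ⊆ Z} ≥ n·z^ℓ/4. -/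
open Finset

namespace ListCol

/-- Combinatorial ratio bound: if `2ℓ² ≤ m ≤ t` then
`C(t,ℓ)·(m/t)^ℓ ≤ 2·C(m,ℓ)`. -/
lemma choose_ratio (ℓ m t : ℕ) (hℓ : 3 ≤ ℓ) (hm2 : 2 * (ℓ : ℝ) ^ 2 ≤ (m : ℝ))
    (hmt : m ≤ t) :
    (t.choose ℓ : ℝ) * ((m : ℝ) / (t : ℝ)) ^ ℓ ≤ 2 * (m.choose ℓ : ℝ) := by
  have hl1 : (1 : ℝ) ≤ (ℓ : ℝ) := by exact_mod_cast le_trans (by norm_num) hℓ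
  have hlm : ℓ ≤ m := by
    have h : (ℓ : ℝ) ≤ (m : ℝ) := by nlinarith
    exact Nat.cast_le.mp h
  have ht0 : 0 < (t : ℝ) := by
    have : (0:ℝ) < m := by nlinarith
    have h2 : (m:ℝ) ≤ (t:ℝ) := Nat.cast_le.mpr hmt
    linarith
  -- upper bound on C(t,ℓ)
  have hupper : (t.choose ℓ : ℝ) * (Nat.factorial ℓ : ℝ) ≤ (t : ℝ) ^ ℓ := by
    have h1 : Nat.factorial ℓ * t.choose ℓ ≤ t ^ ℓ := by
      rw [← Nat.descFactorial_eq_factorial_mul_choose]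
      exact Nat.descFactorial_le_pow t ℓ
    calc (t.choose ℓ : ℝ) * (Nat.factorial ℓ : ℝ)
        = ((Nat.factorial ℓ * t.choose ℓ : ℕ) : ℝ) := by push_cast; ring
      _ ≤ ((t ^ ℓ : ℕ) : ℝ) := by exact_mod_cast h1
      _ = (t : ℝ) ^ ℓ := by push_cast; ring
  -- lower bound on C(m,ℓ)
  have hlower : ((m + 1 - ℓ : ℕ) : ℝ) ^ ℓ ≤ (m.choose ℓ : ℝ) * (Nat.factorial ℓ : ℝ) := by
    have h1 : (m + 1 - ℓ) ^ ℓ ≤ Nat.factorial ℓ * m.choose ℓ := by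
      rw [← Nat.descFactorial_eq_factorial_mul_choose]
      exact Nat.pow_sub_le_descFactorial m ℓ
    calc ((m + 1 - ℓ : ℕ) : ℝ) ^ ℓ = (((m + 1 - ℓ) ^ ℓ : ℕ) : ℝ) := by push_cast; ring
      _ ≤ ((Nat.factorial ℓ * m.choose ℓ : ℕ) : ℝ) := by exact_mod_cast h1
      _ = (m.choose ℓ : ℝ) * (Nat.factorial ℓ : ℝ) := by push_cast; ring
  have hcast : ((m + 1 - ℓ : ℕ) : ℝ) = (m : ℝ) + 1 - (ℓ : ℝ) := by
    have : ℓ ≤ m + 1 := hlm.trans (Nat.le_succ m)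
    push_cast [Nat.cast_sub this]
    ring
  -- key real inequality : m^ℓ ≤ 2 * (m+1-ℓ)^ℓ
  have hkey : (m : ℝ) ^ ℓ ≤ 2 * ((m : ℝ) + 1 - (ℓ : ℝ)) ^ ℓ := by
    set a : ℝ := -(1 / (2 * (ℓ : ℝ))) with ha
    have hℓpos : (0:ℝ) < ℓ := by linarith
    have hb : (m : ℝ) * (1 + a) ≤ (m : ℝ) + 1 - (ℓ : ℝ) := by
      rw [ha]
      have : (m : ℝ) * (1 / (2 * (ℓ:ℝ))) = (m:ℝ) / (2*(ℓ:ℝ)) := by ring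
      have hge : (ℓ : ℝ) ≤ (m : ℝ) / (2 * (ℓ : ℝ)) := by
        rw [le_div_iff₀ (by linarith)]
        nlinarith
      nlinarith
    have hbern : (1 : ℝ) / 2 ≤ (1 + a) ^ ℓ := by
      have h2 : (-2 : ℝ) ≤ a := by
        rw [ha]
        have : (1 : ℝ) / (2 * (ℓ:ℝ)) ≤ 1 := by
          rw [div_le_one (by linarith)]; linarith
        linarith
      have := one_add_mul_le_pow h2 ℓ
      have hna : (ℓ : ℝ) * a = -(1/2) := by
        rw [ha]; field_simp
      calc (1:ℝ)/2 = 1 + (ℓ:ℝ) * a := by rw [hna]; ring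
        _ ≤ (1 + a) ^ ℓ := this
    have h1a : (0:ℝ) ≤ 1 + a := by
      have : (1:ℝ) / (2 * (ℓ:ℝ)) ≤ 1 := by
        rw [div_le_one (by linarith)]; linarith
      rw [ha]; linarith
    have hm0 : (0:ℝ) ≤ (m:ℝ) := by positivity
    calc (m : ℝ) ^ ℓ = 2 * ((m:ℝ)^ℓ * (1/2)) := by ring
      _ ≤ 2 * ((m:ℝ)^ℓ * (1 + a)^ℓ) := by
          have := mul_le_mul_of_nonneg_left hbern (pow_nonneg hm0 ℓ)
          linarith
      _ = 2 * ((m:ℝ) * (1+a))^ℓ := by rw [mul_pow]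
      _ ≤ 2 * ((m : ℝ) + 1 - (ℓ : ℝ)) ^ ℓ := by
          have := pow_le_pow_left₀ (by positivity) hb ℓ
          linarith
  -- combine
  have hfpos : (0:ℝ) < (Nat.factorial ℓ : ℝ) := by exact_mod_cast Nat.factorial_pos ℓ
  rw [div_pow, ← mul_div_assoc, div_le_iff₀ (by positivity : (0:ℝ) < (t:ℝ)^ℓ)]
  have hc : (t.choose ℓ : ℝ) * (m:ℝ)^ℓ * (Nat.factorial ℓ : ℝ)
      ≤ 2 * (m.choose ℓ : ℝ) * (t:ℝ)^ℓ * (Nat.factorial ℓ : ℝ) := by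
    calc (t.choose ℓ : ℝ) * (m:ℝ)^ℓ * (Nat.factorial ℓ : ℝ)
        = ((t.choose ℓ : ℝ) * (Nat.factorial ℓ : ℝ)) * (m:ℝ)^ℓ := by ring
      _ ≤ (t:ℝ)^ℓ * (m:ℝ)^ℓ := by
          have : (0:ℝ) ≤ (m:ℝ)^ℓ := by positivity
          exact mul_le_mul_of_nonneg_right hupper this
      _ ≤ (t:ℝ)^ℓ * (2 * ((m : ℝ) + 1 - (ℓ : ℝ)) ^ ℓ) := by
          have : (0:ℝ) ≤ (t:ℝ)^ℓ := by positivity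
          exact mul_le_mul_of_nonneg_left hkey this
      _ = 2 * (((m:ℝ) + 1 - (ℓ:ℝ))^ℓ) * (t:ℝ)^ℓ := by ring
      _ ≤ 2 * ((m.choose ℓ : ℝ) * (Nat.factorial ℓ : ℝ)) * (t:ℝ)^ℓ := by
          have h2 : ((m:ℝ) + 1 - (ℓ:ℝ))^ℓ ≤ (m.choose ℓ : ℝ) * (Nat.factorial ℓ : ℝ) := by
            rw [← hcast]; exact hlower
          have : (0:ℝ) ≤ (t:ℝ)^ℓ := by positivity
          nlinarith
      _ = 2 * (m.choose ℓ : ℝ) * (t:ℝ)^ℓ * (Nat.factorial ℓ : ℝ) := by ring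
  have hfin := le_of_mul_le_mul_right (by linarith [hc] : (t.choose ℓ : ℝ) * (m:ℝ)^ℓ * (Nat.factorial ℓ : ℝ) ≤ (2 * (m.choose ℓ : ℝ) * (t:ℝ)^ℓ) * (Nat.factorial ℓ : ℝ)) hfpos
  linarith [hfin]

set_option maxHeartbeats 1000000 in
/-- **Lemma.** Let `ℓ ≥ 3`, `ζ ∈ (0,1]`, `t = ⌈2ℓ²/ζ⌉`, and suppose `n·ζ^ℓ ≥ 16t`.
Then there are `ℓ`-element subsets `L_1, …, L_n` of `[t]` such that every `Z ⊆ [t]`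
with `|Z| ≥ ζt` contains at least `n·(|Z|/t)^ℓ/4` of the lists. -/
theorem exists_good_lists (ℓ n : ℕ) (hℓ : 3 ≤ ℓ) (ζ : ℝ) (hζ0 : 0 < ζ) (hζ1 : ζ ≤ 1)
    (t : ℕ) (ht : t = ⌈2 * (ℓ : ℝ) ^ 2 / ζ⌉₊) (hn : 16 * (t : ℝ) ≤ (n : ℝ) * ζ ^ ℓ) :
    ∃ L : Fin n → Finset (Fin t), (∀ i, (L i).card = ℓ) ∧
      ∀ Z : Finset (Fin t), ζ * (t : ℝ) ≤ (Z.card : ℝ) →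
        (n : ℝ) * ((Z.card : ℝ) / (t : ℝ)) ^ ℓ / 4 ≤
          ((Finset.univ.filter fun i => L i ⊆ Z).card : ℝ) := by
  classical
  have hl3 : (3:ℝ) ≤ (ℓ:ℝ) := by exact_mod_cast hℓ
  have htreal : 2 * (ℓ:ℝ)^2 / ζ ≤ (t:ℝ) := by rw [ht]; exact Nat.le_ceil _
  have ht2 : 2 * (ℓ:ℝ)^2 ≤ (t:ℝ) := by
    refine le_trans ?_ htreal
    rw [le_div_iff₀ hζ0]
    nlinarith
  have ht0 : (0:ℝ) < (t:ℝ) := by nlinarith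
  have hℓt : ℓ ≤ t := by
    have h : (ℓ:ℝ) ≤ (t:ℝ) := by nlinarith
    exact_mod_cast h
  have htζ : 2 * (ℓ:ℝ)^2 ≤ ζ * (t:ℝ) := by
    rw [div_le_iff₀ hζ0] at htreal
    linarith [htreal]
  set A : Finset (Finset (Fin t)) := Finset.powersetCard ℓ Finset.univ with hA
  have hcardA : A.card = t.choose ℓ := by
    rw [hA, Finset.card_powersetCard, Finset.card_univ, Fintype.card_fin]
  set N := t.choose ℓ with hNdef
  have hN0 : 0 < N := Nat.choose_pos hℓt
  have hN0R : (0:ℝ) < (N:ℝ) := by exact_mod_cast hN0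
  set Ω : Finset (Fin n → Finset (Fin t)) := Fintype.piFinset (fun _ => A) with hΩ
  have hcardΩ : Ω.card = N ^ n := by
    rw [hΩ, Fintype.card_piFinset]
    simp [hcardA]
  set Bad : Finset (Fin t) → Finset (Fin n → Finset (Fin t)) :=
    fun Z => Ω.filter (fun L =>
      (((Finset.univ.filter fun i => L i ⊆ Z).card : ℝ) <
        (n:ℝ) * ((Z.card:ℝ)/(t:ℝ))^ℓ / 4)) with hBad
  set ZS : Finset (Finset (Fin t)) := Finset.univ.filter (fun Z => ζ * (t:ℝ) ≤ (Z.card:ℝ)) with hZS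
  have hmain : ∀ Z ∈ ZS, ((Bad Z).card : ℝ) ≤ (N:ℝ)^n * Real.exp (4 * (t:ℝ) * (Real.log 2 - 1)) := by
    intro Z hZ
    rw [hZS, Finset.mem_filter] at hZ
    obtain ⟨-, hZcard⟩ := hZ
    set m := Z.card with hm
    set z : ℝ := (m:ℝ)/(t:ℝ) with hz
    set c : ℝ := (n:ℝ) * z^ℓ / 4 with hc
    have hmt : m ≤ t := by
      rw [hm]
      exact le_trans (Finset.card_le_univ Z) (by simp)
    have hm2 : 2*(ℓ:ℝ)^2 ≤ (m:ℝ) := le_trans htζ hZcard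
    have hzζ : ζ ≤ z := by rw [hz, le_div_iff₀ ht0]; linarith
    have hz0 : 0 ≤ z := le_trans hζ0.le hzζ
    have hc4t : 4*(t:ℝ) ≤ c := by
      have hzl : ζ^ℓ ≤ z^ℓ := pow_le_pow_left₀ hζ0.le hzζ ℓ
      have hn0 : (0:ℝ) ≤ (n:ℝ) := by positivity
      rw [hc]
      nlinarith
    set K := m.choose ℓ with hK
    have hKN : K ≤ N := Nat.choose_le_choose ℓ hmt
    have hKNR : (K:ℝ) ≤ (N:ℝ) := by exact_mod_cast hKN
    have hA2 : (N:ℝ) * z^ℓ ≤ 2*(K:ℝ) := by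
      rw [hz, hNdef, hK]
      exact choose_ratio ℓ m t hℓ hm2 hmt
    set w : Finset (Fin t) → ℝ := fun S => if S ⊆ Z then (1:ℝ)/2 else 1 with hw
    have hsumw : ∑ S ∈ A, w S = (N:ℝ) - (K:ℝ)/2 := by
      rw [hw, Finset.sum_ite, Finset.sum_const, Finset.sum_const]
      have hfilter : A.filter (fun S => S ⊆ Z) = Finset.powersetCard ℓ Z := by
        ext S
        simp only [hA, Finset.mem_filter, Finset.mem_powersetCard, Finset.subset_univ, true_and]
        tauto
      have h1 : (A.filter (fun S => S ⊆ Z)).card = K := by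
        rw [hfilter, Finset.card_powersetCard, hK, hm]
      have h2 : (A.filter (fun S => ¬ S ⊆ Z)).card = N - K := by
        have h3 := Finset.card_filter_add_card_filter_not (s := A)
          (p := fun S => S ⊆ Z)
        rw [hcardA] at h3
        omega
      rw [h1, h2, nsmul_eq_mul, nsmul_eq_mul, Nat.cast_sub hKN]
      ring
    have hTotal : ∑ L ∈ Ω, ∏ i, w (L i) = ((N:ℝ) - (K:ℝ)/2)^n := by
      rw [hΩ, ← Finset.sum_pow' A w n, hsumw]
    have hwnn : ∀ L : Fin n → Finset (Fin t), 0 ≤ ∏ i, w (L i) := by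
      intro L
      apply Finset.prod_nonneg
      intro i _
      rw [hw]
      dsimp only
      split <;> norm_num
    have hbad_contrib : ∀ L ∈ Bad Z, Real.exp (-(c * Real.log 2)) ≤ ∏ i, w (L i) := by
      intro L hL
      rw [hBad, Finset.mem_filter] at hL
      obtain ⟨hLΩ, hXc⟩ := hL
      set X := (Finset.univ.filter fun i => L i ⊆ Z).card with hX
      have hprod : ∏ i, w (L i) = (1/2:ℝ) ^ X := by
        simp only [hw]
        rw [← Finset.prod_const (b := (1/2:ℝ)), Finset.prod_filter]
      have h2X : (2:ℝ)^X = Real.exp ((X:ℝ) * Real.log 2) := by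
        rw [Real.exp_nat_mul, Real.exp_log (by norm_num : (0:ℝ) < 2)]
      have hXle : (X:ℝ) ≤ c := le_of_lt hXc
      rw [hprod, one_div, inv_pow, h2X, ← Real.exp_neg]
      apply Real.exp_le_exp.mpr
      have hlog2 : 0 ≤ Real.log 2 := Real.log_nonneg (by norm_num)
      nlinarith
    have hsum_bad : ((Bad Z).card : ℝ) * Real.exp (-(c * Real.log 2)) ≤ ((N:ℝ) - (K:ℝ)/2)^n := by
      calc ((Bad Z).card : ℝ) * Real.exp (-(c * Real.log 2))
          = ∑ _L ∈ Bad Z, Real.exp (-(c * Real.log 2)) := by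
            rw [Finset.sum_const, nsmul_eq_mul]
        _ ≤ ∑ L ∈ Bad Z, ∏ i, w (L i) := Finset.sum_le_sum hbad_contrib
        _ ≤ ∑ L ∈ Ω, ∏ i, w (L i) := by
            apply Finset.sum_le_sum_of_subset_of_nonneg
            · rw [hBad]; exact Finset.filter_subset _ _
            · intro L _ _; exact hwnn L
        _ = ((N:ℝ) - (K:ℝ)/2)^n := hTotal
    have hNK : ((N:ℝ) - (K:ℝ)/2)^n ≤ (N:ℝ)^n * Real.exp (-c) := by
      have h1 : (N:ℝ) - (K:ℝ)/2 ≤ (N:ℝ) * (1 - z^ℓ/4) := by nlinarith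
      have hexp1 : 1 - z^ℓ/4 ≤ Real.exp (-(z^ℓ/4)) := by
        have := Real.add_one_le_exp (-(z^ℓ/4))
        linarith
      have h2 : (N:ℝ) * (1 - z^ℓ/4) ≤ (N:ℝ) * Real.exp (-(z^ℓ/4)) :=
        mul_le_mul_of_nonneg_left hexp1 hN0R.le
      have h0 : (0:ℝ) ≤ (N:ℝ) - (K:ℝ)/2 := by linarith
      calc ((N:ℝ) - (K:ℝ)/2)^n ≤ ((N:ℝ) * Real.exp (-(z^ℓ/4)))^n :=
            pow_le_pow_left₀ h0 (h1.trans h2) n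
        _ = (N:ℝ)^n * Real.exp (-(z^ℓ/4))^n := mul_pow _ _ _
        _ = (N:ℝ)^n * Real.exp (-c) := by
            rw [← Real.exp_nat_mul]
            congr 1
            rw [hc]; ring
    have hfinal : ((Bad Z).card : ℝ) ≤ (N:ℝ)^n * Real.exp (c * (Real.log 2 - 1)) := by
      have h3 : ((Bad Z).card:ℝ) =
          (((Bad Z).card:ℝ) * Real.exp (-(c*Real.log 2))) * Real.exp (c*Real.log 2) := by
        rw [mul_assoc, ← Real.exp_add]
        simp
      rw [h3]
      calc (((Bad Z).card:ℝ) * Real.exp (-(c*Real.log 2))) * Real.exp (c*Real.log 2)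
          ≤ ((N:ℝ)^n * Real.exp (-c)) * Real.exp (c*Real.log 2) :=
            mul_le_mul_of_nonneg_right (hsum_bad.trans hNK) (Real.exp_pos _).le
        _ = (N:ℝ)^n * Real.exp (c*(Real.log 2 - 1)) := by
            rw [mul_assoc, ← Real.exp_add]
            congr 2
            ring
    refine hfinal.trans ?_
    apply mul_le_mul_of_nonneg_left _ (by positivity)
    apply Real.exp_le_exp.mpr
    have hlog2lt : Real.log 2 < 1 := by
      have := Real.log_two_lt_d9
      linarith
    nlinarith
  have hZScard : (ZS.card : ℝ) ≤ (2:ℝ)^t := by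
    have h1 : ZS.card ≤ 2^t := by
      rw [hZS]
      calc (Finset.univ.filter _).card ≤ (Finset.univ : Finset (Finset (Fin t))).card :=
            Finset.card_filter_le _ _
        _ = 2^t := by rw [Finset.card_univ, Fintype.card_finset, Fintype.card_fin]
    exact_mod_cast h1
  have hunion : ((ZS.biUnion Bad).card : ℝ) < (Ω.card : ℝ) := by
    have hE := Real.exp_pos (4 * (t:ℝ) * (Real.log 2 - 1))
    calc ((ZS.biUnion Bad).card : ℝ) ≤ ((∑ Z ∈ ZS, (Bad Z).card : ℕ) : ℝ) := by
          exact_mod_cast Finset.card_biUnion_le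
      _ = ∑ Z ∈ ZS, ((Bad Z).card : ℝ) := by push_cast; ring
      _ ≤ ∑ _Z ∈ ZS, (N:ℝ)^n * Real.exp (4*(t:ℝ)*(Real.log 2 - 1)) := Finset.sum_le_sum hmain
      _ = (ZS.card:ℝ) * ((N:ℝ)^n * Real.exp (4*(t:ℝ)*(Real.log 2 - 1))) := by
          rw [Finset.sum_const, nsmul_eq_mul]
      _ ≤ (2:ℝ)^t * ((N:ℝ)^n * Real.exp (4*(t:ℝ)*(Real.log 2 - 1))) := by
          apply mul_le_mul_of_nonneg_right hZScard
          positivity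
      _ < (N:ℝ)^n := by
          have h2t : (2:ℝ)^t = Real.exp ((t:ℝ) * Real.log 2) := by
            rw [Real.exp_nat_mul, Real.exp_log (by norm_num : (0:ℝ) < 2)]
          rw [h2t, mul_comm ((N:ℝ)^n), ← mul_assoc, ← Real.exp_add]
          have hneg : (t:ℝ) * Real.log 2 + 4*(t:ℝ)*(Real.log 2 - 1) < 0 := by
            have hl2 := Real.log_two_lt_d9
            have h5 : 5 * Real.log 2 - 4 < 0 := by linarith
            have h6 : (t:ℝ) * (5 * Real.log 2 - 4) < 0 := mul_neg_of_pos_of_neg ht0 h5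
            have h7 : (t:ℝ)*Real.log 2 + 4*(t:ℝ)*(Real.log 2 - 1)
                = (t:ℝ)*(5*Real.log 2 - 4) := by ring
            linarith [h7 ▸ h6]
          have hlt1 : Real.exp ((t:ℝ) * Real.log 2 + 4*(t:ℝ)*(Real.log 2 - 1)) < 1 := by
            calc Real.exp ((t:ℝ) * Real.log 2 + 4*(t:ℝ)*(Real.log 2 - 1))
                < Real.exp 0 := Real.exp_lt_exp.mpr hneg
              _ = 1 := Real.exp_zero
          nlinarith [pow_pos hN0R n]
      _ = (Ω.card : ℝ) := by rw [hcardΩ]; push_cast; ring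
  have hsub : ZS.biUnion Bad ⊆ Ω := by
    intro L hL
    rw [Finset.mem_biUnion] at hL
    obtain ⟨Z, _, hL⟩ := hL
    rw [hBad] at hL
    exact Finset.filter_subset _ _ hL
  have hne : (Ω \ ZS.biUnion Bad).Nonempty := by
    rw [← Finset.card_pos, Finset.card_sdiff_of_subset hsub]
    have hlt : (ZS.biUnion Bad).card < Ω.card := by exact_mod_cast hunion
    omega
  obtain ⟨L, hL⟩ := hne
  rw [Finset.mem_sdiff] at hL
  obtain ⟨hLΩ, hLgood⟩ := hL
  rw [hΩ] at hLΩ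
  refine ⟨L, ?_, ?_⟩
  · intro i
    have hi := Fintype.mem_piFinset.mp hLΩ i
    rw [hA, Finset.mem_powersetCard] at hi
    exact hi.2
  · intro Z hZc
    by_contra hcon
    push_neg at hcon
    apply hLgood
    rw [Finset.mem_biUnion]
    refine ⟨Z, ?_, ?_⟩
    · rw [hZS, Finset.mem_filter]
      exact ⟨Finset.mem_univ _, hZc⟩
    · rw [hBad, Finset.mem_filter]
      exact ⟨by rw [hΩ]; exact hLΩ, hcon⟩

end ListCol
end

section
/- Let r ≥ 1 be an integer, let θ, θ' ∈ [0,1/(r+1)), and let Q be an (r,θ,n)-cover and Q' an (r,θ',n)-cover. If Q and Q' are similar, then |h(Q) − h(Q')| ≤ r·2^r·|θ − θ'|. -/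
open Finset

namespace ListCol

/-! ### Covers and the functions `h(s,θ,n)`, `h(s,θ)` -/

/-- The vertex set `{θ + (1/(s+1) − θ)·j/n : j ∈ [sn]}` of an `(s,θ,n)`-cover. -/
noncomputable def coverVertexSet (s : ℕ) (θ : ℝ) (n : ℕ) : Finset ℝ :=
  (Finset.range (s * n)).image fun j : ℕ => θ + (1 / ((s : ℝ) + 1) - θ) * ((j : ℝ) + 1) / (n : ℝ)

/-- `E` is the edge set of an `(s,θ,n)`-cover: `s`-element pairwise disjoint edges
whose union is `coverVertexSet s θ n`. -/
def IsCover (s : ℕ) (θ : ℝ) (n : ℕ) (E : Finset (Finset ℝ)) : Prop :=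
  (∀ e ∈ E, e.card = s) ∧
  (∀ e ∈ E, ∀ f ∈ E, e ≠ f → Disjoint e f) ∧
  (∀ y : ℝ, (∃ e ∈ E, y ∈ e) ↔ y ∈ coverVertexSet s θ n)

/-- `h(Q) = max over edges e of ∏_{y ∈ e} y`. -/
noncomputable def hEdge (E : Finset (Finset ℝ)) : ℝ :=
  sSup {y : ℝ | ∃ e ∈ E, y = ∏ z ∈ e, z}

/-- `h(s,θ,n) = min { h(Q) : Q an (s,θ,n)-cover }`. -/
noncomputable def hCovN (s : ℕ) (θ : ℝ) (n : ℕ) : ℝ :=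
  sInf {y : ℝ | ∃ E : Finset (Finset ℝ), IsCover s θ n E ∧ y = hEdge E}

/-- `h(s,θ) = inf { h(s,θ,n) : n ≥ 1 }` for `θ < 1/(s+1)`, and
`h(s,1/(s+1)) = (1/(s+1))^s`. -/
noncomputable def hCov (s : ℕ) (θ : ℝ) : ℝ :=
  if θ = 1 / ((s : ℝ) + 1) then (1 / ((s : ℝ) + 1)) ^ s
  else sInf {y : ℝ | ∃ n : ℕ, 1 ≤ n ∧ y = hCovN s θ n}

lemma abs_prod_sub_prod_le (s : Finset ℝ) (f g : ℝ → ℝ)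
    (hf : ∀ i ∈ s, 0 ≤ f i ∧ f i ≤ 1) (hg : ∀ i ∈ s, 0 ≤ g i ∧ g i ≤ 1) :
    |∏ i ∈ s, f i - ∏ i ∈ s, g i| ≤ ∑ i ∈ s, |f i - g i| := by
  induction s using Finset.cons_induction with
  | empty => simp
  | cons a s ha ih =>
    rw [Finset.prod_cons, Finset.prod_cons, Finset.sum_cons]
    have hfa := hf a (Finset.mem_cons_self a s)
    have hga := hg a (Finset.mem_cons_self a s)
    have hf' : ∀ i ∈ s, 0 ≤ f i ∧ f i ≤ 1 := fun i hi => hf i (Finset.mem_cons.2 (Or.inr hi))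
    have hg' : ∀ i ∈ s, 0 ≤ g i ∧ g i ≤ 1 := fun i hi => hg i (Finset.mem_cons.2 (Or.inr hi))
    have hih := ih hf' hg'
    have hPg0 : 0 ≤ ∏ i ∈ s, g i := Finset.prod_nonneg fun i hi => (hg' i hi).1
    have hPg1 : ∏ i ∈ s, g i ≤ 1 := Finset.prod_le_one (fun i hi => (hg' i hi).1)
      (fun i hi => (hg' i hi).2)
    have key : f a * ∏ i ∈ s, f i - g a * ∏ i ∈ s, g i
        = f a * (∏ i ∈ s, f i - ∏ i ∈ s, g i) + (f a - g a) * ∏ i ∈ s, g i := by ring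
    rw [key]
    calc |f a * (∏ i ∈ s, f i - ∏ i ∈ s, g i) + (f a - g a) * ∏ i ∈ s, g i|
        ≤ |f a * (∏ i ∈ s, f i - ∏ i ∈ s, g i)| + |(f a - g a) * ∏ i ∈ s, g i| :=
          abs_add_le _ _
      _ = |f a| * |∏ i ∈ s, f i - ∏ i ∈ s, g i| + |f a - g a| * |∏ i ∈ s, g i| := by
          rw [abs_mul, abs_mul]
      _ ≤ 1 * (∑ i ∈ s, |f i - g i|) + |f a - g a| * 1 := by
          have hfa1 : |f a| ≤ 1 := abs_le.2 ⟨by linarith [hfa.1], hfa.2⟩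
          have hPg : |∏ i ∈ s, g i| ≤ 1 := abs_le.2 ⟨by linarith, hPg1⟩
          exact add_le_add (mul_le_mul hfa1 hih (abs_nonneg _) zero_le_one)
            (mul_le_mul_of_nonneg_left hPg (abs_nonneg _))
      _ = |f a - g a| + ∑ i ∈ s, |f i - g i| := by ring

lemma abs_max'_sub_max'_le {α : Type*} (E : Finset α) (hE : E.Nonempty) (f g : α → ℝ)
    (δ : ℝ) (h : ∀ e ∈ E, |f e - g e| ≤ δ) :
    |(E.image f).max' (hE.image f) - (E.image g).max' (hE.image g)| ≤ δ := by
  rw [abs_le]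
  constructor
  · rw [neg_le, neg_sub]
    obtain ⟨b, hb, hbe⟩ := Finset.mem_image.1 ((E.image g).max'_mem (hE.image g))
    have h1 : f b ≤ (E.image f).max' (hE.image f) :=
      Finset.le_max' _ _ (Finset.mem_image_of_mem f hb)
    have h2 := abs_le.1 (h b hb)
    linarith [h2.1, h1, hbe.le, hbe.ge]
  · obtain ⟨b, hb, hbe⟩ := Finset.mem_image.1 ((E.image f).max'_mem (hE.image f))
    have h1 : g b ≤ (E.image g).max' (hE.image g) :=
      Finset.le_max' _ _ (Finset.mem_image_of_mem g hb)
    have h2 := abs_le.1 (h b hb)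
    linarith [h2.2, h1, hbe.le, hbe.ge]

set_option maxHeartbeats 800000 in
/-- **Lemma.** If `Q` is an `(r,θ,n)`-cover and `Q'` an `(r,θ',n)`-cover and they are
similar (the order-preserving affine bijection between the vertex sets maps edges to
edges), then `|h(Q) − h(Q')| ≤ r·2^r·|θ − θ'|`. -/
theorem similar_covers (r n : ℕ) (hr : 1 ≤ r) (hn : 1 ≤ n) (θ θ' : ℝ)
    (hθ0 : 0 ≤ θ) (hθ1 : θ < 1 / ((r : ℝ) + 1))
    (hθ'0 : 0 ≤ θ') (hθ'1 : θ' < 1 / ((r : ℝ) + 1))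
    (E E' : Finset (Finset ℝ)) (hE : IsCover r θ n E) (hE' : IsCover r θ' n E')
    (hsim : E' = E.image fun e =>
      e.image fun x => θ' + (1 / ((r : ℝ) + 1) - θ') / (1 / ((r : ℝ) + 1) - θ) * (x - θ)) :
    |hEdge E - hEdge E'| ≤ (r : ℝ) * 2 ^ r * |θ - θ'| := by
  set φ : ℝ → ℝ := fun x => θ' + (1 / ((r : ℝ) + 1) - θ') / (1 / ((r : ℝ) + 1) - θ) * (x - θ)
    with hφ
  have hd : (0:ℝ) < 1 / ((r : ℝ) + 1) - θ := by linarith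
  have hd' : (0:ℝ) < 1 / ((r : ℝ) + 1) - θ' := by linarith
  have hc : (0:ℝ) < (1 / ((r : ℝ) + 1) - θ') / (1 / ((r : ℝ) + 1) - θ) := div_pos hd' hd
  have hφinj : Function.Injective φ := by
    intro a b hab
    simp only [hφ] at hab
    have h1 := add_left_cancel hab
    have h2 := mul_left_cancel₀ hc.ne' h1
    linarith
  have hn0 : (0:ℝ) < (n:ℝ) := by exact_mod_cast hn
  have hr1 : (1:ℝ) ≤ (r:ℝ) := by exact_mod_cast hr
  -- key pointwise bounds for vertices
  have hvert : ∀ x ∈ coverVertexSet r θ n,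
      (0 ≤ x ∧ x ≤ 1) ∧ (0 ≤ φ x ∧ φ x ≤ 1) ∧ |φ x - x| ≤ (r:ℝ) * |θ - θ'| := by
    intro x hx
    simp only [coverVertexSet, Finset.mem_image, Finset.mem_range] at hx
    obtain ⟨j, hj, rfl⟩ := hx
    set t : ℝ := ((j : ℝ) + 1) / (n : ℝ) with ht
    have hxeq : θ + (1 / ((r : ℝ) + 1) - θ) * ((j : ℝ) + 1) / (n : ℝ)
        = θ + (1 / ((r : ℝ) + 1) - θ) * t := by rw [ht]; ring
    have ht0 : 0 < t := div_pos (by positivity) hn0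
    have htr : t ≤ (r:ℝ) := by
      rw [ht, div_le_iff₀ hn0]
      have : (j:ℝ) + 1 ≤ (r:ℝ) * (n:ℝ) := by
        have : (j:ℝ) + 1 ≤ ((r*n : ℕ) : ℝ) := by exact_mod_cast hj
        simpa [Nat.cast_mul] using this
      linarith
    rw [hxeq]
    have hφx : φ (θ + (1 / ((r : ℝ) + 1) - θ) * t)
        = θ' + (1 / ((r : ℝ) + 1) - θ') * t := by
      have hcd : (1/((r:ℝ)+1)-θ')/(1/((r:ℝ)+1)-θ) * (1/((r:ℝ)+1)-θ)
          = 1/((r:ℝ)+1)-θ' := div_mul_cancel₀ _ hd.ne'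
      simp only [hφ]
      rw [add_sub_cancel_left, ← mul_assoc, hcd]
    rw [hφx]
    have hur : (1 / ((r:ℝ)+1)) * (r:ℝ) ≤ 1 := by
      rw [div_mul_eq_mul_div, one_mul, div_le_one (by positivity)]
      linarith
    have hdr : (1/((r:ℝ)+1)-θ)*t ≤ (1/((r:ℝ)+1)-θ)*(r:ℝ) := by
      exact mul_le_mul_of_nonneg_left htr hd.le
    have hdr' : (1/((r:ℝ)+1)-θ')*t ≤ (1/((r:ℝ)+1)-θ')*(r:ℝ) := by
      exact mul_le_mul_of_nonneg_left htr hd'.le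
    have hθr : θ ≤ θ*(r:ℝ) := by have := mul_le_mul_of_nonneg_left hr1 hθ0; linarith
    have hθ'r : θ' ≤ θ'*(r:ℝ) := by have := mul_le_mul_of_nonneg_left hr1 hθ'0; linarith
    refine ⟨⟨by linarith [mul_pos hd ht0], by linarith [hdr, hur, hθr]⟩,
      ⟨by linarith [mul_pos hd' ht0], by linarith [hdr', hur, hθ'r]⟩, ?_⟩
    have : θ' + (1 / ((r : ℝ) + 1) - θ') * t - (θ + (1 / ((r : ℝ) + 1) - θ) * t)
        = (θ' - θ) * (1 - t) := by ring
    rw [this, abs_mul, abs_sub_comm θ θ']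
    have h1t : |1 - t| ≤ (r:ℝ) := by
      rw [abs_le]; constructor <;> linarith
    calc |θ' - θ| * |1 - t| ≤ |θ' - θ| * (r:ℝ) := by
          exact mul_le_mul_of_nonneg_left h1t (abs_nonneg _)
      _ = (r:ℝ) * |θ' - θ| := by ring
  -- edges are nonempty
  have hEne : E.Nonempty := by
    have hmem : θ + (1 / ((r : ℝ) + 1) - θ) * ((0:ℕ) + 1) / (n : ℝ) ∈ coverVertexSet r θ n := by
      simp only [coverVertexSet, Finset.mem_image, Finset.mem_range]
      exact ⟨0, by positivity, rfl⟩
    obtain ⟨e, he, -⟩ := (hE.2.2 _).2 hmem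
    exact ⟨e, he⟩
  -- rewrite hEdge as max'
  have hfin : ∀ (F : Finset (Finset ℝ)) (hF : F.Nonempty),
      hEdge F = (F.image fun e => ∏ z ∈ e, z).max' (hF.image _) := by
    intro F hF
    have hset : {y : ℝ | ∃ e ∈ F, y = ∏ z ∈ e, z}
        = ↑(F.image fun e => ∏ z ∈ e, z) := by
      ext y
      simp [eq_comm]
    rw [hEdge, hset, Finset.Nonempty.csSup_eq_max']
  have hE'img : E' = E.image fun e => e.image φ := hsim
  -- hEdge E' as image over E
  have hB : E'.image (fun e => ∏ z ∈ e, z) = E.image fun e => ∏ x ∈ e, φ x := by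
    rw [hE'img, Finset.image_image]
    apply Finset.image_congr
    intro e he
    exact Finset.prod_image fun x _ y _ h => hφinj h
  have hEdgeE : hEdge E = (E.image fun e => ∏ z ∈ e, z).max' (hEne.image _) := hfin E hEne
  have hE'ne : E'.Nonempty := by rw [hE'img]; exact hEne.image _
  have hEdgeE' : hEdge E' = (E.image fun e => ∏ x ∈ e, φ x).max' (hEne.image _) := by
    rw [hfin E' hE'ne]
    congr 1
  rw [hEdgeE, hEdgeE']
  apply abs_max'_sub_max'_le E hEne _ _ _
  intro e he
  -- per-edge bound
  have hesub : ∀ x ∈ e, x ∈ coverVertexSet r θ n := fun x hx =>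
    (hE.2.2 x).1 ⟨e, he, hx⟩
  have hcard : e.card = r := hE.1 e he
  calc |∏ x ∈ e, x - ∏ x ∈ e, φ x| ≤ ∑ x ∈ e, |x - φ x| := by
        apply abs_prod_sub_prod_le e id φ
        · exact fun i hi => (hvert i (hesub i hi)).1
        · exact fun i hi => (hvert i (hesub i hi)).2.1
    _ ≤ ∑ x ∈ e, (r:ℝ) * |θ - θ'| := by
        apply Finset.sum_le_sum
        intro i hi
        rw [abs_sub_comm]
        exact (hvert i (hesub i hi)).2.2
    _ = (r:ℝ) * ((r:ℝ) * |θ - θ'|) := by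
        rw [Finset.sum_const, hcard, nsmul_eq_mul]
    _ = (r:ℝ) * (r:ℝ) * |θ - θ'| := by ring
    _ ≤ (r : ℝ) * 2 ^ r * |θ - θ'| := by
        have h2r : (r:ℝ) ≤ 2 ^ r := by
          exact_mod_cast (Nat.lt_two_pow_self (n := r)).le
        have h0 : (0:ℝ) ≤ (r:ℝ) := by positivity
        exact mul_le_mul_of_nonneg_right
          (mul_le_mul_of_nonneg_left h2r h0) (abs_nonneg _)

end ListCol
end

section
/- Let r ≥ 2 be an integer, θ ∈ [0,1/r) and n ∈ ℕ. Then for every m ∈ ℕ with m − r⌈θm⌉ + r = n, one has f(r,θ,rm) ≤ h(r−1,θ,n) + (r−1)·2^{r−1}/m. -/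
open Finset

namespace ListCol

/-! ### auxiliary lemmas (to be pasted) -/


/-- Telescoping product estimate. -/
lemma prod_le_prod_add {ι : Type*} (F : Finset ι) (x w : ι → ℝ) (c : ℝ) (hc : 0 ≤ c)
    (hx0 : ∀ l ∈ F, 0 ≤ x l) (hx1 : ∀ l ∈ F, x l ≤ 1)
    (hw0 : ∀ l ∈ F, 0 ≤ w l) (hw1 : ∀ l ∈ F, w l ≤ 1)
    (hxw : ∀ l ∈ F, x l ≤ w l + c) :
    ∏ l ∈ F, x l ≤ ∏ l ∈ F, w l + F.card * c := by
  classical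
  induction F using Finset.cons_induction with
  | empty => simp
  | cons a F ha IH =>
    have hxa0 := hx0 a (mem_cons_self a F)
    have hxa1 := hx1 a (mem_cons_self a F)
    have hwa0 := hw0 a (mem_cons_self a F)
    have hwa1 := hw1 a (mem_cons_self a F)
    have hxwa := hxw a (mem_cons_self a F)
    have hPw0 : (0:ℝ) ≤ ∏ l ∈ F, w l :=
      Finset.prod_nonneg fun l hl => hw0 l (mem_cons_of_mem hl)
    have hPw1 : ∏ l ∈ F, w l ≤ 1 :=
      Finset.prod_le_one (fun l hl => hw0 l (mem_cons_of_mem hl))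
        (fun l hl => hw1 l (mem_cons_of_mem hl))
    have hIH : ∏ l ∈ F, x l ≤ ∏ l ∈ F, w l + F.card * c := by
      apply IH
      · exact fun l hl => hx0 l (mem_cons_of_mem hl)
      · exact fun l hl => hx1 l (mem_cons_of_mem hl)
      · exact fun l hl => hw0 l (mem_cons_of_mem hl)
      · exact fun l hl => hw1 l (mem_cons_of_mem hl)
      · exact fun l hl => hxw l (mem_cons_of_mem hl)
    rw [Finset.prod_cons, Finset.prod_cons, Finset.card_cons]
    have h1 : x a * ∏ l ∈ F, x l ≤ x a * (∏ l ∈ F, w l + F.card * c) :=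
      mul_le_mul_of_nonneg_left hIH hxa0
    have h2 : x a * (∏ l ∈ F, w l + F.card * c) ≤ x a * ∏ l ∈ F, w l + F.card * c := by
      have : x a * (F.card * c) ≤ 1 * (F.card * c) :=
        mul_le_mul_of_nonneg_right hxa1 (by positivity)
      nlinarith
    have h3 : x a * ∏ l ∈ F, w l ≤ (w a + c) * ∏ l ∈ F, w l :=
      mul_le_mul_of_nonneg_right hxwa hPw0
    have h4 : (w a + c) * ∏ l ∈ F, w l ≤ w a * ∏ l ∈ F, w l + c := by nlinarith
    push_cast
    nlinarith

/-- Counting lemma: strictly monotone on members. -/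
lemma count_strictMonoOn {S : Finset ℕ} {p p' : ℕ} (hp : p ∈ S) (h : p < p') :
    (S.filter (fun q => q < p)).card < (S.filter (fun q => q < p')).card := by
  apply Finset.card_lt_card
  constructor
  · intro q hq
    rw [Finset.mem_filter] at hq ⊢
    exact ⟨hq.1, lt_trans hq.2 h⟩
  · intro hsub
    have : p ∈ S.filter (fun q => q < p) := hsub (Finset.mem_filter.2 ⟨hp, h⟩)
    rw [Finset.mem_filter] at this
    omega

lemma count_lt_card {S : Finset ℕ} {p : ℕ} (hp : p ∈ S) :
    (S.filter (fun q => q < p)).card < S.card := by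
  apply Finset.card_lt_card
  constructor
  · exact Finset.filter_subset _ _
  · intro hsub
    have := Finset.mem_filter.1 (hsub hp)
    omega

lemma count_le_sub {S : Finset ℕ} {p d : ℕ} (hd : ∀ q < d, q ∉ S) (hp : d ≤ p) :
    (S.filter (fun q => q < p)).card ≤ p - d := by
  have hsub : S.filter (fun q => q < p) ⊆ Finset.Ico d p := by
    intro q hq
    rw [Finset.mem_filter] at hq
    rw [Finset.mem_Ico]
    refine ⟨?_, hq.2⟩
    by_contra hlt
    exact hd q (by omega) hq.1
  calc (S.filter (fun q => q < p)).card ≤ (Finset.Ico d p).card := Finset.card_le_card hsub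
    _ = p - d := Nat.card_Ico d p




/-- cyclic offset of block `i` relative to order `j` (both `< r`). -/
def cyc (r j i : ℕ) : ℕ := if j ≤ i then i - j else i + r - j

lemma cyc_lt {r j i : ℕ} (hj : j < r) (hi : i < r) : cyc r j i < r := by
  unfold cyc; split <;> omega

lemma cyc_eq_zero_iff {r j i : ℕ} (hj : j < r) (hi : i < r) : cyc r j i = 0 ↔ i = j := by
  unfold cyc; split <;> omega

lemma cyc_inj {r j i i' : ℕ} (hj : j < r) (hi : i < r) (hi' : i' < r)
    (h : cyc r j i = cyc r j i') : i = i' := by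
  unfold cyc at h; split at h <;> split at h <;> omega

/-- The position (0-indexed) of element `k` in the order indexed by `j`. -/
def natPos (r m K g s : ℕ) (T : ℕ → ℕ → ℕ) (j k : ℕ) : ℕ :=
  if cyc r j (k / m) = 0 then s * m + k % m
  else if k % m < K then g + T (k % m) (cyc r j (k / m) - 1)
  else if cyc r j (k / m) = r - 1 then k % m - K
  else g + s * K + (cyc r j (k / m) - 1) * g + (k % m - K)

section natPos
variable {r m K g s : ℕ} {T : ℕ → ℕ → ℕ} {j k k' : ℕ}

lemma natPos_eq_top (h : k / m = j) :
    natPos r m K g s T j k = s * m + k % m := by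
  unfold natPos cyc
  rw [h]
  simp

lemma filler_lt (hs : 1 ≤ s) (hKg : K + g = m) {c u : ℕ} (hc1 : 1 ≤ c) (hc2 : c ≤ s - 1)
    (huK : K ≤ u) (hu : u < m) :
    g + s * K + (c - 1) * g + (u - K) < s * m := by
  have hs2 : 2 ≤ s := by omega
  have hsm : s * K + s * g = s * m := by rw [← Nat.mul_add, hKg]
  have h2 : (c-1) * g ≤ (s-2) * g := Nat.mul_le_mul_right g (by omega)
  have h3 : (s-2) * g + g = (s-1) * g := by
    have hss : s - 2 + 1 = s - 1 := by omega
    calc (s-2)*g + g = (s-2+1) * g := by ring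
      _ = (s-1) * g := by rw [hss]
  have h4 : (s-1) * g + g = s * g := by
    have hss : s - 1 + 1 = s := by omega
    calc (s-1)*g + g = (s-1+1) * g := by ring
      _ = s * g := by rw [hss]
  omega

/-- Any element not in its own block has position `< s*m`. -/
lemma natPos_lt_sm (hr : r = s + 1) (hs : 1 ≤ s) (hm : 1 ≤ m) (hKg : K + g = m)
    (hT : ∀ u < K, ∀ l < s, T u l < s * K) (hj : j < r) (hk : k < r * m)
    (hblock : k / m ≠ j) : natPos r m K g s T j k < s * m := by
  have hi : k / m < r := Nat.div_lt_of_lt_mul (by rwa [Nat.mul_comm] at hk)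
  have hu : k % m < m := Nat.mod_lt _ (by omega)
  have hsm : s * K + s * g = s * m := by rw [← Nat.mul_add, hKg]
  have hKsK : K ≤ s * K := Nat.le_mul_of_pos_left K (by omega)
  have hgsg : g ≤ s * g := Nat.le_mul_of_pos_left g (by omega)
  unfold natPos
  have hcr : cyc r j (k / m) < r := cyc_lt hj hi
  have hc0 : cyc r j (k / m) ≠ 0 := by
    rw [Ne, cyc_eq_zero_iff hj hi]; exact hblock
  rw [if_neg hc0]
  split
  · rename_i huK
    have h1 : T (k % m) (cyc r j (k/m) - 1) < s * K := hT _ huK _ (by omega)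
    omega
  · rename_i huK
    split
    · omega
    · rename_i hcr1
      exact filler_lt hs hKg (by omega) (by omega) (by omega) hu

lemma natPos_lt (hr : r = s + 1) (hs : 1 ≤ s) (hm : 1 ≤ m) (hKg : K + g = m)
    (hT : ∀ u < K, ∀ l < s, T u l < s * K) (hj : j < r) (hk : k < r * m) :
    natPos r m K g s T j k < r * m := by
  have hu : k % m < m := Nat.mod_lt _ (by omega)
  have hmrm : s * m + m = r * m := by rw [hr]; ring
  by_cases hblock : k / m = j
  · rw [natPos_eq_top hblock]; omega
  · have := natPos_lt_sm hr hs hm hKg hT hj hk hblock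
    omega

lemma natPos_inj (hr : r = s + 1) (hs : 1 ≤ s) (hm : 1 ≤ m) (hKg : K + g = m)
    (hT : ∀ u < K, ∀ l < s, T u l < s * K)
    (hTinj : ∀ u < K, ∀ u' < K, ∀ l < s, ∀ l' < s, T u l = T u' l' → u = u' ∧ l = l')
    (hj : j < r) (hk : k < r * m) (hk' : k' < r * m)
    (h : natPos r m K g s T j k = natPos r m K g s T j k') : k = k' := by
  have hi : k / m < r := Nat.div_lt_of_lt_mul (by rwa [Nat.mul_comm] at hk)
  have hi' : k' / m < r := Nat.div_lt_of_lt_mul (by rwa [Nat.mul_comm] at hk')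
  have hu : k % m < m := Nat.mod_lt _ (by omega)
  have hu' : k' % m < m := Nat.mod_lt _ (by omega)
  have hsm : s * K + s * g = s * m := by rw [← Nat.mul_add, hKg]
  have hKsK : K ≤ s * K := Nat.le_mul_of_pos_left K (by omega)
  have hgsg : g ≤ s * g := Nat.le_mul_of_pos_left g (by omega)
  have hcr : cyc r j (k / m) < r := cyc_lt hj hi
  have hcr' : cyc r j (k' / m) < r := cyc_lt hj hi'
  suffices hiu : k / m = k' / m ∧ k % m = k' % m by
    obtain ⟨h1, h2⟩ := hiu
    have e := Nat.div_add_mod k m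
    have e' := Nat.div_add_mod k' m
    rw [h1, h2] at e
    omega
  by_cases hb : k / m = j <;> by_cases hb' : k' / m = j
  · rw [natPos_eq_top hb, natPos_eq_top hb'] at h
    exact ⟨by rw [hb, hb'], by omega⟩
  · exfalso
    rw [natPos_eq_top hb] at h
    have h2 := natPos_lt_sm hr hs hm hKg hT hj hk' hb'
    have h3 : s * m ≤ natPos r m K g s T j k' := h ▸ Nat.le_add_right _ _
    omega
  · exfalso
    rw [natPos_eq_top hb'] at h
    have h2 := natPos_lt_sm hr hs hm hKg hT hj hk hb
    have h3 : s * m ≤ natPos r m K g s T j k := h.symm ▸ Nat.le_add_right _ _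
    omega
  · -- both non-top
    have hc0 : cyc r j (k / m) ≠ 0 := by rw [Ne, cyc_eq_zero_iff hj hi]; exact hb
    have hc0' : cyc r j (k' / m) ≠ 0 := by rw [Ne, cyc_eq_zero_iff hj hi']; exact hb'
    unfold natPos at h
    rw [if_neg hc0, if_neg hc0'] at h
    by_cases hK : k % m < K <;> by_cases hK' : k' % m < K
    · rw [if_pos hK, if_pos hK'] at h
      have hTeq : T (k % m) (cyc r j (k/m) - 1) = T (k' % m) (cyc r j (k'/m) - 1) := by omega
      obtain ⟨h1, h2⟩ := hTinj _ hK _ hK' _ (by omega) _ (by omega) hTeq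
      exact ⟨cyc_inj hj hi hi' (by omega), h1⟩
    · -- middle vs (bottom or filler)
      exfalso
      rw [if_pos hK, if_neg hK'] at h
      have h1 : T (k % m) (cyc r j (k/m) - 1) < s * K := hT _ hK _ (by omega)
      have hgpos : 0 < g := by omega
      split at h
      · omega
      · rename_i hcr1'
        have := filler_lt hs hKg (show 1 ≤ cyc r j (k'/m) by omega)
          (show cyc r j (k'/m) ≤ s - 1 by omega) (by omega) hu'
        omega
    · exfalso
      rw [if_neg hK, if_pos hK'] at h
      have h1 : T (k' % m) (cyc r j (k'/m) - 1) < s * K := hT _ hK' _ (by omega)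
      have hgpos : 0 < g := by omega
      split at h
      · omega
      · rename_i hcr1
        have := filler_lt hs hKg (show 1 ≤ cyc r j (k/m) by omega)
          (show cyc r j (k/m) ≤ s - 1 by omega) (by omega) hu
        omega
    · rw [if_neg hK, if_neg hK'] at h
      have hgpos : 0 < g := by omega
      have hltg : k % m - K < g := by omega
      have hltg' : k' % m - K < g := by omega
      by_cases hc1 : cyc r j (k/m) = r - 1 <;> by_cases hc1' : cyc r j (k'/m) = r - 1
      · rw [if_pos hc1, if_pos hc1'] at h
        refine ⟨cyc_inj hj hi hi' (by omega), by omega⟩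
      · exfalso
        rw [if_pos hc1, if_neg hc1'] at h
        have : (cyc r j (k'/m) - 1) * g ≥ 0 := Nat.zero_le _
        omega
      · exfalso
        rw [if_neg hc1, if_pos hc1'] at h
        have : (cyc r j (k/m) - 1) * g ≥ 0 := Nat.zero_le _
        omega
      · rw [if_neg hc1, if_neg hc1'] at h
        have hdm : (cyc r j (k/m) - 1) * g + (k % m - K)
            = (cyc r j (k'/m) - 1) * g + (k' % m - K) := by omega
        have e1 : ((cyc r j (k/m) - 1) * g + (k % m - K)) / g = cyc r j (k/m) - 1 := by
          rw [Nat.mul_comm (cyc r j (k/m) - 1) g, Nat.mul_add_div hgpos,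
            Nat.div_eq_of_lt hltg]
          omega
        have e2 : ((cyc r j (k'/m) - 1) * g + (k' % m - K)) / g = cyc r j (k'/m) - 1 := by
          rw [Nat.mul_comm (cyc r j (k'/m) - 1) g, Nat.mul_add_div hgpos,
            Nat.div_eq_of_lt hltg']
          omega
        have hceq : cyc r j (k/m) - 1 = cyc r j (k'/m) - 1 := by
          rw [← e1, ← e2, hdm]
        have hce : cyc r j (k/m) = cyc r j (k'/m) := by omega
        refine ⟨cyc_inj hj hi hi' hce, ?_⟩
        have : (cyc r j (k/m) - 1) * g = (cyc r j (k'/m) - 1) * g := by rw [hceq]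
        omega

end natPos




lemma key_ineq {r n m s : ℕ} {T : ℤ} {θ : ℝ} (hr : r = s + 1) (hs : 1 ≤ s)
    (hm : 1 ≤ m) (hn : 1 ≤ n) (h0 : 0 ≤ θ)
    (hT1 : (T:ℝ) - 1 ≤ θ * m) (hT2 : θ * m ≤ (T:ℝ))
    (hrel : (m:ℤ) - r * T + r = n) {p : ℕ} (hp : p < s * n) :
    ((r:ℝ) * T - r + p + 1) / (r * m) ≤ θ + (1/(r:ℝ) - θ) * ((p:ℝ)+1) / n + (s:ℝ) / m := by
  have hr2 : 1 ≤ r := by omega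
  have hrpos : (0:ℝ) < r := by exact_mod_cast Nat.pos_of_ne_zero (by omega)
  have hmpos : (0:ℝ) < m := by exact_mod_cast hm
  have hnpos : (0:ℝ) < n := by exact_mod_cast hn
  have hspos : (0:ℝ) < s := by exact_mod_cast hs
  have hnR : (n:ℝ) = (m:ℝ) - r * T + r := by
    have h2 := congrArg (fun z : ℤ => (z : ℝ)) hrel
    push_cast at h2
    linarith
  have hA : (n:ℝ) - m * (1 - r * θ) ≤ r := by
    rw [hnR]; nlinarith [hT2]
  have hA0 : (0:ℝ) ≤ (n:ℝ) - m * (1 - r * θ) := by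
    rw [hnR]; nlinarith [hT1]
  have hp1 : ((p:ℝ) + 1) ≤ (s:ℝ) * n := by
    have : (p:ℝ) + 1 ≤ ((s*n : ℕ):ℝ) := by exact_mod_cast Nat.succ_le_of_lt hp
    push_cast at this
    linarith
  have h1 : (n:ℝ) * ((r:ℝ)*T - r) ≤ (r:ℝ)*m*n*θ := by
    have h := mul_le_mul_of_nonneg_left hT1 (show (0:ℝ) ≤ n * r by positivity)
    nlinarith [h]
  have h2 : ((p:ℝ)+1) * ((n:ℝ) - m*(1 - r*θ)) ≤ (r:ℝ)*s*n := by
    have h := mul_le_mul hp1 hA hA0 (by positivity)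
    nlinarith [h]
  have hkey : (n:ℝ) * ((r:ℝ)*T - r + p + 1)
      ≤ (r:ℝ)*m*n*θ + (m:ℝ)*(1 - r*θ)*((p:ℝ)+1) + (r:ℝ)*s*n := by
    nlinarith [h1, h2]
  have expand : θ + (1/(r:ℝ) - θ) * ((p:ℝ)+1) / n + (s:ℝ)/m - ((r:ℝ)*T - r + p + 1)/(r*m)
      = ((r:ℝ)*m*n*θ + (m:ℝ)*(1 - r*θ)*((p:ℝ)+1) + (r:ℝ)*s*n - n*((r:ℝ)*T - r + p + 1))
        / ((r:ℝ)*m*n) := by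
    field_simp
  have hnonneg : (0:ℝ) ≤ θ + (1/(r:ℝ) - θ) * ((p:ℝ)+1) / n + (s:ℝ)/m
      - ((r:ℝ)*T - r + p + 1)/(r*m) := by
    rw [expand]
    apply div_nonneg (by linarith) (by positivity)
  linarith


section
variable {s n : ℕ} {θ : ℝ}

lemma vparam_lt (hs : 1 ≤ s) (hn : 1 ≤ n) (hθ : θ < 1/((s:ℝ)+1)) {p q : ℕ} (h : p < q) :
    θ + (1 / ((s : ℝ) + 1) - θ) * ((p : ℝ) + 1) / (n : ℝ)
      < θ + (1 / ((s : ℝ) + 1) - θ) * ((q : ℝ) + 1) / (n : ℝ) := by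
  have hnpos : (0:ℝ) < n := by exact_mod_cast hn
  have hslope : (0:ℝ) < 1/((s:ℝ)+1) - θ := by linarith
  have hpq : (p:ℝ) + 1 < (q:ℝ) + 1 := by exact_mod_cast Nat.succ_lt_succ h
  have := mul_lt_mul_of_pos_left hpq hslope
  gcongr

lemma vparam_injOn (hs : 1 ≤ s) (hn : 1 ≤ n) (hθ : θ < 1/((s:ℝ)+1)) :
    Function.Injective fun p : ℕ => θ + (1 / ((s : ℝ) + 1) - θ) * ((p : ℝ) + 1) / (n : ℝ) := by
  intro p q h
  by_contra hne
  rcases Nat.lt_or_ge p q with hlt | hge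
  · exact absurd h (ne_of_lt (vparam_lt hs hn hθ hlt))
  · have : q < p := by omega
    exact absurd h.symm (ne_of_lt (vparam_lt hs hn hθ this))

lemma cover_exists (hs : 1 ≤ s) (hn : 1 ≤ n) (h0 : 0 ≤ θ) (hθ : θ < 1/((s:ℝ)+1)) :
    ∃ E, IsCover s θ n E := by
  classical
  set v : ℕ → ℝ := fun p => θ + (1 / ((s : ℝ) + 1) - θ) * ((p : ℝ) + 1) / (n : ℝ) with hv
  have hvinj : Function.Injective v := vparam_injOn hs hn hθ
  refine ⟨(Finset.range n).image fun b => (Finset.range s).image fun l => v (s * b + l), ?_, ?_, ?_⟩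
  · intro e he
    rw [Finset.mem_image] at he
    obtain ⟨b, hb, rfl⟩ := he
    rw [Finset.card_image_of_injOn (fun l _ l' _ h => by
      have := hvinj h; omega), Finset.card_range]
  · intro e he f hf hef
    rw [Finset.mem_image] at he hf
    obtain ⟨b, hb, rfl⟩ := he
    obtain ⟨b', hb', rfl⟩ := hf
    have hbb : b ≠ b' := fun h => hef (by rw [h])
    rw [Finset.disjoint_left]
    intro y hy hy'
    rw [Finset.mem_image] at hy hy'
    obtain ⟨l, hl, rfl⟩ := hy
    obtain ⟨l', hl', he⟩ := hy'
    have := hvinj he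
    rw [Finset.mem_range] at hl hl' hb hb'
    have hsb : s * b' + l' = s * b + l := this
    have h1 : (s * b + l) / s = b := by
      rw [Nat.mul_add_div (by omega), Nat.div_eq_of_lt hl]
      omega
    have h2 : (s * b' + l') / s = b' := by
      rw [Nat.mul_add_div (by omega), Nat.div_eq_of_lt hl']
      omega
    exact hbb (by rw [← h1, ← hsb, h2])
  · intro y
    constructor
    · rintro ⟨e, he, hy⟩
      rw [Finset.mem_image] at he
      obtain ⟨b, hb, rfl⟩ := he
      rw [Finset.mem_image] at hy
      obtain ⟨l, hl, rfl⟩ := hy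
      rw [Finset.mem_range] at hb hl
      unfold coverVertexSet
      rw [Finset.mem_image]
      refine ⟨s * b + l, ?_, rfl⟩
      rw [Finset.mem_range]
      have h1 : s * b + l < s * b + s := by omega
      have h2 : s * b + s = s * (b+1) := by ring
      have h3 : s * (b+1) ≤ s * n := Nat.mul_le_mul_left s (by omega)
      omega
    · intro hy
      unfold coverVertexSet at hy
      rw [Finset.mem_image] at hy
      obtain ⟨p, hp, rfl⟩ := hy
      rw [Finset.mem_range] at hp
      have hb : p / s < n := by
        apply Nat.div_lt_of_lt_mul
        omega
      refine ⟨(Finset.range s).image fun l => v (s * (p/s) + l), ?_, ?_⟩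
      · rw [Finset.mem_image]
        exact ⟨p / s, Finset.mem_range.2 hb, rfl⟩
      · rw [Finset.mem_image]
        refine ⟨p % s, Finset.mem_range.2 (Nat.mod_lt _ (by omega)), ?_⟩
        rw [Nat.div_add_mod]

end



/-! ### The main construction -/

set_option maxHeartbeats 2000000 in
theorem construction_bound {r s n m : ℕ} {θ : ℝ} (hr : r = s + 1) (hs : 1 ≤ s)
    (hn : 1 ≤ n) (hm : 1 ≤ m) (h0 : 0 ≤ θ) (h1 : θ < 1 / (r : ℝ))
    (hrel : (m : ℤ) - r * ⌈θ * (m : ℝ)⌉ + r = (n : ℤ))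
    {E : Finset (Finset ℝ)} (hE : IsCover s θ n E) :
    fMin r (r * m) θ ≤ hEdge E + (s : ℝ) * s / (m : ℝ) := by
  classical
  obtain ⟨hE1, hE2, hE3⟩ := hE
  have hr2 : 2 ≤ r := by omega
  have hrR : (0:ℝ) < r := by exact_mod_cast (show 0 < r by omega)
  have hmR : (0:ℝ) < m := by exact_mod_cast hm
  have hnRe : (0:ℝ) < n := by exact_mod_cast hn
  have hsR : (0:ℝ) < s := by exact_mod_cast hs
  have hrmR : (0:ℝ) < ((r*m : ℕ) : ℝ) := by exact_mod_cast Nat.mul_pos (show 0 < r by omega) hm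
  have hsr : (s:ℝ) + 1 = (r:ℝ) := by rw [hr]; push_cast; ring
  have hθs : θ < 1 / ((s:ℝ)+1) := by rw [hsr]; exact h1
  -- integer data
  set T : ℤ := ⌈θ * (m:ℝ)⌉ with hTdef
  have hT1 : (T:ℝ) - 1 ≤ θ * m := by
    have := Int.ceil_lt_add_one (θ * (m:ℝ)); rw [← hTdef] at this; linarith
  have hT1s : (T:ℝ) - 1 < θ * m := by
    have := Int.ceil_lt_add_one (θ * (m:ℝ)); rw [← hTdef] at this; linarith
  have hT2 : θ * m ≤ (T:ℝ) := by rw [hTdef]; exact Int.le_ceil _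
  set RT : ℤ := (r:ℤ) * T with hRT
  set g : ℕ := m - n with hgdef
  set d : ℕ := n - m with hddef
  set K : ℕ := m - g with hKdef
  have hKg : K + g = m := by omega
  have hdn : d ≤ n := by omega
  have hgd_int : (g:ℤ) - (d:ℤ) = RT - r := by omega
  have hgdR : (g:ℝ) - (d:ℝ) = (r:ℝ) * (T:ℝ) - (r:ℝ) := by
    rw [hRT] at hgd_int
    have h3 := congrArg (fun z : ℤ => (z:ℝ)) hgd_int
    push_cast at h3
    linarith
  -- vertex parameterization
  set v : ℕ → ℝ := fun p => θ + (1 / ((s : ℝ) + 1) - θ) * ((p : ℝ) + 1) / (n : ℝ) with hv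
  have hvinj : Function.Injective v := vparam_injOn hs hn hθs
  have hvmem : ∀ y, y ∈ coverVertexSet s θ n ↔ ∃ p, p < s * n ∧ v p = y := by
    intro y; unfold coverVertexSet; rw [Finset.mem_image]; constructor
    · rintro ⟨p, hp, rfl⟩; exact ⟨p, Finset.mem_range.1 hp, rfl⟩
    · rintro ⟨p, hp, rfl⟩; exact ⟨p, Finset.mem_range.2 hp, rfl⟩
  have hslope : (0:ℝ) < 1/((s:ℝ)+1) - θ := by linarith
  have hv0 : ∀ p : ℕ, 0 ≤ v p := by
    intro p; rw [hv]; simp only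
    have h2 : (0:ℝ) ≤ ((p:ℝ)+1) := by positivity
    have := mul_nonneg hslope.le h2
    positivity
  have hv1 : ∀ p : ℕ, p < s * n → v p ≤ 1 := by
    intro p hp; rw [hv]; simp only
    have hp1 : (p:ℝ) + 1 ≤ (s:ℝ) * n := by
      have : ((p:ℕ):ℝ) + 1 ≤ ((s*n : ℕ):ℝ) := by exact_mod_cast Nat.succ_le_of_lt hp
      push_cast at this; linarith
    have h2 : (1/((s:ℝ)+1) - θ) * ((p:ℝ)+1) / n ≤ (1/((s:ℝ)+1) - θ) * s := by
      rw [div_le_iff₀ hnRe]; nlinarith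
    have hs1 : (1:ℝ) ≤ s := by exact_mod_cast hs
    have hsp : (0:ℝ) < (s:ℝ) + 1 := by linarith
    have h4 : (1/((s:ℝ)+1)) * s ≤ 1 := by
      rw [div_mul_eq_mul_div, one_mul, div_le_one hsp]; linarith
    nlinarith [mul_nonneg h0 (sub_nonneg.2 hs1)]
  -- cardinality of E
  have hVcard : (coverVertexSet s θ n).card = s * n := by
    unfold coverVertexSet
    rw [Finset.card_image_of_injOn (fun p _ q _ h => hvinj h), Finset.card_range]
  have hEcard : E.card = n := by
    have h2 : (E.biUnion id).card = ∑ e ∈ E, (id e).card := Finset.card_biUnion hE2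
    have hUE : E.biUnion id = coverVertexSet s θ n := by
      ext y; rw [Finset.mem_biUnion]; simpa using hE3 y
    have h3 : ∑ e ∈ E, (id e).card = ∑ _e ∈ E, s :=
      Finset.sum_congr rfl (fun e he => by simp [hE1 e he])
    rw [hUE, hVcard, h3, Finset.sum_const, smul_eq_mul] at h2
    have := h2.symm
    rw [Nat.mul_comm] at this
    exact Nat.eq_of_mul_eq_mul_left (show 0 < s by omega) this
  -- edges
  set eE : Fin n ≃ {x // x ∈ E} := (Finset.equivFinOfCardEq hEcard).symm with heE
  set edge : Fin n → Finset ℝ := fun a => (eE a).1 with hedge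
  have hedge_mem : ∀ a, edge a ∈ E := fun a => (eE a).2
  have hedge_inj : Function.Injective edge := fun a a' h => eE.injective (Subtype.ext h)
  have hedge_card : ∀ a, (edge a).card = s := fun a => hE1 _ (hedge_mem a)
  have hedge_disj : ∀ a a', a ≠ a' → Disjoint (edge a) (edge a') := fun a a' h =>
    hE2 _ (hedge_mem a) _ (hedge_mem a') (fun hh => h (hedge_inj hh))
  set wEq : (a : Fin n) → (Fin s ≃ {x // x ∈ edge a}) :=
    fun a => (Finset.equivFinOfCardEq (hedge_card a)).symm with hwEq
  set wval : Fin n → Fin s → ℝ := fun a l => (wEq a l).1 with hwval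
  have hwval_mem : ∀ a l, wval a l ∈ edge a := fun a l => (wEq a l).2
  have hwval_inj : ∀ a l a' l', wval a l = wval a' l' → a = a' ∧ l = l' := by
    intro a l a' l' h
    by_cases haa : a = a'
    · subst haa
      exact ⟨rfl, (wEq a).injective (Subtype.ext h)⟩
    · exfalso
      have hd := hedge_disj a a' haa
      rw [Finset.disjoint_left] at hd
      exact hd (hwval_mem a l) (h ▸ hwval_mem a' l')
  have hwidx : ∀ (a : Fin n) (l : Fin s), ∃ p, p < s * n ∧ v p = wval a l := fun a l =>
    (hvmem _).1 ((hE3 _).1 ⟨edge a, hedge_mem a, hwval_mem a l⟩)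
  choose pIdx hpLt hpV using hwidx
  have hpInj : ∀ a l a' l', pIdx a l = pIdx a' l' → a = a' ∧ l = l' := by
    intro a l a' l' h
    apply hwval_inj
    rw [← hpV a l, ← hpV a' l', h]
  -- bad edges containing the d smallest vertices
  have hbadex : ∀ q : ℕ, ∃ a : Fin n, q < d → v q ∈ edge a := by
    intro q
    by_cases hq : q < d
    · have hq2 : q < s * n := by
        have h5 : n ≤ s * n := Nat.le_mul_of_pos_left n (by omega)
        omega
      obtain ⟨e, he, hye⟩ := (hE3 _).2 ((hvmem _).2 ⟨q, hq2, rfl⟩)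
      refine ⟨eE.symm ⟨e, he⟩, fun _ => ?_⟩
      show v q ∈ edge _
      rw [hedge]; simp only [Equiv.apply_symm_apply]; exact hye
    · exact ⟨⟨0, by omega⟩, fun h => absurd h hq⟩
  choose bmap hbmap using hbadex
  set D0 : Finset (Fin n) := (Finset.range d).image (fun q => bmap q) with hD0
  have hD0card : D0.card ≤ d := le_trans Finset.card_image_le (by rw [Finset.card_range])
  obtain ⟨D, hD0D, hDcard⟩ := Finset.exists_superset_card_eq hD0card (by simpa using hdn)
  have hDc : ∀ q, q < d → ∀ a, a ∉ D → v q ∉ edge a := by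
    intro q hq a haD hmem
    have h2 : v q ∈ edge (bmap q) := hbmap q hq
    have hab : a ≠ bmap q := by
      intro hh; apply haD; rw [hh]
      exact hD0D (Finset.mem_image.2 ⟨q, Finset.mem_range.2 hq, rfl⟩)
    have hdisj := hedge_disj a (bmap q) hab
    rw [Finset.disjoint_left] at hdisj
    exact hdisj hmem h2
  -- kept edges
  have hDcompl : Dᶜ.card = K := by
    rw [Finset.card_compl, hDcard]
    simp only [Fintype.card_fin]
    omega
  set κ : Fin K ≃ {x // x ∈ Dᶜ} := (Finset.equivFinOfCardEq hDcompl).symm with hκ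
  set κv : Fin K → Fin n := fun u => (κ u).1 with hκv
  have hκvD : ∀ u, κv u ∉ D := fun u => Finset.mem_compl.1 (κ u).2
  have hκvinj : Function.Injective κv := fun u u' h => κ.injective (Subtype.ext h)
  -- kept vertex indices
  set keptSet : Finset ℕ :=
    ((Dᶜ ×ˢ (Finset.univ : Finset (Fin s))).image fun q => pIdx q.1 q.2) with hkeptdef
  have hkeptmem : ∀ p : ℕ, p ∈ keptSet ↔ ∃ a, a ∉ D ∧ ∃ l, pIdx a l = p := by
    intro p; rw [hkeptdef, Finset.mem_image]; constructor
    · rintro ⟨⟨a, l⟩, hmem, rfl⟩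
      rw [Finset.mem_product] at hmem
      exact ⟨a, Finset.mem_compl.1 hmem.1, l, rfl⟩
    · rintro ⟨a, ha, l, rfl⟩
      exact ⟨(a, l), Finset.mem_product.2 ⟨Finset.mem_compl.2 ha, Finset.mem_univ _⟩, rfl⟩
  have hkeptcard : keptSet.card = s * K := by
    rw [hkeptdef, Finset.card_image_of_injOn]
    · rw [Finset.card_product, hDcompl]
      simp only [Finset.card_univ, Fintype.card_fin]
      ring
    · rintro ⟨a, l⟩ _ ⟨a', l'⟩ _ h
      obtain ⟨h1, h2⟩ := hpInj _ _ _ _ h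
      subst h1; subst h2; rfl
  set kc : ℕ → ℕ := fun p => (keptSet.filter (fun q => q < p)).card with hkc
  set Tf : ℕ → ℕ → ℕ := fun u l =>
    if hu : u < K then (if hl : l < s then kc (pIdx (κv ⟨u, hu⟩) ⟨l, hl⟩) else 0) else 0 with hTfdef
  have hkmem : ∀ (u : Fin K) (l : Fin s), pIdx (κv u) l ∈ keptSet := fun u l =>
    (hkeptmem _).2 ⟨κv u, hκvD u, l, rfl⟩
  have hTf_lt : ∀ u < K, ∀ l < s, Tf u l < s * K := by
    intro u hu l hl
    rw [hTfdef]; simp only [dif_pos hu, dif_pos hl]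
    rw [← hkeptcard]
    exact count_lt_card (hkmem ⟨u, hu⟩ ⟨l, hl⟩)
  have hkcinj : ∀ p ∈ keptSet, ∀ p' ∈ keptSet, kc p = kc p' → p = p' := by
    intro p hp p' hp' h
    rcases Nat.lt_trichotomy p p' with hlt | heq | hgt
    · exact absurd h (Nat.ne_of_lt (count_strictMonoOn hp hlt))
    · exact heq
    · exact absurd h.symm (Nat.ne_of_lt (count_strictMonoOn hp' hgt))
  have hTf_inj : ∀ u < K, ∀ u' < K, ∀ l < s, ∀ l' < s, Tf u l = Tf u' l' → u = u' ∧ l = l' := by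
    intro u hu u' hu' l hl l' hl' h
    rw [hTfdef] at h
    simp only [dif_pos hu, dif_pos hu', dif_pos hl, dif_pos hl'] at h
    have h5 := hkcinj _ (hkmem _ _) _ (hkmem _ _) h
    obtain ⟨h6, h7⟩ := hpInj _ _ _ _ h5
    have h8 := hκvinj h6
    exact ⟨congrArg Fin.val h8, congrArg Fin.val h7⟩
  have hkept_lb : ∀ q, q < d → q ∉ keptSet := by
    intro q hq hmem
    obtain ⟨a, haD, l, hpl⟩ := (hkeptmem q).1 hmem
    apply hDc q hq a haD
    rw [← hpl, hpV]
    exact hwval_mem a l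
  have hkc_le : ∀ (u : Fin K) (l : Fin s),
      d ≤ pIdx (κv u) l ∧ kc (pIdx (κv u) l) ≤ pIdx (κv u) l - d := by
    intro u l
    have hmem := hkmem u l
    have hd2 : d ≤ pIdx (κv u) l := by
      by_contra hcon
      exact hkept_lb _ (by omega) hmem
    exact ⟨hd2, count_le_sub hkept_lb hd2⟩
  -- the permutations
  have hbij : ∀ j : Fin r, Function.Bijective (fun k : Fin (r*m) =>
      (⟨natPos r m K g s Tf j.val k.val,
        natPos_lt hr hs hm hKg hTf_lt j.2 k.2⟩ : Fin (r*m))) := by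
    intro j
    rw [← Finite.injective_iff_bijective]
    intro k k' h
    have h2 : natPos r m K g s Tf j.val k.val = natPos r m K g s Tf j.val k'.val := by
      have := congrArg Fin.val h
      simpa using this
    exact Fin.ext (natPos_inj hr hs hm hKg hTf_lt hTf_inj j.2 k.2 k'.2 h2)
  set P : Fin r → Equiv.Perm (Fin (r*m)) := fun j => Equiv.ofBijective _ (hbij j) with hP
  have hPval : ∀ (j : Fin r) (k : Fin (r*m)),
      ((P j k : Fin (r*m)) : ℕ) = natPos r m K g s Tf j.val k.val := fun j k => rfl
  rw [hRT] at hrel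
  clear_value P Tf kc keptSet κv κ D0 wval wEq edge eE v K d g RT T
  -- hEdge facts
  have hprod_mem : ∀ a : Fin n, (∏ z ∈ edge a, z) ≤ hEdge E := by
    intro a
    unfold hEdge
    apply le_csSup
    · have h5 : {y : ℝ | ∃ e ∈ E, y = ∏ z ∈ e, z} = ↑(E.image fun e => ∏ z ∈ e, z) := by
        ext y; simp [eq_comm]
      rw [h5]; exact Finset.bddAbove _
    · exact ⟨edge a, hedge_mem a, rfl⟩
  have hhEdge0 : 0 ≤ hEdge E := by
    unfold hEdge; apply Real.sSup_nonneg
    rintro y ⟨e, he, rfl⟩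
    apply Finset.prod_nonneg
    intro z hz
    obtain ⟨p, hp, hvp⟩ := (hvmem z).1 ((hE3 z).1 ⟨e, he, hz⟩)
    rw [← hvp]; exact hv0 p
  -- main bound on fP
  have hfPbound : fP P θ ≤ hEdge E + (s:ℝ) * s / m := by
    unfold fP
    have hB0 : (0:ℝ) ≤ hEdge E + (s:ℝ) * s / m := add_nonneg hhEdge0 (by positivity)
    apply Real.sSup_le _ hB0
    rintro y ⟨x, ⟨k, hk⟩, hbox, i', hmax, rfl⟩
    obtain ⟨iv, hiv⟩ : ∃ t, k.val / m = t := ⟨_, rfl⟩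
    obtain ⟨uu, huu⟩ : ∃ t, k.val % m = t := ⟨_, rfl⟩
    have hivr : iv < r := by
      rw [← hiv]
      exact Nat.div_lt_of_lt_mul (Nat.lt_of_lt_of_eq k.2 (Nat.mul_comm r m))
    have hum : uu < m := by rw [← huu]; exact Nat.mod_lt _ (by omega)
    have hxval : ∀ j : Fin r,
        x j = ((natPos r m K g s Tf j.val k.val : ℕ) + 1 : ℝ) / ((r*m : ℕ):ℝ) := by
      intro j
      rw [hk j, hPval]
    by_cases huK : uu < K
    · -- edge element
      set iF : Fin r := ⟨iv, hivr⟩ with hiF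
      set a : Fin n := κv ⟨uu, huK⟩ with ha
      -- the top coordinate dominates
      have hxtop : x iF = (((s*m + uu : ℕ) : ℝ) + 1) / ((r*m : ℕ):ℝ) := by
        rw [hxval iF, natPos_eq_top hiv, huu]
      have hlt_top : ∀ j : Fin r, j ≠ iF → x j < x iF := by
        intro j hj
        have h2 : natPos r m K g s Tf j.val k.val < s*m :=
          natPos_lt_sm hr hs hm hKg hTf_lt j.2 k.2
            (fun hh => hj (Fin.ext ((hiv.symm.trans hh).symm)))
        rw [hxval j, hxtop]
        have h2' : ((natPos r m K g s Tf j.val k.val : ℕ) : ℝ) < ((s*m : ℕ) : ℝ) := by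
          exact_mod_cast h2
        have h3 : ((natPos r m K g s Tf j.val k.val : ℕ) + 1 : ℝ)
            < (((s*m + uu : ℕ) : ℝ) + 1) := by
          push_cast at h2' ⊢
          linarith
        exact div_lt_div_of_pos_right h3 hrmR
      have hi'eq : i' = iF := by
        by_contra hne
        exact absurd (hmax.1 iF) (not_le.2 (hlt_top i' hne))
      rw [hi'eq]
      -- reindex the product using φ
      have hφlt : ∀ lv, lv < s →
          (if lv + 1 ≤ iv then iv - (lv+1) else iv + r - (lv+1)) < r := by
        intro lv hlv; split <;> omega
      set φ : Fin s → Fin r := fun l =>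
        ⟨if l.val + 1 ≤ iv then iv - (l.val+1) else iv + r - (l.val+1),
          hφlt l.val l.2⟩ with hφ
      have hφcyc : ∀ l : Fin s, cyc r (φ l).val iv = l.val + 1 := by
        intro l
        have hl := l.2
        show cyc r (if l.val + 1 ≤ iv then iv - (l.val+1)
          else iv + r - (l.val+1)) iv = l.val + 1
        unfold cyc
        split_ifs <;> omega
      have hφne : ∀ l, φ l ≠ iF := by
        intro l h
        have h2 := hφcyc l
        rw [h] at h2
        have h3 : cyc r (iF : Fin r).val iv = 0 := (cyc_eq_zero_iff hivr hivr).2 rfl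
        rw [h3] at h2
        exact Nat.succ_ne_zero _ h2.symm
      have hreidx : ∏ j ∈ univ.erase iF, x j = ∏ l : Fin s, x (φ l) := by
        symm
        apply Finset.prod_nbij φ
        · intro l _
          exact Finset.mem_erase.2 ⟨hφne l, Finset.mem_univ _⟩
        · intro l _ l' _ h
          have h2 := hφcyc l
          rw [h, hφcyc l'] at h2
          exact Fin.ext (by omega)
        · intro j hj
          have hj2 : j ≠ iF := (Finset.mem_erase.1 (Finset.mem_coe.1 hj)).1
          have hjv : iv ≠ j.val := fun h => hj2 (Fin.ext h.symm)
          have hc_lt : cyc r j.val iv < r := cyc_lt j.2 hivr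
          have hc0 : cyc r j.val iv ≠ 0 := by
            rw [Ne, cyc_eq_zero_iff j.2 hivr]; exact hjv
          have hcval : cyc r j.val iv
              = if j.val ≤ iv then iv - j.val else iv + r - j.val := rfl
          rw [Set.mem_image]
          refine ⟨⟨cyc r j.val iv - 1, by omega⟩, by simp, ?_⟩
          apply Fin.ext
          show (if (cyc r j.val iv - 1) + 1 ≤ iv
              then iv - ((cyc r j.val iv - 1) + 1)
              else iv + r - ((cyc r j.val iv - 1) + 1)) = j.val
          rcases le_or_gt j.val iv with hle | hlt
          · rw [if_pos (by omega)] at hcval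
            split_ifs <;> omega
          · rw [if_neg (by omega)] at hcval
            split_ifs <;> omega
        · intro l _
          rfl
      rw [hreidx]
      -- per-coordinate bound
      have hxle : ∀ l : Fin s, x (φ l) ≤ v (pIdx a l) + (s:ℝ)/m := by
        intro l
        rw [hxval (φ l)]
        have hval : natPos r m K g s Tf (φ l).val k.val = g + kc (pIdx a l) := by
          unfold natPos
          rw [hiv, huu, hφcyc l]
          rw [if_neg (by omega), if_pos huK]
          rw [hTfdef]
          simp only [dif_pos huK]
          rw [dif_pos (show l.val + 1 - 1 < s by omega)]
          simp only [Nat.add_sub_cancel, Fin.eta]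
          rfl
        rw [hval]
        obtain ⟨hdp, hkcp⟩ := hkc_le ⟨uu, huK⟩ l
        have hnum : ((g + kc (pIdx a l) : ℕ):ℝ) + 1 ≤ (r:ℝ)*(T:ℝ) - r + (pIdx a l) + 1 := by
          have h2 : ((kc (pIdx a l)) : ℝ) ≤ ((pIdx a l) : ℝ) - (d:ℝ) := by
            have h3 : (kc (pIdx a l) : ℝ) ≤ (((pIdx a l) - d : ℕ) : ℝ) := by
              exact_mod_cast hkcp
            rwa [Nat.cast_sub hdp] at h3
          push_cast
          linarith [hgdR]
        have hKI := key_ineq (T := T) hr hs hm hn h0 hT1 hT2 hrel (hpLt a l)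
        calc (((g + kc (pIdx a l) : ℕ) : ℝ) + 1) / ((r*m : ℕ):ℝ)
            ≤ ((r:ℝ)*(T:ℝ) - r + (pIdx a l) + 1) / ((r:ℝ)*(m:ℝ)) := by
              have he : ((r*m:ℕ):ℝ) = (r:ℝ)*(m:ℝ) := by push_cast; ring
              rw [he]
              gcongr
          _ ≤ θ + (1/(r:ℝ) - θ) * (((pIdx a l):ℝ)+1) / n + (s:ℝ)/m := hKI
          _ = v (pIdx a l) + (s:ℝ)/m := by rw [hv]; simp only; rw [hsr]
      -- telescoping
      have htel : ∏ l : Fin s, x (φ l) ≤ (∏ l : Fin s, v (pIdx a l)) + (s:ℝ) * ((s:ℝ)/m) := by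
        have h5 := prod_le_prod_add (Finset.univ : Finset (Fin s))
          (fun l => x (φ l)) (fun l => v (pIdx a l)) ((s:ℝ)/m) (by positivity)
          (fun l _ => le_trans h0 (hbox (φ l)).1)
          (fun l _ => (hbox (φ l)).2)
          (fun l _ => hv0 _)
          (fun l _ => hv1 _ (hpLt a l))
          (fun l _ => hxle l)
        simpa [Finset.card_univ] using h5
      have hpw : ∏ l : Fin s, v (pIdx a l) = ∏ z ∈ edge a, z := by
        calc ∏ l : Fin s, v (pIdx a l) = ∏ l : Fin s, wval a l :=
              Finset.prod_congr rfl (fun l _ => hpV a l)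
          _ = ∏ z : {x // x ∈ edge a}, (z : ℝ) :=
              Fintype.prod_equiv (wEq a) _ _ (fun l => by rw [hwval])
          _ = ∏ z ∈ edge a, z := Finset.prod_coe_sort (edge a) (fun z => z)
      have hss : (s:ℝ) * ((s:ℝ)/m) = (s:ℝ)*s/m := by ring
      calc ∏ l : Fin s, x (φ l) ≤ (∏ l : Fin s, v (pIdx a l)) + (s:ℝ) * ((s:ℝ)/m) := htel
        _ = (∏ z ∈ edge a, z) + (s:ℝ)*s/m := by rw [hpw, hss]
        _ ≤ hEdge E + (s:ℝ)*s/m := by linarith [hprod_mem a]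
    · -- garbage element: contradiction with θ ≤ x
      exfalso
      have hgpos : 0 < g := by omega
      have hd0 : d = 0 := by omega
      have hgR : (g:ℝ) = (r:ℝ)*(T:ℝ) - r := by
        rw [hd0] at hgdR
        push_cast at hgdR
        linarith
      have hj0r : (iv + 1) % r < r := Nat.mod_lt _ (by omega)
      have hcyc : cyc r ((iv + 1) % r) iv = r - 1 := by
        rcases Nat.lt_or_ge (iv + 1) r with hlt | hge
        · rw [Nat.mod_eq_of_lt hlt]; unfold cyc; split <;> omega
        · have hiv1 : iv + 1 = r := by omega
          rw [hiv1, Nat.mod_self]; unfold cyc; split <;> omega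
      have hval : natPos r m K g s Tf ((iv + 1) % r) k.val = uu - K := by
        unfold natPos
        rw [hiv, huu, hcyc]
        rw [if_neg (by omega), if_neg huK, if_pos rfl]
      have hxj0 := hxval ⟨(iv + 1) % r, hj0r⟩
      rw [hval] at hxj0
      have hble := (hbox ⟨(iv + 1) % r, hj0r⟩).1
      rw [hxj0] at hble
      have h5 : ((uu - K : ℕ):ℝ) + 1 ≤ (g:ℝ) := by
        have : uu - K + 1 ≤ g := by omega
        exact_mod_cast this
      have h6 : (((uu - K : ℕ):ℝ) + 1) / ((r*m:ℕ):ℝ) ≤ (g:ℝ) / ((r*m:ℕ):ℝ) := by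
        gcongr
      have h7 : (g:ℝ) / ((r*m:ℕ):ℝ) < θ := by
        rw [hgR, div_lt_iff₀ hrmR]
        have he : ((r*m:ℕ):ℝ) = (r:ℝ)*(m:ℝ) := by push_cast; ring
        rw [he]
        nlinarith [hT1s]
      linarith
  -- conclude
  have hfMin : fMin r (r*m) θ ≤ fP P θ := by
    apply csInf_le
    · refine ⟨0, ?_⟩
      rintro y ⟨Q, rfl⟩
      apply Real.sSup_nonneg
      rintro z ⟨x, _, hbox, i, _, rfl⟩
      exact Finset.prod_nonneg fun jj _ => le_trans h0 (hbox jj).1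
    · exact ⟨P, rfl⟩
  linarith


/-- **Lemma.** For `r ≥ 2`, `θ ∈ [0,1/r)` and `n ≥ 1`: for every `m ≥ 1` with
`m − r⌈θm⌉ + r = n`, one has `f(r,θ,rm) ≤ h(r−1,θ,n) + (r−1)·2^{r−1}/m`. -/
theorem fMin_le_hCovN (r n : ℕ) (hr : 2 ≤ r) (hn : 1 ≤ n) (θ : ℝ)
    (h0 : 0 ≤ θ) (h1 : θ < 1 / (r : ℝ)) :
    ∀ m : ℕ, 1 ≤ m → (m : ℤ) - r * ⌈θ * (m : ℝ)⌉ + r = (n : ℤ) →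
      fMin r (r * m) θ ≤ hCovN (r - 1) θ n + ((r : ℝ) - 1) * 2 ^ (r - 1) / (m : ℝ) := by
  intro m hm hrel
  set s : ℕ := r - 1 with hsdef
  have hrs : r = s + 1 := by omega
  have hs1 : 1 ≤ s := by omega
  have hmR : (0:ℝ) < m := by exact_mod_cast hm
  have hsR : (0:ℝ) ≤ s := by positivity
  have hsr : (s:ℝ) + 1 = (r:ℝ) := by rw [hrs]; push_cast; ring
  have hθs : θ < 1 / ((s:ℝ)+1) := by rw [hsr]; exact h1
  obtain ⟨E0, hE0⟩ := cover_exists hs1 hn h0 hθs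
  have hkey : ∀ E : Finset (Finset ℝ), IsCover s θ n E →
      fMin r (r*m) θ ≤ hEdge E + (s:ℝ)*s/m :=
    fun E hE => construction_bound hrs hs1 hn hm h0 h1 hrel hE
  have herr : (s:ℝ)*s/m ≤ ((r:ℝ) - 1) * 2 ^ s / m := by
    have h2 : ((r:ℝ) - 1) = (s:ℝ) := by rw [hrs]; push_cast; ring
    rw [h2]
    have h4 : (s:ℝ) ≤ 2 ^ s := by exact_mod_cast (@Nat.lt_two_pow_self s).le
    gcongr
  have hle : fMin r (r*m) θ - (s:ℝ)*s/m ≤ hCovN s θ n := by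
    unfold hCovN
    apply le_csInf
    · exact ⟨hEdge E0, E0, hE0, rfl⟩
    · rintro b ⟨E, hE, rfl⟩
      linarith [hkey E hE]
  linarith [hle, herr]


end ListCol
end

section
/- Let r ≥ 1 be an integer and θ ∈ [0, 1/(r+1)). Then h(r,θ) ≥ w(r,θ). In particular h(r,0) ≥ (r/(e(r+1)))^r. -/
open Finset

namespace ListCol

/-! ### The function `w(r,θ)` -/

/-- `w(r,θ) = e^{−r}·(u(1 − 1/(r+1) − (r−1)θ)/u(θ))^{1/(1/(r+1) − θ)}` where
`u(y) = y^y` (so `u(0) = 1`, as `0^0 = 1` for `Real.rpow`), extended continuously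
to `θ = 1/(r+1)` by its limit `(1/(r+1))^r`. -/
noncomputable def wFun (r : ℕ) (θ : ℝ) : ℝ :=
  if θ = 1 / ((r : ℝ) + 1) then (1 / ((r : ℝ) + 1)) ^ r
  else
    Real.exp (-(r : ℝ)) *
      (((1 - 1 / ((r : ℝ) + 1) - ((r : ℝ) - 1) * θ) ^
          (1 - 1 / ((r : ℝ) + 1) - ((r : ℝ) - 1) * θ)) / θ ^ θ) ^
        (1 / (1 / ((r : ℝ) + 1) - θ))



/-- key MVT estimate: for 0 ≤ a < b, b*log b - b - (a*log a - a) ≤ (b-a)*log b -/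
lemma mvt_log (a b : ℝ) (ha : 0 ≤ a) (hab : a < b) :
    (b * Real.log b - b) - (a * Real.log a - a) ≤ (b - a) * Real.log b := by
  set F : ℝ → ℝ := fun t => t * Real.log t - t with hF
  have hcont : ContinuousOn F (Set.Icc a b) :=
    (Real.continuous_mul_log.sub continuous_id).continuousOn
  have hderiv : ∀ x ∈ Set.Ioo a b, HasDerivAt F (Real.log x) x := by
    intro x hx
    have hx0 : x ≠ 0 := by
      have : 0 < x := lt_of_le_of_lt ha hx.1
      exact this.ne'
    have h1 := (Real.hasDerivAt_mul_log hx0).sub (hasDerivAt_id x)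
    rw [show Real.log x + 1 - 1 = Real.log x by ring] at h1
    exact h1
  obtain ⟨c, hc, hceq⟩ := exists_hasDerivAt_eq_slope F Real.log hab hcont hderiv
  have hcb : Real.log c ≤ Real.log b := by
    have hc0 : 0 < c := lt_of_le_of_lt ha hc.1
    exact Real.log_le_log hc0 hc.2.le
  have hba : (0:ℝ) < b - a := by linarith
  have : F b - F a = (b - a) * Real.log c := by
    field_simp at hceq
    linarith [hceq]
  calc F b - F a = (b - a) * Real.log c := this
    _ ≤ (b - a) * Real.log b := by nlinarith


section

variable (r : ℕ) (θ : ℝ) (n : ℕ)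

/-- the j-th vertex (j from 0) -/
noncomputable def vx (j : ℕ) : ℝ :=
  θ + (1 / ((r : ℝ) + 1) - θ) * ((j : ℝ) + 1) / (n : ℝ)

variable {r : ℕ} {θ : ℝ} {n : ℕ}

lemma coverVertexSet_eq : coverVertexSet r θ n = (Finset.range (r * n)).image (vx r θ n) := rfl

lemma vx_strictMono (hθ1 : θ < 1 / ((r : ℝ) + 1)) (hn : 1 ≤ n) : StrictMono (vx r θ n) := by
  intro j k hjk
  have hδ : (0:ℝ) < 1 / ((r : ℝ) + 1) - θ := by linarith
  have hn0 : (0:ℝ) < n := by exact_mod_cast hn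
  unfold vx
  have h1 : ((j:ℝ) + 1) < ((k:ℝ) + 1) := by exact_mod_cast Nat.succ_lt_succ hjk
  have h2 : (1 / ((r : ℝ) + 1) - θ) * ((j : ℝ) + 1) < (1 / ((r : ℝ) + 1) - θ) * ((k : ℝ) + 1) := by
    nlinarith
  have h5 : (1 / ((r : ℝ) + 1) - θ) * ((j : ℝ) + 1) / (n:ℝ) < (1 / ((r : ℝ) + 1) - θ) * ((k : ℝ) + 1) / (n:ℝ) := div_lt_div_of_pos_right h2 hn0
  linarith

lemma vx_pos (hθ0 : 0 ≤ θ) (hθ1 : θ < 1 / ((r : ℝ) + 1)) (hn : 1 ≤ n) (j : ℕ) :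
    0 < vx r θ n j := by
  have hδ : (0:ℝ) < 1 / ((r : ℝ) + 1) - θ := by linarith
  have hn0 : (0:ℝ) < n := by exact_mod_cast hn
  have hj : (0:ℝ) < (j:ℝ) + 1 := by positivity
  unfold vx
  positivity

end

section

variable {r : ℕ} {θ : ℝ} {n : ℕ}

/-- the standard cover: consecutive chunks of size r -/
noncomputable def chunk (r : ℕ) (θ : ℝ) (n : ℕ) (i : ℕ) : Finset ℝ :=
  (Finset.range r).image (fun k => vx r θ n (r * i + k))

noncomputable def coverE (r : ℕ) (θ : ℝ) (n : ℕ) : Finset (Finset ℝ) :=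
  (Finset.range n).image (chunk r θ n)

lemma idx_inj (hθ1 : θ < 1 / ((r : ℝ) + 1)) (hn : 1 ≤ n) {i i' k k' : ℕ}
    (hk : k < r) (hk' : k' < r) (h : vx r θ n (r * i + k) = vx r θ n (r * i' + k')) :
    i = i' ∧ k = k' := by
  have h2 : r * i + k = r * i' + k' := (vx_strictMono hθ1 hn).injective h
  have hi : i = i' := by
    have := congrArg (· / r) h2
    simpa [Nat.mul_add_div (by omega : 0 < r), Nat.div_eq_of_lt hk, Nat.div_eq_of_lt hk'] using this
  subst hi
  exact ⟨rfl, by omega⟩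

lemma isCover_coverE (hθ1 : θ < 1 / ((r : ℝ) + 1)) (hr : 1 ≤ r) (hn : 1 ≤ n) :
    IsCover r θ n (coverE r θ n) := by
  have hmono := vx_strictMono (n := n) hθ1 hn
  refine ⟨?_, ?_, ?_⟩
  · intro e he
    obtain ⟨i, _, rfl⟩ := Finset.mem_image.1 he
    rw [chunk, Finset.card_image_of_injective _ (fun k k' h => by have := hmono.injective h; omega)]
    · exact Finset.card_range r
  · intro e he f hf hef
    obtain ⟨i, hi, rfl⟩ := Finset.mem_image.1 he
    obtain ⟨i', hi', rfl⟩ := Finset.mem_image.1 hf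
    have hii : i ≠ i' := fun h => hef (by rw [h])
    rw [Finset.disjoint_left]
    intro y hy hy'
    obtain ⟨k, hk, rfl⟩ := Finset.mem_image.1 hy
    obtain ⟨k', hk', h⟩ := Finset.mem_image.1 hy'
    exact hii ((idx_inj hθ1 hn (Finset.mem_range.1 hk) (Finset.mem_range.1 hk') h.symm).1)
  · intro y
    rw [coverVertexSet_eq, Finset.mem_image]
    constructor
    · rintro ⟨e, he, hy⟩
      obtain ⟨i, hi, rfl⟩ := Finset.mem_image.1 he
      obtain ⟨k, hk, rfl⟩ := Finset.mem_image.1 hy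
      refine ⟨r * i + k, Finset.mem_range.2 ?_, rfl⟩
      have hi' := Finset.mem_range.1 hi
      have hk' := Finset.mem_range.1 hk
      calc r * i + k < r * i + r := by omega
        _ = r * (i + 1) := by ring
        _ ≤ r * n := Nat.mul_le_mul_left r (by omega)
    · rintro ⟨j, hj, rfl⟩
      have hj' := Finset.mem_range.1 hj
      have hr0 : 0 < r := hr
      refine ⟨chunk r θ n (j / r), Finset.mem_image.2 ⟨j / r, Finset.mem_range.2 ?_, rfl⟩, ?_⟩
      · exact Nat.div_lt_of_lt_mul (by omega)
      · exact Finset.mem_image.2 ⟨j % r, Finset.mem_range.2 (Nat.mod_lt _ hr0),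
          by rw [Nat.div_add_mod]⟩

end


section

variable {r : ℕ} {θ : ℝ} {n : ℕ}

lemma A_eq (hr : 1 ≤ r) :
    1 - 1 / ((r : ℝ) + 1) - ((r : ℝ) - 1) * θ = θ + (1 / ((r : ℝ) + 1) - θ) * r := by
  have h0 : ((r : ℝ) + 1) ≠ 0 := by positivity
  field_simp
  ring

lemma wFun_pos (hθ0 : 0 ≤ θ) (hθ1 : θ < 1 / ((r : ℝ) + 1)) (hr : 1 ≤ r) :
    0 < wFun r θ := by
  rw [wFun, if_neg hθ1.ne]
  have hr1 : (1:ℝ) ≤ r := by exact_mod_cast hr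
  have hA : 0 < 1 - 1 / ((r : ℝ) + 1) - ((r : ℝ) - 1) * θ := by
    rw [A_eq hr]; nlinarith
  have hAA : 0 < (1 - 1 / ((r : ℝ) + 1) - ((r : ℝ) - 1) * θ) ^
      (1 - 1 / ((r : ℝ) + 1) - ((r : ℝ) - 1) * θ) := Real.rpow_pos_of_pos hA _
  have hθθ : 0 < θ ^ θ := by
    rcases eq_or_lt_of_le hθ0 with h | h
    · rw [← h, Real.rpow_zero]; norm_num
    · exact Real.rpow_pos_of_pos h _
  positivity

lemma log_wFun (hθ0 : 0 ≤ θ) (hθ1 : θ < 1 / ((r : ℝ) + 1)) (hr : 1 ≤ r) :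
    Real.log (wFun r θ) = -(r : ℝ) + (1 / (1 / ((r : ℝ) + 1) - θ)) *
      ((θ + (1 / ((r : ℝ) + 1) - θ) * r) * Real.log (θ + (1 / ((r : ℝ) + 1) - θ) * r)
        - θ * Real.log θ) := by
  have hr1 : (1:ℝ) ≤ r := by exact_mod_cast hr
  set A := 1 - 1 / ((r : ℝ) + 1) - ((r : ℝ) - 1) * θ with hAdef
  have hAeq : A = θ + (1 / ((r : ℝ) + 1) - θ) * r := A_eq hr
  have hA : 0 < A := by rw [hAeq]; nlinarith
  have hAA : (0:ℝ) < A ^ A := Real.rpow_pos_of_pos hA _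
  have hθθ : 0 < θ ^ θ := by
    rcases eq_or_lt_of_le hθ0 with h | h
    · rw [← h, Real.rpow_zero]; norm_num
    · exact Real.rpow_pos_of_pos h _
  have hlogθθ : Real.log (θ ^ θ) = θ * Real.log θ := by
    rcases eq_or_lt_of_le hθ0 with h | h
    · rw [← h, Real.rpow_zero]; simp
    · rw [Real.log_rpow h]
  rw [wFun, if_neg hθ1.ne]
  rw [Real.log_mul (Real.exp_ne_zero _) (by positivity), Real.log_exp,
    Real.log_rpow (by positivity), Real.log_div hAA.ne' hθθ.ne',
    Real.log_rpow hA, hlogθθ, hAeq]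

lemma sum_log_ge (hθ0 : 0 ≤ θ) (hθ1 : θ < 1 / ((r : ℝ) + 1)) (hr : 1 ≤ r) (hn : 1 ≤ n) :
    (n : ℝ) * Real.log (wFun r θ) ≤ ∑ j ∈ Finset.range (r * n), Real.log (vx r θ n j) := by
  have hr1 : (1:ℝ) ≤ r := by exact_mod_cast hr
  have hn0 : (0:ℝ) < n := by exact_mod_cast hn
  set δ := 1 / ((r : ℝ) + 1) - θ with hδdef
  have hδ : 0 < δ := by rw [hδdef]; linarith
  set a : ℕ → ℝ := fun j => θ + δ * j / n with hadef
  have ha0 : ∀ j : ℕ, 0 ≤ a j := by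
    intro j
    have h : (0:ℝ) ≤ δ * j / n := by positivity
    simp only [hadef]
    linarith
  have hstep : ∀ j : ℕ, a j < a (j + 1) := by
    intro j
    have h : δ * (j:ℝ) / n < δ * ((j:ℝ) + 1) / n :=
      div_lt_div_of_pos_right (by nlinarith) hn0
    simp only [hadef]
    push_cast
    linarith
  have hvx : ∀ j : ℕ, vx r θ n j = a (j + 1) := by
    intro j; simp only [hadef, vx]; push_cast; ring
  have hgap : ∀ j : ℕ, a (j + 1) - a j = δ / n := by
    intro j; simp only [hadef]; push_cast; field_simp; ring
  set F : ℝ → ℝ := fun t => t * Real.log t - t with hF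
  have hterm : ∀ j : ℕ, F (a (j + 1)) - F (a j) ≤ (δ / n) * Real.log (vx r θ n j) := by
    intro j
    have h := mvt_log (a j) (a (j + 1)) (ha0 j) (hstep j)
    rw [hgap j] at h
    rw [hvx j]
    exact h
  have htel : ∑ j ∈ Finset.range (r * n), (F (a (j + 1)) - F (a j))
      = F (a (r * n)) - F (a 0) := Finset.sum_range_sub (fun j => F (a j)) (r * n)
  have hsum : F (a (r * n)) - F (a 0) ≤ (δ / n) * ∑ j ∈ Finset.range (r * n),
      Real.log (vx r θ n j) := by
    rw [← htel, Finset.mul_sum]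
    exact Finset.sum_le_sum fun j _ => hterm j
  have harn : a (r * n) = θ + δ * r := by
    simp only [hadef]; push_cast; field_simp
  have ha00 : a 0 = θ := by simp [hadef]
  rw [harn, ha00] at hsum
  rw [log_wFun hθ0 hθ1 hr, ← hδdef]
  have hδn : (0:ℝ) < δ / n := by positivity
  -- F (θ + δ r) - F θ = (θ+δr) log(θ+δr) - θ log θ - δ r
  have hFA : F (θ + δ * r) - F θ = (θ + δ * r) * Real.log (θ + δ * r)
      - θ * Real.log θ - δ * r := by simp only [hF]; ring
  rw [hFA] at hsum
  have key : (n:ℝ) * (-(r:ℝ) + (1 / δ) * ((θ + δ * r) * Real.log (θ + δ * r) - θ * Real.log θ))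
      = (n / δ) * ((θ + δ * r) * Real.log (θ + δ * r) - θ * Real.log θ - δ * r) := by
    field_simp
    try ring
    try tauto
  rw [key]
  set S := ∑ j ∈ Finset.range (r * n), Real.log (vx r θ n j) with hS
  have h2 := mul_le_mul_of_nonneg_left hsum (le_of_lt (show (0:ℝ) < (n:ℝ)/δ by positivity))
  have h3 : ((n:ℝ)/δ) * ((δ/(n:ℝ)) * S) = S := by field_simp
  linarith

end


section

variable {r : ℕ} {θ : ℝ} {n : ℕ}

lemma w_le_hEdge (hθ0 : 0 ≤ θ) (hθ1 : θ < 1 / ((r : ℝ) + 1)) (hr : 1 ≤ r) (hn : 1 ≤ n)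
    {E : Finset (Finset ℝ)} (hE : IsCover r θ n E) : wFun r θ ≤ hEdge E := by
  obtain ⟨hcard, hdisj, hunion⟩ := hE
  have hrn : 0 < r * n := Nat.mul_pos hr hn
  have hinj := (vx_strictMono hθ1 hn).injective
  -- every vertex is positive
  have hvpos : ∀ e ∈ E, ∀ z ∈ e, 0 < z := by
    intro e he z hz
    have hz' : z ∈ coverVertexSet r θ n := (hunion z).1 ⟨e, he, hz⟩
    rw [coverVertexSet_eq, Finset.mem_image] at hz'
    obtain ⟨j, _, rfl⟩ := hz'
    exact vx_pos hθ0 hθ1 hn j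
  -- hEdge is an upper bound on edge products
  have hSset : {y : ℝ | ∃ e ∈ E, y = ∏ z ∈ e, z} = ↑(E.image fun e => ∏ z ∈ e, z) := by
    ext y
    simp only [Set.mem_setOf_eq, Finset.coe_image, Set.mem_image, Finset.mem_coe]
    constructor
    · rintro ⟨e, he, rfl⟩; exact ⟨e, he, rfl⟩
    · rintro ⟨e, he, rfl⟩; exact ⟨e, he, rfl⟩
  have hbdd : BddAbove {y : ℝ | ∃ e ∈ E, y = ∏ z ∈ e, z} := by
    rw [hSset]; exact (E.image fun e => ∏ z ∈ e, z).bddAbove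
  have hprodle : ∀ e ∈ E, (∏ z ∈ e, z) ≤ hEdge E := fun e he =>
    le_csSup hbdd ⟨e, he, rfl⟩
  -- the vertex set as a biUnion
  have hbi : coverVertexSet r θ n = E.biUnion id := by
    ext y
    rw [Finset.mem_biUnion]
    exact ((hunion y).symm)
  -- cardinality of the vertex set
  have hcardV : (coverVertexSet r θ n).card = r * n := by
    rw [coverVertexSet_eq, Finset.card_image_of_injective _ hinj, Finset.card_range]
  -- E has exactly n edges
  have hcardE : E.card = n := by
    have h1 : (E.biUnion id).card = ∑ e ∈ E, e.card := Finset.card_biUnion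
      (fun e he f hf hef => hdisj e he f hf hef)
    have h2 : ∑ e ∈ E, e.card = r * E.card := by
      rw [Finset.sum_congr rfl hcard, Finset.sum_const, smul_eq_mul, mul_comm]
    have h3 : r * E.card = r * n := by rw [← h2, ← h1, ← hbi, hcardV]
    exact Nat.eq_of_mul_eq_mul_left hr h3
  -- E is nonempty, hEdge is positive
  have hne : ∃ e₀ ∈ E, (0:ℝ) < ∏ z ∈ e₀, z := by
    have h0 : vx r θ n 0 ∈ coverVertexSet r θ n := by
      rw [coverVertexSet_eq]
      exact Finset.mem_image.2 ⟨0, Finset.mem_range.2 hrn, rfl⟩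
    obtain ⟨e₀, he₀, _⟩ := (hunion (vx r θ n 0)).2 h0
    exact ⟨e₀, he₀, Finset.prod_pos (hvpos e₀ he₀)⟩
  obtain ⟨e₀, he₀, he₀pos⟩ := hne
  have hHpos : 0 < hEdge E := lt_of_lt_of_le he₀pos (hprodle e₀ he₀)
  -- product of all vertices
  have hprodV : ∏ v ∈ coverVertexSet r θ n, v = ∏ j ∈ Finset.range (r * n), vx r θ n j := by
    rw [coverVertexSet_eq, Finset.prod_image (fun j _ k _ h => hinj h)]
  have hprodE : ∏ e ∈ E, (∏ z ∈ e, z) = ∏ v ∈ coverVertexSet r θ n, v := by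
    rw [hbi]
    exact (Finset.prod_biUnion (fun e he f hf hef => hdisj e he f hf hef)).symm
  -- lower bound on the product of all vertices
  have hw : 0 < wFun r θ := wFun_pos hθ0 hθ1 hr
  have hexp : (wFun r θ) ^ n ≤ ∏ j ∈ Finset.range (r * n), vx r θ n j := by
    have h1 : ∏ j ∈ Finset.range (r * n), vx r θ n j
        = Real.exp (∑ j ∈ Finset.range (r * n), Real.log (vx r θ n j)) := by
      rw [Real.exp_sum]
      exact Finset.prod_congr rfl fun j _ => (Real.exp_log (vx_pos hθ0 hθ1 hn j)).symm
    have h2 : (wFun r θ) ^ n = Real.exp ((n : ℝ) * Real.log (wFun r θ)) := by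
      rw [Real.exp_nat_mul, Real.exp_log hw]
    rw [h1, h2]
    exact Real.exp_le_exp.2 (sum_log_ge hθ0 hθ1 hr hn)
  -- upper bound via hEdge
  have hup : ∏ e ∈ E, (∏ z ∈ e, z) ≤ (hEdge E) ^ n := by
    calc ∏ e ∈ E, (∏ z ∈ e, z) ≤ ∏ e ∈ E, hEdge E :=
          Finset.prod_le_prod (fun e he => Finset.prod_nonneg fun z hz => (hvpos e he z hz).le)
            hprodle
      _ = (hEdge E) ^ n := by rw [Finset.prod_const, hcardE]
  have hfinal : (wFun r θ) ^ n ≤ (hEdge E) ^ n := by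
    calc (wFun r θ) ^ n ≤ ∏ j ∈ Finset.range (r * n), vx r θ n j := hexp
      _ = ∏ e ∈ E, (∏ z ∈ e, z) := by rw [hprodE, hprodV]
      _ ≤ (hEdge E) ^ n := hup
  exact le_of_pow_le_pow_left₀ (by omega) hHpos.le hfinal

end

set_option maxHeartbeats 1000000 in
/-- **Lemma.** For `r ≥ 1` and `θ ∈ [0,1/(r+1))`, `h(r,θ) ≥ w(r,θ)`; in particular
`h(r,0) ≥ (r/(e(r+1)))^r`. -/
theorem hCov_ge_w (r : ℕ) (hr : 1 ≤ r) :
    (∀ θ : ℝ, 0 ≤ θ → θ < 1 / ((r : ℝ) + 1) → wFun r θ ≤ hCov r θ) ∧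
    ((r : ℝ) / (Real.exp 1 * ((r : ℝ) + 1))) ^ r ≤ hCov r 0 := by
  have main : ∀ θ : ℝ, 0 ≤ θ → θ < 1 / ((r : ℝ) + 1) → wFun r θ ≤ hCov r θ := by
    intro θ hθ0 hθ1
    rw [hCov, if_neg hθ1.ne]
    apply le_csInf
    · exact ⟨hCovN r θ 1, 1, le_refl 1, rfl⟩
    · rintro y ⟨n, hn, rfl⟩
      rw [hCovN]
      apply le_csInf
      · exact ⟨hEdge (coverE r θ n), coverE r θ n, isCover_coverE hθ1 hr hn, rfl⟩
      · rintro y ⟨E, hE, rfl⟩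
        exact w_le_hEdge hθ0 hθ1 hr hn hE
  refine ⟨main, ?_⟩
  have hr1 : (1:ℝ) ≤ r := by exact_mod_cast hr
  have h0 : (0:ℝ) < 1 / ((r:ℝ)+1) := by positivity
  refine le_trans (le_of_eq ?_) (main 0 le_rfl h0)
  rw [wFun, if_neg h0.ne]
  rw [mul_zero, sub_zero, Real.rpow_zero, div_one, sub_zero, one_div_one_div]
  have hA0 : (0:ℝ) ≤ 1 - 1 / ((r:ℝ)+1) := by
    have : 1 / ((r:ℝ)+1) ≤ 1 := by
      rw [div_le_one (by positivity)]; linarith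
    linarith
  rw [← Real.rpow_mul hA0]
  have hexp : (1 - 1 / ((r:ℝ)+1)) * ((r:ℝ)+1) = r := by
    field_simp
    ring
  rw [hexp, Real.rpow_natCast]
  have hA : 1 - 1 / ((r:ℝ)+1) = (r:ℝ) / ((r:ℝ)+1) := by
    field_simp
    ring
  have hee : Real.exp (-(r:ℝ)) = (Real.exp 1 ^ r)⁻¹ := by
    rw [Real.exp_neg]
    congr 1
    rw [← Real.exp_nat_mul, mul_one]
  rw [hA, hee, div_pow, div_pow, mul_pow]
  have h1 : (0:ℝ) < Real.exp 1 ^ r := by positivity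
  have h2 : (0:ℝ) < ((r:ℝ)+1) ^ r := by positivity
  field_simp

end ListCol
end

section
/- Let r ≥ 1 be an integer and let φ_r be the smallest positive solution of θ·(1 − 1/(r+1) − (r−1)θ)^{r−1} = w(r,θ). Define H(r,θ) = w(r,φ_r) for 0 ≤ θ ≤ φ_r and H(r,θ) = w(r,θ) for φ_r ≤ θ ≤ 1/(r+1). Then for all θ ∈ [0, 1/(r+1)], h(r,θ) ≥ H(r,θ). -/
open Finset

namespace ListCol

/-! ### Auxiliary analytic lemmas -/

/-- `Λ(x) = x log x − x`, an antiderivative of `log`. -/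
noncomputable def Lam (x : ℝ) : ℝ := x * Real.log x - x

lemma lam_step {x y : ℝ} (hx : 0 ≤ x) (hxy : x ≤ y) :
    Lam y - Lam x ≤ (y - x) * Real.log y := by 
  rcases eq_or_lt_of_le hx with h0 | h0
  · have hx0 : x = 0 := h0.symm ▸ rfl
    subst hx0
    simp only [Lam, Real.log_zero, mul_zero, zero_mul, sub_zero]
    have hy : 0 ≤ y := hxy
    nlinarith [Real.log_nonneg (le_refl 1)]
  · have hy : 0 < y := lt_of_lt_of_le h0 hxy
    have hlog : Real.log y - Real.log x ≤ y / x - 1 := by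
      have := Real.log_le_sub_one_of_pos (div_pos hy h0)
      rwa [Real.log_div hy.ne' h0.ne'] at this
    have hx' : x * (Real.log y - Real.log x) ≤ x * (y / x - 1) :=
      mul_le_mul_of_nonneg_left hlog h0.le
    have : x * (y / x - 1) = y - x := by field_simp
    simp only [Lam]
    nlinarith

lemma lam_step' {x y : ℝ} (hx : 0 < x) (hxy : x ≤ y) :
    (y - x) * Real.log x ≤ Lam y - Lam x := by 
  have hy : 0 < y := lt_of_lt_of_le hx hxy
  have hlog : Real.log x - Real.log y ≤ x / y - 1 := by
    have := Real.log_le_sub_one_of_pos (div_pos hx hy)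
    rwa [Real.log_div hx.ne' hy.ne'] at this
  have hy' : y * (Real.log x - Real.log y) ≤ y * (x / y - 1) :=
    mul_le_mul_of_nonneg_left hlog hy.le
  have : y * (x / y - 1) = x - y := by field_simp
  simp only [Lam]
  nlinarith

lemma lam_mid {a b : ℝ} (ha : 0 < a) (hab : a ≤ b) :
    Lam b - Lam a ≤ (b - a) * Real.log ((a + b) / 2) := by 
  set f : ℝ → ℝ := fun b => (b - a) * Real.log ((a + b) / 2) - Lam b with hf
  have hderiv : ∀ b ∈ Set.Ici a, HasDerivAt f
      (Real.log ((a + b) / 2) + (b - a) * (((a + b) / 2)⁻¹ * (1 / 2)) - Real.log b) b := by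
    intro b hb
    have hb0 : 0 < b := lt_of_lt_of_le ha hb
    have hm0 : 0 < (a + b) / 2 := by linarith
    have h1 : HasDerivAt (fun b : ℝ => b - a) 1 b := (hasDerivAt_id b).sub_const a
    have h2 : HasDerivAt (fun b : ℝ => (a + b) / 2) (1 / 2) b := by
      have : HasDerivAt (fun b : ℝ => a + b) 1 b := (hasDerivAt_id b).const_add a
      simpa using this.div_const 2
    have h3 : HasDerivAt (fun b : ℝ => Real.log ((a + b) / 2)) (((a + b) / 2)⁻¹ * (1 / 2)) b :=
      by have := (Real.hasDerivAt_log hm0.ne').comp b h2; exact this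
    have h4 : HasDerivAt (fun b : ℝ => (b - a) * Real.log ((a + b) / 2))
        (1 * Real.log ((a + b) / 2) + (b - a) * (((a + b) / 2)⁻¹ * (1 / 2))) b :=
      h1.mul h3
    have h5 : HasDerivAt Lam (Real.log b) b := by
      have := (Real.hasDerivAt_mul_log hb0.ne').sub (hasDerivAt_id b)
      exact this.congr_deriv (by ring)
    have := h4.sub h5
    exact this.congr_deriv (by ring)
  have hmono : MonotoneOn f (Set.Ici a) := by
    apply monotoneOn_of_deriv_nonneg (convex_Ici a)
    · intro b hb
      exact (hderiv b hb).continuousAt.continuousWithinAt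
    · intro b hb
      rw [interior_Ici] at hb
      exact (hderiv b (Set.mem_Ici.mpr (le_of_lt (Set.mem_Ioi.mp hb)))).differentiableAt.differentiableWithinAt
    · intro b hb
      rw [interior_Ici] at hb
      have hb0 : 0 < b := lt_trans ha hb
      have hm0 : 0 < (a + b) / 2 := by linarith
      rw [(hderiv b (Set.mem_Ici.mpr (le_of_lt (Set.mem_Ioi.mp hb)))).deriv]
      have hlog : Real.log b - Real.log ((a + b) / 2) ≤ b / ((a + b) / 2) - 1 := by
        have := Real.log_le_sub_one_of_pos (div_pos hb0 hm0)
        rwa [Real.log_div hb0.ne' hm0.ne'] at this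
      have heq : b / ((a + b) / 2) - 1 = (b - a) / (a + b) := by
        field_simp
        ring
      have heq2 : (b - a) * (((a + b) / 2)⁻¹ * (1 / 2)) = (b - a) / (a + b) := by
        field_simp
      rw [heq2]
      rw [heq] at hlog
      linarith
  have h0 := hmono (Set.self_mem_Ici) (Set.mem_Ici.mpr hab) hab
  have hfa : f a = -Lam a := by simp [hf]
  rw [hfa] at h0
  simp only [hf] at h0
  linarith

lemma lam_shift {x' x C : ℝ} (hx' : 0 < x') (hxx : x' ≤ x) (hxC : x ≤ x' + C) :
    Lam (x' + C) - Lam x' ≤ Lam (x + C) - Lam x := by 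
  have hx0 : 0 < x := lt_of_lt_of_le hx' hxx
  have hC0 : 0 ≤ C := by linarith
  have hxC0 : 0 < x' + C := by linarith
  have h1 : (x + C - (x' + C)) * Real.log (x' + C) ≤ Lam (x + C) - Lam (x' + C) :=
    lam_step' hxC0 (by linarith)
  have h2 : Lam x - Lam x' ≤ (x - x') * Real.log x := lam_step hx'.le hxx
  have h3 : (x - x') * Real.log x ≤ (x - x') * Real.log (x' + C) :=
    mul_le_mul_of_nonneg_left (Real.log_le_log hx0 hxC) (by linarith)
  have heq : x + C - (x' + C) = x - x' := by ring
  rw [heq] at h1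
  linarith

/-- Right-endpoint Riemann sum bound for `log`. -/
lemma tele_log {x₀ h : ℝ} (hx₀ : 0 ≤ x₀) (hh : 0 < h) (K : ℕ) :
    Lam (x₀ + K * h) - Lam x₀ ≤ h * ∑ i ∈ Finset.range K, Real.log (x₀ + (i + 1) * h) := by
  
  induction K with
  | zero => simp
  | succ K ih =>
      rw [Finset.sum_range_succ, mul_add]
      have hstep : Lam (x₀ + (K + 1 : ℕ) * h) - Lam (x₀ + K * h) ≤
          h * Real.log (x₀ + ((K : ℝ) + 1) * h) := by
        have hx : (0 : ℝ) ≤ x₀ + K * h := by positivity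
        have hxy : x₀ + (K : ℝ) * h ≤ x₀ + ((K : ℝ) + 1) * h := by nlinarith
        have := lam_step hx hxy
        have heq : (x₀ + ((K : ℝ) + 1) * h) - (x₀ + (K : ℝ) * h) = h := by ring
        rw [heq] at this
        have hc : ((K + 1 : ℕ) : ℝ) = (K : ℝ) + 1 := by push_cast; ring
        rw [hc]
        exact this
      have hc : ((K + 1 : ℕ) : ℝ) = (K : ℝ) + 1 := by push_cast; ring
      rw [hc] at hstep ⊢
      linarith

/-- Midpoint Riemann sum bound for `log`. -/
lemma tele_log_mid {x₀ h : ℝ} (hx₀ : 0 ≤ x₀) (hh : 0 < h) (K : ℕ) :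
    Lam (x₀ + K * h + h / 2) - Lam (x₀ + h / 2) ≤
      h * ∑ i ∈ Finset.range K, Real.log (x₀ + (i + 1) * h) := by
  
  induction K with
  | zero => simp
  | succ K ih =>
      rw [Finset.sum_range_succ, mul_add]
      have hstep : Lam (x₀ + ((K : ℝ) + 1) * h + h / 2) - Lam (x₀ + K * h + h / 2) ≤
          h * Real.log (x₀ + ((K : ℝ) + 1) * h) := by
        have ha : (0 : ℝ) < x₀ + K * h + h / 2 := by positivity
        have hab : x₀ + (K : ℝ) * h + h / 2 ≤ x₀ + ((K : ℝ) + 1) * h + h / 2 := by nlinarith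
        have := lam_mid ha hab
        have heq : (x₀ + ((K : ℝ) + 1) * h + h / 2) - (x₀ + (K : ℝ) * h + h / 2) = h := by ring
        have heq2 : ((x₀ + (K : ℝ) * h + h / 2) + (x₀ + ((K : ℝ) + 1) * h + h / 2)) / 2 =
            x₀ + ((K : ℝ) + 1) * h := by ring
        rw [heq, heq2] at this
        exact this
      have hc : ((K + 1 : ℕ) : ℝ) = (K : ℝ) + 1 := by push_cast; ring
      rw [hc]
      linarith

lemma wFun_log {r : ℕ} (hr : 1 ≤ r) {x : ℝ} (hx : 0 ≤ x) (hxc : x < 1 / ((r : ℝ) + 1)) :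
    (1 / ((r : ℝ) + 1) - x) * Real.log (wFun r x) =
      Lam (1 - 1 / ((r : ℝ) + 1) - ((r : ℝ) - 1) * x) - Lam x := by 
  have hrp : (0:ℝ) < (r:ℝ) + 1 := by positivity
  have hr1 : (1:ℝ) ≤ (r:ℝ) := by exact_mod_cast hr
  have hne : x ≠ 1 / ((r:ℝ) + 1) := ne_of_lt hxc
  rw [wFun, if_neg hne]
  set c : ℝ := 1 / ((r:ℝ) + 1) with hcdef
  have hc0 : 0 < c := by positivity
  have h1c : 1 - c = (r:ℝ) * c := by
    rw [hcdef]; field_simp; ring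
  set b : ℝ := 1 - c - ((r:ℝ) - 1) * x with hbdef
  have hδ : 0 < c - x := by linarith
  have hb0 : 0 < b := by
    have : ((r:ℝ) - 1) * x ≤ ((r:ℝ) - 1) * c :=
      mul_le_mul_of_nonneg_left hxc.le (by linarith)
    have hbb : b ≥ 1 - c - ((r:ℝ) - 1) * c := by rw [hbdef]; linarith
    nlinarith
  have hbx : b - x = (r:ℝ) * (c - x) := by rw [hbdef]; nlinarith [h1c]
  have hxx_pos : 0 < x ^ x := by
    rcases eq_or_lt_of_le hx with h0 | h0
    · rw [← h0]; norm_num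
    · exact Real.rpow_pos_of_pos h0 x
  have hlogxx : Real.log (x ^ x) = x * Real.log x := by
    rcases eq_or_lt_of_le hx with h0 | h0
    · rw [← h0]; norm_num
    · rw [Real.log_rpow h0]
  have hbbpos : 0 < b ^ b := Real.rpow_pos_of_pos hb0 b
  have hZpos : 0 < b ^ b / x ^ x := div_pos hbbpos hxx_pos
  rw [Real.log_mul (Real.exp_ne_zero _) (ne_of_gt (Real.rpow_pos_of_pos hZpos _)),
    Real.log_exp, Real.log_rpow hZpos, Real.log_div (ne_of_gt hbbpos) (ne_of_gt hxx_pos),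
    Real.log_rpow hb0, hlogxx]
  have hδne : c - x ≠ 0 := ne_of_gt hδ
  have key : ∀ Z : ℝ, (c - x) * (-(r:ℝ) + 1 / (c - x) * Z) = -(r:ℝ) * (c - x) + Z := by
    intro Z; field_simp
  rw [key]
  simp only [Lam]
  linarith [hbx]

lemma wFun_pos_s19 {r : ℕ} (hr : 1 ≤ r) {x : ℝ} (hx : 0 ≤ x) (hxc : x ≤ 1 / ((r : ℝ) + 1)) :
    0 < wFun r x := by 
  rcases eq_or_lt_of_le hxc with heq | hlt
  · rw [wFun, if_pos heq]
    positivity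
  · rw [wFun, if_neg (ne_of_lt hlt)]
    have hrp : (0:ℝ) < (r:ℝ) + 1 := by positivity
    have hr1 : (1:ℝ) ≤ (r:ℝ) := by exact_mod_cast hr
    have hc0 : 0 < 1 / ((r:ℝ) + 1) := by positivity
    have hb0 : 0 < 1 - 1 / ((r:ℝ) + 1) - ((r:ℝ) - 1) * x := by
      have h1c : 1 - 1 / ((r:ℝ) + 1) = (r:ℝ) * (1 / ((r:ℝ) + 1)) := by field_simp; ring
      have : ((r:ℝ) - 1) * x ≤ ((r:ℝ) - 1) * (1 / ((r:ℝ) + 1)) :=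
        mul_le_mul_of_nonneg_left hlt.le (by linarith)
      nlinarith
    have hxx_pos : 0 < x ^ x := by
      rcases eq_or_lt_of_le hx with h0 | h0
      · rw [← h0]; norm_num
      · exact Real.rpow_pos_of_pos h0 x
    have hZpos : 0 < (1 - 1 / ((r:ℝ) + 1) - ((r:ℝ) - 1) * x) ^
        (1 - 1 / ((r:ℝ) + 1) - ((r:ℝ) - 1) * x) / x ^ x :=
      div_pos (Real.rpow_pos_of_pos hb0 _) hxx_pos
    exact mul_pos (Real.exp_pos _) (Real.rpow_pos_of_pos hZpos _)

/-- The key pointwise inequality `(★)` for the derivative of `Q`. -/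
lemma star {r : ℕ} (hr : 2 ≤ r) {φ b u : ℝ} (hφ : 0 < φ) (hbφ : φ ≤ b) (hu0 : 0 ≤ u)
    (huφ : u ≤ φ) :
    Real.log φ + ((r : ℝ) - 1) * Real.log b ≤
      ((r : ℝ) - 1 / 2) * Real.log (b + ((r : ℝ) - 1 / 2) * u) +
        (1 / 2) * Real.log (φ - u / 2) := by 
  have hb0 : 0 < b := lt_of_lt_of_le hφ hbφ
  have hr2 : (2:ℝ) ≤ (r:ℝ) := by exact_mod_cast hr
  have hX0 : 0 < b + ((r:ℝ) - 1/2) * u := by nlinarith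
  have hx'0 : 0 < φ - u / 2 := by linarith
  by_cases hb2 : 2 * φ ≤ b
  · have h1 : Real.log b ≤ Real.log (b + ((r:ℝ) - 1/2) * u) :=
      Real.log_le_log hb0 (by nlinarith)
    have h2 : Real.log 2 + Real.log φ ≤ Real.log b := by
      rw [← Real.log_mul (by norm_num) (ne_of_gt hφ)]
      exact Real.log_le_log (by positivity) hb2
    have h3 : Real.log φ - Real.log 2 ≤ Real.log (φ - u / 2) := by
      rw [← Real.log_div (ne_of_gt hφ) (by norm_num)]
      exact Real.log_le_log (by positivity) (by linarith)
    have h4 : ((r:ℝ) - 1/2) * Real.log b ≤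
        ((r:ℝ) - 1/2) * Real.log (b + ((r:ℝ) - 1/2) * u) :=
      mul_le_mul_of_nonneg_left h1 (by linarith)
    nlinarith [h2, h3, h4]
  · push_neg at hb2
    set p : ℝ := u / φ with hpdef
    have hp0 : 0 ≤ p := div_nonneg hu0 hφ.le
    have hp1 : p ≤ 1 := (div_le_one hφ).mpr huφ
    have hup : u = p * φ := by rw [hpdef]; field_simp
    have hfac0 : (0:ℝ) < 1 + 3 * p / 4 := by linarith
    have h1 : b * (1 + 3 * p / 4) ≤ b + ((r:ℝ) - 1/2) * u := by nlinarith
    have h2 : Real.log (b * (1 + 3 * p / 4)) ≤ Real.log (b + ((r:ℝ) - 1/2) * u) :=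
      Real.log_le_log (by positivity) h1
    rw [Real.log_mul (ne_of_gt hb0) (ne_of_gt hfac0)] at h2
    have hlf : 0 ≤ Real.log (1 + 3 * p / 4) := Real.log_nonneg (by linarith)
    have h3 : ((r:ℝ) - 1/2) * (Real.log b + Real.log (1 + 3 * p / 4)) ≤
        ((r:ℝ) - 1/2) * Real.log (b + ((r:ℝ) - 1/2) * u) :=
      mul_le_mul_of_nonneg_left h2 (by linarith)
    have hx'eq : φ - u / 2 = φ * (1 - p / 2) := by rw [hup]; ring
    have hfac2 : (0:ℝ) < 1 - p / 2 := by linarith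
    have h4 : Real.log (φ - u / 2) = Real.log φ + Real.log (1 - p / 2) := by
      rw [hx'eq, Real.log_mul (ne_of_gt hφ) (ne_of_gt hfac2)]
    have hpoly : (1:ℝ) ≤ (1 + 3 * p / 4) ^ 3 * (1 - p / 2) := by nlinarith [sq_nonneg p, mul_nonneg hp0 hp0, mul_nonneg (mul_nonneg hp0 hp0) hp0]
    have hkey : 0 ≤ 3 * Real.log (1 + 3 * p / 4) + Real.log (1 - p / 2) := by
      have := Real.log_nonneg hpoly
      rwa [Real.log_mul (by positivity) (ne_of_gt hfac2), Real.log_pow] at this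
    have hlb : Real.log φ ≤ Real.log b := Real.log_le_log hφ hbφ
    nlinarith [h3, hkey, hlb, hlf]

/-- Monotonicity of `Q`, hence `Q u ≥ Q 0 = 0`. -/
lemma lemQ {r : ℕ} (hr : 2 ≤ r) {φ b LW : ℝ} (hφ : 0 < φ) (hbφ : φ ≤ b)
    (hLW : LW = Real.log φ + ((r : ℝ) - 1) * Real.log b)
    (hid : Lam b - Lam φ = (1 / ((r : ℝ) + 1) - φ) * LW)
    {u : ℝ} (hu0 : 0 ≤ u) (huφ : u ≤ φ) :
    ((1 / ((r : ℝ) + 1) - φ) + u) * LW ≤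
      Lam (b + ((r : ℝ) - 1 / 2) * u) - Lam (φ - u / 2) := by 
  have hb0 : 0 < b := lt_of_lt_of_le hφ hbφ
  have hr2 : (2:ℝ) ≤ (r:ℝ) := by exact_mod_cast hr
  set c : ℝ := 1 / ((r:ℝ) + 1) with hcdef
  set Q : ℝ → ℝ := fun u => Lam (b + ((r:ℝ) - 1/2) * u) - Lam (φ - u / 2) -
      ((c - φ) + u) * LW with hQdef
  have hderiv : ∀ v ∈ Set.Icc (0:ℝ) φ, HasDerivAt Q
      (((r:ℝ) - 1/2) * Real.log (b + ((r:ℝ) - 1/2) * v) +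
        (1/2) * Real.log (φ - v / 2) - LW) v := by
    intro v hv
    obtain ⟨hv0, hvφ⟩ := hv
    have hy1 : 0 < b + ((r:ℝ) - 1/2) * v := by nlinarith
    have hy2 : 0 < φ - v / 2 := by linarith
    have haff1 : HasDerivAt (fun u : ℝ => b + ((r:ℝ) - 1/2) * u) ((r:ℝ) - 1/2) v := by
      simpa using ((hasDerivAt_id v).const_mul ((r:ℝ) - 1/2)).const_add b
    have haff2 : HasDerivAt (fun u : ℝ => φ - u / 2) (-(1/2)) v := by
      simpa using ((hasDerivAt_id v).div_const 2).const_sub φ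
    have hΛ1 : HasDerivAt Lam (Real.log (b + ((r:ℝ) - 1/2) * v)) (b + ((r:ℝ) - 1/2) * v) := by
      have := (Real.hasDerivAt_mul_log hy1.ne').sub (hasDerivAt_id _)
      exact this.congr_deriv (by ring)
    have hΛ2 : HasDerivAt Lam (Real.log (φ - v / 2)) (φ - v / 2) := by
      have := (Real.hasDerivAt_mul_log hy2.ne').sub (hasDerivAt_id _)
      exact this.congr_deriv (by ring)
    have h1 := hΛ1.comp v haff1
    have h2 := hΛ2.comp v haff2
    have h3 : HasDerivAt (fun u : ℝ => ((c - φ) + u) * LW) (LW) v := by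
      simpa using ((hasDerivAt_id v).const_add (c - φ)).mul_const LW
    have := (h1.sub h2).sub h3
    exact this.congr_deriv (by ring)
  have hmono : MonotoneOn Q (Set.Icc 0 φ) := by
    apply monotoneOn_of_deriv_nonneg (convex_Icc 0 φ)
    · intro v hv
      exact (hderiv v hv).continuousAt.continuousWithinAt
    · intro v hv
      rw [interior_Icc] at hv
      exact (hderiv v (Set.mem_Icc_of_Ioo hv)).differentiableAt.differentiableWithinAt
    · intro v hv
      rw [interior_Icc] at hv
      rw [(hderiv v (Set.mem_Icc_of_Ioo hv)).deriv]
      have := star hr hφ hbφ (le_of_lt hv.1) (le_of_lt hv.2)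
      rw [← hLW] at this
      linarith
  have h0 : Q 0 ≤ Q u := hmono ⟨le_refl 0, hφ.le⟩ ⟨hu0, huφ⟩ hu0
  have hQ0 : Q 0 = 0 := by
    simp only [hQdef, mul_zero, add_zero, zero_div, sub_zero]
    rw [hid]
    ring
  rw [hQ0] at h0
  simp only [hQdef] at h0
  linarith

/-- Lemma B : the continuous core of the base case. -/
lemma lemB {r : ℕ} (hr : 2 ≤ r) {φ A h : ℝ} (hφ0 : 0 < φ)
    (hφc : φ < 1 / ((r : ℝ) + 1))
    (hLW : Real.log (wFun r φ) =
      Real.log φ + ((r : ℝ) - 1) * Real.log (1 - 1 / ((r : ℝ) + 1) - ((r : ℝ) - 1) * φ))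
    (hA0 : 0 ≤ A) (hAφ : A ≤ φ) (hφh : φ < A + h) (hhc : h ≤ 1 / ((r : ℝ) + 1) - A) :
    (1 / ((r : ℝ) + 1) - A) * Real.log (wFun r φ) ≤
      Lam (A + h / 2 + r * (1 / ((r : ℝ) + 1) - A)) - Lam (A + h / 2) := by 
  have hr1 : 1 ≤ r := le_trans (by norm_num) hr
  have hr2 : (2:ℝ) ≤ (r:ℝ) := by exact_mod_cast hr
  have hrp : (0:ℝ) < (r:ℝ) + 1 := by positivity
  set c : ℝ := 1 / ((r:ℝ) + 1) with hcdef
  have hc0 : 0 < c := by positivity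
  have h1c : 1 - c = (r:ℝ) * c := by rw [hcdef]; field_simp; ring
  set b : ℝ := 1 - c - ((r:ℝ) - 1) * φ with hbdef
  have hbφ : φ ≤ b := by
    have : b - φ = (r:ℝ) * (c - φ) := by rw [hbdef]; nlinarith [h1c]
    nlinarith
  have hid : Lam b - Lam φ = (c - φ) * Real.log (wFun r φ) := by
    have := wFun_log hr1 hφ0.le hφc
    rw [← hcdef, ← hbdef] at this
    linarith
  have hAc : A < c := lt_of_le_of_lt hAφ hφc
  have hu0 : (0:ℝ) ≤ φ - A := by linarith
  have huφ : φ - A ≤ φ := by linarith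
  have hQ := lemQ hr hφ0 hbφ hLW (by linarith [hid]) hu0 huφ
  -- identify points
  have he1 : b + ((r:ℝ) - 1/2) * (φ - A) = (A + φ) / 2 + (r:ℝ) * (c - A) := by
    rw [hbdef]; nlinarith [h1c]
  have he2 : φ - (φ - A) / 2 = (A + φ) / 2 := by ring
  have he3 : (c - φ) + (φ - A) = c - A := by ring
  rw [he1, he2, he3] at hQ
  -- shift
  have hx'0 : (0:ℝ) < (A + φ) / 2 := by linarith
  have hshift : Lam ((A + φ) / 2 + (r:ℝ) * (c - A)) - Lam ((A + φ) / 2) ≤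
      Lam (A + h / 2 + (r:ℝ) * (c - A)) - Lam (A + h / 2) := by
    have hxx : (A + φ) / 2 ≤ A + h / 2 := by linarith
    have hCA : (0:ℝ) ≤ c - A := by linarith
    have hxC : A + h / 2 ≤ (A + φ) / 2 + (r:ℝ) * (c - A) := by nlinarith
    have := lam_shift hx'0 hxx hxC
    have harr : (A + φ) / 2 + (r:ℝ) * (c - A) = (A + φ) / 2 + ((r:ℝ) * (c - A)) := by ring
    have harr2 : A + h / 2 + (r:ℝ) * (c - A) = (A + h / 2) + ((r:ℝ) * (c - A)) := by ring
    rw [harr, harr2]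
    exact this
  calc (c - A) * Real.log (wFun r φ) ≤
      Lam ((A + φ) / 2 + (r:ℝ) * (c - A)) - Lam ((A + φ) / 2) := hQ
    _ ≤ Lam (A + h / 2 + (r:ℝ) * (c - A)) - Lam (A + h / 2) := hshift

/-- The main analytic lemma: lower bound for partial products of grid points. -/
lemma AL_core {r : ℕ} (hr : 2 ≤ r) {φ : ℝ} (hφ0 : 0 < φ)
    (hφc : φ < 1 / ((r : ℝ) + 1))
    (hLW : Real.log (wFun r φ) =
      Real.log φ + ((r : ℝ) - 1) * Real.log (1 - 1 / ((r : ℝ) + 1) - ((r : ℝ) - 1) * φ))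
    {A h : ℝ} {m m₀ : ℕ} (hA0 : 0 ≤ A) (hAφ : A ≤ φ) (hφh : φ < A + h) (hh : 0 < h)
    (hm₀ : 1 ≤ m₀) (hδ : 1 / ((r : ℝ) + 1) - A = m₀ * h) (hm : m₀ ≤ m) :
    (m : ℝ) * Real.log (wFun r φ) ≤
      ∑ i ∈ Finset.range (r * m), Real.log (A + (i + 1) * h) := by
  have hr1 : 1 ≤ r := le_trans (by norm_num) hr
  have hr2 : (2:ℝ) ≤ (r:ℝ) := by exact_mod_cast hr
  have hrp : (0:ℝ) < (r:ℝ) + 1 := by positivity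
  set c : ℝ := 1 / ((r:ℝ) + 1) with hcdef
  have hc0 : 0 < c := by positivity
  have h1c : 1 - c = (r:ℝ) * c := by rw [hcdef]; field_simp; ring
  set b : ℝ := 1 - c - ((r:ℝ) - 1) * φ with hbdef
  have hbφ : φ ≤ b := by
    have : b - φ = (r:ℝ) * (c - φ) := by rw [hbdef]; nlinarith [h1c]
    nlinarith
  have hb0 : 0 < b := lt_of_lt_of_le hφ0 hbφ
  have hm₀R : (1:ℝ) ≤ (m₀:ℝ) := by exact_mod_cast hm₀
  have hWr : Real.log (wFun r φ) ≤ (r:ℝ) * Real.log b := by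
    rw [hLW]
    have h1 : Real.log φ ≤ Real.log b := Real.log_le_log hφ0 hbφ
    nlinarith [h1]
  induction m, hm using Nat.le_induction with
  | base =>
      have htele := tele_log_mid (x₀ := A) (h := h) hA0 hh (r * m₀)
      have hpt : A + (r * m₀ : ℕ) * h + h / 2 = A + h / 2 + (r:ℝ) * (c - A) := by
        push_cast
        rw [hδ]
        ring
      rw [hpt] at htele
      have hhc : h ≤ c - A := by
        rw [hδ]
        nlinarith
      have hB := lemB hr hφ0 hφc hLW hA0 hAφ hφh hhc
      rw [← hcdef] at hB
      have hchain : (c - A) * Real.log (wFun r φ) ≤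
          h * ∑ i ∈ Finset.range (r * m₀), Real.log (A + (i + 1) * h) := le_trans hB htele
      rw [hδ] at hchain
      have h2 : h * ((m₀:ℝ) * Real.log (wFun r φ)) ≤
          h * ∑ i ∈ Finset.range (r * m₀), Real.log (A + (i + 1) * h) := by
        calc h * ((m₀:ℝ) * Real.log (wFun r φ))
            = (m₀:ℝ) * h * Real.log (wFun r φ) := by ring
          _ ≤ h * ∑ i ∈ Finset.range (r * m₀), Real.log (A + (i + 1) * h) := hchain
      exact le_of_mul_le_mul_left h2 hh
  | succ m hm ih =>
      have hmono : r * m ≤ r * (m + 1) := Nat.mul_le_mul_left r (Nat.le_succ m)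
      have hsplit : ∑ i ∈ Finset.range (r * (m + 1)), Real.log (A + (i + 1) * h) =
          (∑ i ∈ Finset.range (r * m), Real.log (A + (i + 1) * h)) +
            ∑ i ∈ Finset.Ico (r * m) (r * (m + 1)), Real.log (A + (i + 1) * h) := by
        rw [Finset.range_eq_Ico, ← Finset.sum_Ico_consecutive
          (fun i : ℕ => Real.log (A + ((i : ℝ) + 1) * h)) (Nat.zero_le (r * m)) hmono,
          Finset.range_eq_Ico]
      have hextra : (Finset.Ico (r * m) (r * (m + 1))).card • Real.log b ≤
          ∑ i ∈ Finset.Ico (r * m) (r * (m + 1)), Real.log (A + (i + 1) * h) := by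
        apply Finset.card_nsmul_le_sum
        intro i hi
        rw [Finset.mem_Ico] at hi
        apply Real.log_le_log hb0
        have hi1 : r * m₀ ≤ i := le_trans (Nat.mul_le_mul_left r hm) hi.1
        have hi2 : ((r * m₀ : ℕ) : ℝ) ≤ (i : ℝ) := by exact_mod_cast hi1
        have hrm : ((r * m₀ : ℕ) : ℝ) * h = (r:ℝ) * (c - A) := by
          push_cast
          rw [hδ]
          ring
        have hbA : b ≤ A + (r:ℝ) * (c - A) := by
          have hmul : ((r:ℝ) - 1) * A ≤ ((r:ℝ) - 1) * φ :=
            mul_le_mul_of_nonneg_left hAφ (by linarith)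
          rw [hbdef]
          linarith [h1c, hmul]
        calc b ≤ A + (r:ℝ) * (c - A) := hbA
          _ = A + ((r * m₀ : ℕ) : ℝ) * h := by rw [hrm]
          _ ≤ A + ((i : ℝ) + 1) * h := by nlinarith
      have hcard : (Finset.Ico (r * m) (r * (m + 1))).card = r := by
        rw [Nat.card_Ico, Nat.mul_succ, Nat.add_sub_cancel_left]
      rw [hcard, nsmul_eq_mul] at hextra
      rw [hsplit]
      push_cast
      push_cast at ih
      linarith [ih, hextra, hWr]

/-! ### Auxiliary combinatorial lemmas -/

lemma prod_mono_bottom {g : ℕ → ℝ} (hg : Monotone g) (hpos : ∀ j, 0 < g j) :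
    ∀ (k : ℕ) (J : Finset ℕ) (a : ℕ), J.card = k → (∀ j ∈ J, a ≤ j) →
      ∏ j ∈ Finset.Ico a (a + k), g j ≤ ∏ j ∈ J, g j := by 
  intro k
  induction k with
  | zero =>
      intro J a hcard _
      have hJ0 : J = ∅ := Finset.card_eq_zero.mp hcard
      subst hJ0
      simp
  | succ k ih =>
      intro J a hcard hJ
      have hne : J.Nonempty := Finset.card_pos.mp (by omega)
      have hjmJ : J.min' hne ∈ J := J.min'_mem hne
      have hajm : a ≤ J.min' hne := hJ _ hjmJ
      have hcard' : (J.erase (J.min' hne)).card = k := by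
        rw [Finset.card_erase_of_mem hjmJ, hcard]
        omega
      have hJ'b : ∀ j ∈ J.erase (J.min' hne), a + 1 ≤ j := by
        intro j hj
        have hjJ : j ∈ J := Finset.mem_of_mem_erase hj
        have hne2 : j ≠ J.min' hne := Finset.ne_of_mem_erase hj
        have := J.min'_le j hjJ
        omega
      have hIH := ih (J.erase (J.min' hne)) (a + 1) hcard' hJ'b
      have hsplit : Finset.Ico a (a + (k + 1)) = insert a (Finset.Ico (a + 1) (a + 1 + k)) := by
        have h1 : a < a + (k + 1) := by omega
        have h2 : a + 1 + k = a + (k + 1) := by omega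
        rw [h2, ← Finset.insert_Ico_add_one_left_eq_Ico h1]
      rw [hsplit, Finset.prod_insert (by simp)]
      rw [← Finset.mul_prod_erase J g hjmJ]
      have hpos1 : (0:ℝ) ≤ ∏ j ∈ Finset.Ico (a + 1) (a + 1 + k), g j :=
        le_of_lt (Finset.prod_pos fun j _ => hpos j)
      exact mul_le_mul (hg hajm) hIH hpos1 (le_of_lt (hpos _))

lemma edge_le_hEdge {E : Finset (Finset ℝ)} {e : Finset ℝ} (he : e ∈ E) :
    ∏ z ∈ e, z ≤ hEdge E := by 
  have hset : {y : ℝ | ∃ e ∈ E, y = ∏ z ∈ e, z} =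
      ↑(E.image (fun e => ∏ z ∈ e, z)) := by
    ext y
    simp only [Set.mem_setOf_eq, Finset.coe_image, Set.mem_image, Finset.mem_coe]
    constructor
    · rintro ⟨e, he, rfl⟩; exact ⟨e, he, rfl⟩
    · rintro ⟨e, he, rfl⟩; exact ⟨e, he, rfl⟩
  rw [hEdge, hset]
  exact le_csSup (E.image _).bddAbove
    (Finset.mem_coe.mpr (Finset.mem_image_of_mem _ he))

/-- The combinatorial counting lemma. -/
lemma CL {r n : ℕ} {θ : ℝ} (hr : 1 ≤ r) (hn : 1 ≤ n) (hθ0 : 0 ≤ θ)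
    (hθc : θ < 1 / ((r : ℝ) + 1)) {E : Finset (Finset ℝ)} (hE : IsCover r θ n E) (t₀ : ℕ) :
    ∃ s : ℕ, s ≤ t₀ ∧ s ≤ n ∧
      (∏ j ∈ Finset.Ico t₀ (t₀ + r * (n - s)),
          (θ + (1 / ((r : ℝ) + 1) - θ) * ((j : ℝ) + 1) / (n : ℝ))) ≤ hEdge E ^ (n - s) := by
  
  classical
  obtain ⟨hcard, hdisj, hmem⟩ := hE
  have hrp : (0:ℝ) < (r:ℝ) + 1 := by positivity
  have hδ : 0 < 1 / ((r:ℝ) + 1) - θ := by linarith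
  have hnR : (0:ℝ) < (n:ℝ) := by exact_mod_cast hn
  set g : ℕ → ℝ := fun j => θ + (1 / ((r:ℝ) + 1) - θ) * ((j:ℝ) + 1) / (n:ℝ) with hgdef
  have hgmono : StrictMono g := by
    intro i j hij
    simp only [hgdef]
    have hij' : ((i:ℝ) + 1) < ((j:ℝ) + 1) := by
      have : (i:ℝ) < (j:ℝ) := by exact_mod_cast hij
      linarith
    have key := (div_lt_div_iff_of_pos_right hnR).mpr (mul_lt_mul_of_pos_left hij' hδ)
    linarith
  have hgpos : ∀ j, 0 < g j := by
    intro j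
    simp only [hgdef]
    have h2 : 0 < (1 / ((r:ℝ) + 1) - θ) * ((j:ℝ) + 1) / (n:ℝ) :=
      div_pos (mul_pos hδ (by positivity)) hnR
    linarith
  have hV : coverVertexSet r θ n = (Finset.range (r * n)).image g := rfl
  have hVpos : ∀ y ∈ coverVertexSet r θ n, 0 < y := by
    intro y hy
    rw [hV] at hy
    obtain ⟨j, _, rfl⟩ := Finset.mem_image.mp hy
    exact hgpos j
  have hVcard : (coverVertexSet r θ n).card = r * n := by
    rw [hV, Finset.card_image_of_injective _ hgmono.injective, Finset.card_range]
  have hbiU : E.biUnion id = coverVertexSet r θ n := by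
    ext y
    simp only [Finset.mem_biUnion, id]
    exact hmem y
  have hEn : E.card = n := by
    have h1 : (E.biUnion id).card = ∑ e ∈ E, (id e).card :=
      Finset.card_biUnion (fun e he f hf hef => hdisj e he f hf hef)
    rw [hbiU, hVcard] at h1
    have h2 : ∑ e ∈ E, (id e : Finset ℝ).card = E.card * r := by
      have hc2 : ∀ e ∈ E, (id e : Finset ℝ).card = r := fun e he => hcard e he
      rw [Finset.sum_congr rfl hc2, Finset.sum_const, smul_eq_mul]
    rw [h2] at h1
    have hr0 : 0 < r := hr
    exact Nat.eq_of_mul_eq_mul_right hr0 (h1.symm.trans (Nat.mul_comm r n))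
  set B : Finset ℝ := (Finset.range t₀).image g with hB
  set S : Finset (Finset ℝ) := E.filter (fun e => ∃ y ∈ e, y ∈ B) with hS
  set pick : Finset ℝ → ℝ := fun e => if h : ∃ y ∈ e, y ∈ B then h.choose else 0 with hpickdef
  have hpick : ∀ e ∈ S, pick e ∈ e ∧ pick e ∈ B := by
    intro e he
    rw [hS, Finset.mem_filter] at he
    obtain ⟨heE, hex⟩ := he
    simp only [hpickdef]
    rw [dif_pos hex]
    exact hex.choose_spec
  have hSE : S ⊆ E := Finset.filter_subset _ _
  have hst : S.card ≤ t₀ := by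
    have h1 : S.card ≤ B.card := by
      apply Finset.card_le_card_of_injOn pick (fun e he => (hpick e he).2)
      intro e1 he1 e2 he2 heq
      by_contra hne
      have hd := hdisj e1 (hSE (Finset.mem_coe.mp he1)) e2 (hSE (Finset.mem_coe.mp he2)) hne
      exact Finset.disjoint_left.mp hd (hpick e1 (Finset.mem_coe.mp he1)).1
        (heq ▸ (hpick e2 (Finset.mem_coe.mp he2)).1)
    calc S.card ≤ B.card := h1
      _ ≤ (Finset.range t₀).card := Finset.card_image_le
      _ = t₀ := Finset.card_range t₀
  have hsn : S.card ≤ n := by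
    calc S.card ≤ E.card := Finset.card_le_card hSE
      _ = n := hEn
  set T : Finset (Finset ℝ) := E \ S with hT
  have hTsub : T ⊆ E := Finset.sdiff_subset
  have hTcard : T.card = n - S.card := by
    rw [hT, Finset.card_sdiff_of_subset hSE, hEn]
  set U : Finset ℝ := T.biUnion id with hU
  have hUcard : U.card = (n - S.card) * r := by
    have h1 : (T.biUnion id).card = ∑ e ∈ T, (id e : Finset ℝ).card :=
      Finset.card_biUnion (fun e he f hf hef => hdisj e (hTsub he) f (hTsub hf) hef)
    have hc2 : ∀ e ∈ T, (id e : Finset ℝ).card = r := fun e he => hcard e (hTsub he)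
    rw [hU, h1, Finset.sum_congr rfl hc2, Finset.sum_const, smul_eq_mul, hTcard]
  have hUV : U ⊆ coverVertexSet r θ n := by
    intro y hy
    obtain ⟨e, heT, hye⟩ := Finset.mem_biUnion.mp hy
    exact (hmem y).mp ⟨e, hTsub heT, hye⟩
  have hUB : ∀ y ∈ U, y ∉ B := by
    intro y hy hyB
    obtain ⟨e, heT, hye⟩ := Finset.mem_biUnion.mp hy
    have heS : e ∈ S := by
      rw [hS, Finset.mem_filter]
      exact ⟨hTsub heT, ⟨y, hye, hyB⟩⟩
    rw [hT, Finset.mem_sdiff] at heT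
    exact heT.2 heS
  have hprodTU : ∏ e ∈ T, ∏ z ∈ e, z = ∏ y ∈ U, y := by
    rw [hU]
    exact (Finset.prod_biUnion (fun e he f hf hef =>
      hdisj e (hTsub he) f (hTsub hf) hef)).symm
  set I : Finset ℕ := (Finset.range (r * n)).filter (fun j => g j ∈ U) with hI
  have hIimg : I.image g = U := by
    apply Finset.Subset.antisymm
    · intro y hy
      obtain ⟨j, hj, rfl⟩ := Finset.mem_image.mp hy
      exact (Finset.mem_filter.mp hj).2
    · intro y hy
      obtain ⟨j, hjr, rfl⟩ := Finset.mem_image.mp (hV ▸ hUV hy)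
      exact Finset.mem_image_of_mem g (Finset.mem_filter.mpr ⟨hjr, hy⟩)
  have hIcard : I.card = (n - S.card) * r := by
    rw [← hUcard, ← hIimg]
    exact (Finset.card_image_of_injective _ hgmono.injective).symm
  have hIlow : ∀ j ∈ I, t₀ ≤ j := by
    intro j hj
    by_contra hlt
    push_neg at hlt
    have hjB : g j ∈ B := by
      rw [hB]
      exact Finset.mem_image_of_mem g (Finset.mem_range.mpr hlt)
    exact hUB (g j) (Finset.mem_filter.mp hj).2 hjB
  have hprodIU : ∏ j ∈ I, g j = ∏ y ∈ U, y := by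
    rw [← hIimg, Finset.prod_image (fun i _ j _ hij => hgmono.injective hij)]
  have hbot : ∏ j ∈ Finset.Ico t₀ (t₀ + I.card), g j ≤ ∏ j ∈ I, g j :=
    prod_mono_bottom hgmono.monotone hgpos I.card I t₀ rfl hIlow
  have hM : ∏ e ∈ T, ∏ z ∈ e, z ≤ hEdge E ^ T.card := by
    rw [← Finset.prod_const]
    apply Finset.prod_le_prod
    · intro e he
      exact le_of_lt (Finset.prod_pos fun z hz =>
        hVpos z ((hmem z).mp ⟨e, hTsub he, hz⟩))
    · intro e he
      exact edge_le_hEdge (hTsub he)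
  refine ⟨S.card, hst, hsn, ?_⟩
  have hIcard' : I.card = r * (n - S.card) := by rw [hIcard, Nat.mul_comm]
  calc ∏ j ∈ Finset.Ico t₀ (t₀ + r * (n - S.card)),
        (θ + (1 / ((r:ℝ) + 1) - θ) * ((j:ℝ) + 1) / (n:ℝ))
      = ∏ j ∈ Finset.Ico t₀ (t₀ + I.card), g j := by rw [hIcard']
    _ ≤ ∏ j ∈ I, g j := hbot
    _ = ∏ y ∈ U, y := hprodIU
    _ = ∏ e ∈ T, ∏ z ∈ e, z := hprodTU.symm
    _ ≤ hEdge E ^ T.card := hM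
    _ = hEdge E ^ (n - S.card) := by rw [hTcard]

lemma cover_exists_s19 {r n : ℕ} {θ : ℝ} (hr : 1 ≤ r) (hn : 1 ≤ n)
    (hθc : θ < 1 / ((r : ℝ) + 1)) : ∃ E, IsCover r θ n E := by 
  classical
  have hrp : (0:ℝ) < (r:ℝ) + 1 := by positivity
  have hδ : 0 < 1 / ((r:ℝ) + 1) - θ := by linarith
  have hnR : (0:ℝ) < (n:ℝ) := by exact_mod_cast hn
  have hr0 : 0 < r := hr
  set g : ℕ → ℝ := fun j => θ + (1 / ((r:ℝ) + 1) - θ) * ((j:ℝ) + 1) / (n:ℝ) with hgdef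
  have hgmono : StrictMono g := by
    intro i j hij
    simp only [hgdef]
    have hij' : ((i:ℝ) + 1) < ((j:ℝ) + 1) := by
      have : (i:ℝ) < (j:ℝ) := by exact_mod_cast hij
      linarith
    have key := (div_lt_div_iff_of_pos_right hnR).mpr (mul_lt_mul_of_pos_left hij' hδ)
    linarith
  refine ⟨(Finset.range n).image (fun i => (Finset.range r).image (fun q => g (r * i + q))),
    ?_, ?_, ?_⟩
  · intro e he
    obtain ⟨i, _, rfl⟩ := Finset.mem_image.mp he
    rw [Finset.card_image_of_injective _ ?_, Finset.card_range]
    intro q1 q2 hq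
    have := hgmono.injective hq
    omega
  · intro e he f hf hef
    obtain ⟨i, hi, rfl⟩ := Finset.mem_image.mp he
    obtain ⟨i', hi', rfl⟩ := Finset.mem_image.mp hf
    rw [Finset.disjoint_left]
    intro y hy1 hy2
    obtain ⟨q, hq, rfl⟩ := Finset.mem_image.mp hy1
    obtain ⟨q', hq', heq⟩ := Finset.mem_image.mp hy2
    have hidx : r * i' + q' = r * i + q := hgmono.injective heq
    rw [Finset.mem_range] at hq hq'
    have e1 : (r * i' + q') / r = i' + q' / r := Nat.mul_add_div hr0 i' q'
    have e2 : (r * i + q) / r = i + q / r := Nat.mul_add_div hr0 i q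
    rw [Nat.div_eq_of_lt hq'] at e1
    rw [Nat.div_eq_of_lt hq] at e2
    rw [hidx, e2] at e1
    have hii : i = i' := by omega
    subst hii
    exact hef rfl
  · intro y
    constructor
    · rintro ⟨e, he, hye⟩
      obtain ⟨i, hi, rfl⟩ := Finset.mem_image.mp he
      obtain ⟨q, hq, rfl⟩ := Finset.mem_image.mp hye
      rw [Finset.mem_range] at hi hq
      have h2 : r * (i + 1) = r * i + r := Nat.mul_succ r i
      have h3 : r * (i + 1) ≤ r * n := Nat.mul_le_mul_left r (by omega)
      exact Finset.mem_image_of_mem _ (Finset.mem_range.mpr (by omega))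
    · intro hy
      obtain ⟨j, hj, rfl⟩ := Finset.mem_image.mp hy
      rw [Finset.mem_range] at hj
      refine ⟨(Finset.range r).image (fun q => g (r * (j / r) + q)), ?_, ?_⟩
      · apply Finset.mem_image_of_mem
        rw [Finset.mem_range]
        rw [Nat.div_lt_iff_lt_mul hr0]
        have : r * n = n * r := Nat.mul_comm r n
        omega
      · have hmod : r * (j / r) + j % r = j := Nat.div_add_mod j r
        have hmem2 : g (r * (j / r) + j % r) ∈
            (Finset.range r).image (fun q => g (r * (j / r) + q)) :=
          Finset.mem_image_of_mem _ (Finset.mem_range.mpr (Nat.mod_lt j hr0))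
        rw [hmod] at hmem2
        exact hmem2

lemma hEdge_nonneg {r n : ℕ} {θ : ℝ} (hr : 1 ≤ r) (hn : 1 ≤ n) (hθ0 : 0 ≤ θ)
    (hθc : θ < 1 / ((r : ℝ) + 1)) {E : Finset (Finset ℝ)} (hE : IsCover r θ n E) :
    0 ≤ hEdge E := by 
  classical
  obtain ⟨hcard, hdisj, hmem⟩ := hE
  have hrp : (0:ℝ) < (r:ℝ) + 1 := by positivity
  have hδ : 0 < 1 / ((r:ℝ) + 1) - θ := by linarith
  have hnR : (0:ℝ) < (n:ℝ) := by exact_mod_cast hn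
  have hVpos : ∀ y ∈ coverVertexSet r θ n, 0 < y := by
    intro y hy
    obtain ⟨j, _, rfl⟩ := Finset.mem_image.mp hy
    have h2 : 0 < (1 / ((r:ℝ) + 1) - θ) * ((j:ℝ) + 1) / (n:ℝ) :=
      div_pos (mul_pos hδ (by positivity)) hnR
    linarith
  have hVne : (coverVertexSet r θ n).Nonempty := by
    apply Finset.Nonempty.image
    rw [Finset.nonempty_range_iff]
    have : 0 < r * n := Nat.mul_pos hr hn
    omega
  obtain ⟨y, hy⟩ := hVne
  obtain ⟨e, he, hye⟩ := (hmem y).mpr hy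
  have hpos : 0 < ∏ z ∈ e, z :=
    Finset.prod_pos fun z hz => hVpos z ((hmem z).mp ⟨e, he, hz⟩)
  exact le_trans hpos.le (edge_le_hEdge he)


lemma exp_bound {W : ℝ} (hW : 0 < W) {K m : ℕ} {f : ℕ → ℝ}
    (hf : ∀ i ∈ Finset.range K, 0 < f i)
    (hlog : (m : ℝ) * Real.log W ≤ ∑ i ∈ Finset.range K, Real.log (f i)) :
    W ^ m ≤ ∏ i ∈ Finset.range K, f i := by
  have h1 : 0 < ∏ i ∈ Finset.range K, f i := Finset.prod_pos hf
  rw [← Real.log_le_log_iff (pow_pos hW m) h1, Real.log_pow,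
    Real.log_prod (fun i hi => (hf i hi).ne')]
  exact hlog

lemma prod_Ico_shift {r n : ℕ} {θ : ℝ} (t K : ℕ) :
    ∏ j ∈ Finset.Ico t (t + K), (θ + (1 / ((r : ℝ) + 1) - θ) * ((j : ℝ) + 1) / (n : ℝ)) =
      ∏ i ∈ Finset.range K,
        ((θ + (t : ℝ) * ((1 / ((r : ℝ) + 1) - θ) / (n : ℝ))) +
          ((i : ℝ) + 1) * ((1 / ((r : ℝ) + 1) - θ) / (n : ℝ))) := by
  rw [Finset.prod_Ico_eq_prod_range, Nat.add_sub_cancel_left]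
  apply Finset.prod_congr rfl
  intro i _
  push_cast
  ring

lemma M_ge_cr {r n : ℕ} {θ : ℝ} (hr : 1 ≤ r) (hn : 1 ≤ n) (hθ0 : 0 ≤ θ)
    (hθc : θ < 1 / ((r : ℝ) + 1)) {E : Finset (Finset ℝ)} (hE : IsCover r θ n E) :
    (1 / ((r : ℝ) + 1)) ^ r ≤ hEdge E := by
  obtain ⟨s, hst, hsn, hprod⟩ := CL hr hn hθ0 hθc hE (n - 1)
  have hm1 : 1 ≤ n - s := by omega
  have hM0 : 0 ≤ hEdge E := hEdge_nonneg hr hn hθ0 hθc hE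
  have hc0 : (0:ℝ) < 1 / ((r:ℝ) + 1) := by positivity
  have hnR : (0:ℝ) < (n:ℝ) := by exact_mod_cast hn
  have hδ : 0 < 1 / ((r:ℝ) + 1) - θ := by linarith
  have hlow : ((1 / ((r:ℝ) + 1)) ^ r) ^ (n - s) ≤
      ∏ j ∈ Finset.Ico (n - 1) ((n - 1) + r * (n - s)),
        (θ + (1 / ((r:ℝ) + 1) - θ) * ((j:ℝ) + 1) / (n:ℝ)) := by
    rw [← pow_mul]
    have hcard : (Finset.Ico (n - 1) ((n - 1) + r * (n - s))).card = r * (n - s) := by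
      rw [Nat.card_Ico, Nat.add_sub_cancel_left]
    calc (1 / ((r:ℝ) + 1)) ^ (r * (n - s))
        = ∏ _j ∈ Finset.Ico (n - 1) ((n - 1) + r * (n - s)), (1 / ((r:ℝ) + 1)) := by
          rw [Finset.prod_const, hcard]
      _ ≤ ∏ j ∈ Finset.Ico (n - 1) ((n - 1) + r * (n - s)),
            (θ + (1 / ((r:ℝ) + 1) - θ) * ((j:ℝ) + 1) / (n:ℝ)) := by
          apply Finset.prod_le_prod (fun _ _ => hc0.le)
          intro j hj
          rw [Finset.mem_Ico] at hj
          have hj1 : (n : ℝ) ≤ (j:ℝ) + 1 := by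
            have h1 : n - 1 ≤ j := hj.1
            have hn' : n ≤ j + 1 := by omega
            exact_mod_cast hn'
          have h2' : (1 / ((r:ℝ) + 1) - θ) * (n:ℝ) ≤ (1 / ((r:ℝ) + 1) - θ) * ((j:ℝ) + 1) :=
            mul_le_mul_of_nonneg_left hj1 hδ.le
          have h2 : (1 / ((r:ℝ) + 1) - θ) * (n:ℝ) / (n:ℝ) ≤
              (1 / ((r:ℝ) + 1) - θ) * ((j:ℝ) + 1) / (n:ℝ) :=
            (div_le_div_iff_of_pos_right hnR).mpr h2'
          have h3 : (1 / ((r:ℝ) + 1) - θ) * (n:ℝ) / (n:ℝ) = 1 / ((r:ℝ) + 1) - θ := by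
            field_simp
          linarith
  exact le_of_pow_le_pow_left₀ (by omega) hM0 (le_trans hlow hprod)

lemma phi_le_c {r : ℕ} (hr : 1 ≤ r) {φ : ℝ}
    (hφ : IsLeast {θ : ℝ | 0 < θ ∧
      θ * (1 - 1 / ((r : ℝ) + 1) - ((r : ℝ) - 1) * θ) ^ (r - 1) = wFun r θ} φ) :
    φ ≤ 1 / ((r : ℝ) + 1) := by
  apply hφ.2
  constructor
  · positivity
  · have hb : 1 - 1 / ((r:ℝ) + 1) - ((r:ℝ) - 1) * (1 / ((r:ℝ) + 1)) = 1 / ((r:ℝ) + 1) := by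
      have : ((r:ℝ) + 1) ≠ 0 := by positivity
      field_simp
      ring
    rw [hb, wFun, if_pos rfl, ← pow_succ']
    congr 1
    omega

/-- Per-cover key bound. -/
lemma key {r n : ℕ} {θ φ : ℝ} (hr : 1 ≤ r)
    (hφ : IsLeast {θ : ℝ | 0 < θ ∧
      θ * (1 - 1 / ((r : ℝ) + 1) - ((r : ℝ) - 1) * θ) ^ (r - 1) = wFun r θ} φ)
    (hn : 1 ≤ n) (hθ0 : 0 ≤ θ) (hθc : θ < 1 / ((r : ℝ) + 1))
    {E : Finset (Finset ℝ)} (hE : IsCover r θ n E) :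
    (if θ ≤ φ then wFun r φ else wFun r θ) ≤ hEdge E := by 
  classical
  have hrp : (0:ℝ) < (r:ℝ) + 1 := by positivity
  have hc0 : (0:ℝ) < 1 / ((r:ℝ) + 1) := by positivity
  obtain ⟨⟨hφ0, hroot⟩, hlb⟩ := hφ
  have hφc : φ ≤ 1 / ((r:ℝ) + 1) := phi_le_c hr ⟨⟨hφ0, hroot⟩, hlb⟩
  have hM0 : 0 ≤ hEdge E := hEdge_nonneg hr hn hθ0 hθc hE
  have hnR : (0:ℝ) < (n:ℝ) := by exact_mod_cast hn
  have hδθ : 0 < 1 / ((r:ℝ) + 1) - θ := by linarith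
  have hh : 0 < (1 / ((r:ℝ) + 1) - θ) / (n:ℝ) := div_pos hδθ hnR
  have hnh : (n:ℝ) * ((1 / ((r:ℝ) + 1) - θ) / (n:ℝ)) = 1 / ((r:ℝ) + 1) - θ := by
    field_simp
  by_cases hθφ : θ ≤ φ
  · rw [if_pos hθφ]
    by_cases hφc' : φ = 1 / ((r:ℝ) + 1)
    · rw [hφc', wFun, if_pos rfl]
      exact M_ge_cr hr hn hθ0 hθc hE
    · have hφltc : φ < 1 / ((r:ℝ) + 1) := lt_of_le_of_ne hφc hφc'
      by_cases hr1 : r = 1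
      · subst hr1
        have hMc := M_ge_cr (le_refl 1) hn hθ0 hθc hE
        rw [pow_one] at hMc
        have hb1 : (1:ℝ) - 1 / (((1:ℕ):ℝ) + 1) - (((1:ℕ):ℝ) - 1) * φ = 1 / (((1:ℕ):ℝ) + 1) := by
          norm_num
        have hid := wFun_log (le_refl 1) hφ0.le hφltc
        rw [hb1] at hid
        have hstep := lam_step hφ0.le hφltc.le
        have hwpos : 0 < wFun 1 φ := wFun_pos_s19 (le_refl 1) hφ0.le hφltc.le
        have hlog : Real.log (wFun 1 φ) ≤ Real.log (1 / (((1:ℕ):ℝ) + 1)) := by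
          by_contra hcon
          push_neg at hcon
          have h1 : (1 / (((1:ℕ):ℝ) + 1) - φ) * Real.log (1 / (((1:ℕ):ℝ) + 1)) <
              (1 / (((1:ℕ):ℝ) + 1) - φ) * Real.log (wFun 1 φ) :=
            mul_lt_mul_of_pos_left hcon (by linarith)
          rw [hid] at h1
          linarith
        have := (Real.log_le_log_iff hwpos (by positivity)).mp hlog
        linarith
      · -- main case : r ≥ 2, φ < c
        have hr2 : 2 ≤ r := by omega
        have hθltφc : θ < 1 / ((r:ℝ) + 1) := hθc
        -- b and its properties
        have hr1R : (1:ℝ) ≤ (r:ℝ) := by exact_mod_cast hr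
        have h1c : 1 - 1 / ((r:ℝ) + 1) = (r:ℝ) * (1 / ((r:ℝ) + 1)) := by field_simp; ring
        have hb0 : 0 < 1 - 1 / ((r:ℝ) + 1) - ((r:ℝ) - 1) * φ := by
          have hmul : ((r:ℝ) - 1) * φ ≤ ((r:ℝ) - 1) * (1 / ((r:ℝ) + 1)) :=
            mul_le_mul_of_nonneg_left hφc (by linarith)
          nlinarith
        have hLW : Real.log (wFun r φ) = Real.log φ +
            ((r:ℝ) - 1) * Real.log (1 - 1 / ((r:ℝ) + 1) - ((r:ℝ) - 1) * φ) := by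
          rw [← hroot, Real.log_mul hφ0.ne' (pow_ne_zero _ hb0.ne'), Real.log_pow,
            Nat.cast_sub hr, Nat.cast_one]
        have hW : 0 < wFun r φ := wFun_pos_s19 (le_trans (by norm_num) hr2) hφ0.le hφc
        -- floor
        set hstep : ℝ := (1 / ((r:ℝ) + 1) - θ) / (n:ℝ) with hstepdef
        have hfl : 0 ≤ (φ - θ) / hstep := div_nonneg (by linarith) hh.le
        set t : ℕ := Nat.floor ((φ - θ) / hstep) with htdef
        have ht_le : (t:ℝ) ≤ (φ - θ) / hstep := Nat.floor_le hfl
        have ht_lt : (φ - θ) / hstep < (t:ℝ) + 1 := Nat.lt_floor_add_one _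
        have htn : t < n := by
          rw [htdef, Nat.floor_lt hfl]
          rw [div_lt_iff₀ hh]
          have : (n:ℝ) * hstep = 1 / ((r:ℝ) + 1) - θ := hnh
          linarith
        clear_value hstep t
        have hAφ' : θ + (t:ℝ) * hstep ≤ φ := by
          have := (le_div_iff₀ hh).mp ht_le
          linarith
        have hφh' : φ < (θ + (t:ℝ) * hstep) + hstep := by
          have := (div_lt_iff₀ hh).mp ht_lt
          nlinarith
        have hA0 : 0 ≤ θ + (t:ℝ) * hstep := by positivity
        have hδA : 1 / ((r:ℝ) + 1) - (θ + (t:ℝ) * hstep) = ((n - t : ℕ):ℝ) * hstep := by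
          rw [Nat.cast_sub htn.le]
          have h2 : (n:ℝ) * hstep = 1 / ((r:ℝ) + 1) - θ := hnh
          linear_combination -h2
        obtain ⟨s, hst, hsn, hprod⟩ := CL hr hn hθ0 hθc hE t
        have hm0 : 1 ≤ n - t := by omega
        have hmm : n - t ≤ n - s := Nat.sub_le_sub_left hst n
        have hal := AL_core hr2 hφ0 hφltc hLW hA0 hAφ' hφh' hh hm0 hδA hmm
        have hexp : wFun r φ ^ (n - s) ≤
            ∏ i ∈ Finset.range (r * (n - s)), ((θ + (t:ℝ) * hstep) + ((i:ℝ) + 1) * hstep) := by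
          apply exp_bound hW
          · intro i _
            have : 0 < ((i:ℝ) + 1) * hstep := mul_pos (by positivity) hh
            linarith
          · exact hal
        rw [prod_Ico_shift] at hprod
        rw [← hstepdef] at hprod
        have hchain := le_trans hexp hprod
        exact le_of_pow_le_pow_left₀ (by omega) hM0 hchain
  · rw [if_neg hθφ]
    push_neg at hθφ
    obtain ⟨s, hs0, hsn, hprod⟩ := CL hr hn hθ0 hθc hE 0
    have hs0' : s = 0 := Nat.le_zero.mp hs0
    subst hs0'
    rw [prod_Ico_shift] at hprod
    have hid := wFun_log hr hθ0 hθc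
    have htele := tele_log (x₀ := θ) (h := (1 / ((r:ℝ) + 1) - θ) / (n:ℝ)) hθ0 hh (r * n)
    have hpt : θ + ((r * n : ℕ):ℝ) * ((1 / ((r:ℝ) + 1) - θ) / (n:ℝ)) =
        1 - 1 / ((r:ℝ) + 1) - ((r:ℝ) - 1) * θ := by
      have h1c : 1 - 1 / ((r:ℝ) + 1) = (r:ℝ) * (1 / ((r:ℝ) + 1)) := by field_simp; ring
      push_cast
      have h2 : (r:ℝ) * (n:ℝ) * ((1 / ((r:ℝ) + 1) - θ) / (n:ℝ)) =
          (r:ℝ) * (1 / ((r:ℝ) + 1) - θ) := by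
        field_simp
      rw [h2]
      linarith
    rw [hpt] at htele
    have hW : 0 < wFun r θ := wFun_pos_s19 hr hθ0 hθc.le
    have hnlog : (n:ℝ) * Real.log (wFun r θ) ≤
        ∑ i ∈ Finset.range (r * n), Real.log (θ + ((i:ℝ) + 1) * ((1 / ((r:ℝ) + 1) - θ) / (n:ℝ))) := by
      have hc1 : (1 / ((r:ℝ) + 1) - θ) * Real.log (wFun r θ) ≤
          ((1 / ((r:ℝ) + 1) - θ) / (n:ℝ)) *
            ∑ i ∈ Finset.range (r * n), Real.log (θ + ((i:ℝ) + 1) * ((1 / ((r:ℝ) + 1) - θ) / (n:ℝ))) := by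
        rw [hid]
        linarith
      have h2 : ((1 / ((r:ℝ) + 1) - θ) / (n:ℝ)) * ((n:ℝ) * Real.log (wFun r θ)) ≤
          ((1 / ((r:ℝ) + 1) - θ) / (n:ℝ)) *
            ∑ i ∈ Finset.range (r * n), Real.log (θ + ((i:ℝ) + 1) * ((1 / ((r:ℝ) + 1) - θ) / (n:ℝ))) := by
        calc ((1 / ((r:ℝ) + 1) - θ) / (n:ℝ)) * ((n:ℝ) * Real.log (wFun r θ))
            = (1 / ((r:ℝ) + 1) - θ) * Real.log (wFun r θ) := by
              field_simp
          _ ≤ _ := hc1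
      exact le_of_mul_le_mul_left h2 hh
    have hexp : wFun r θ ^ n ≤
        ∏ i ∈ Finset.range (r * n), (θ + ((i:ℝ) + 1) * ((1 / ((r:ℝ) + 1) - θ) / (n:ℝ))) := by
      apply exp_bound hW
      · intro i _
        have : 0 < ((i:ℝ) + 1) * ((1 / ((r:ℝ) + 1) - θ) / (n:ℝ)) := mul_pos (by positivity) hh
        linarith
      · exact hnlog
    have hconv : ∏ i ∈ Finset.range (r * (n - 0)),
        ((θ + ((0:ℕ):ℝ) * ((1 / ((r:ℝ) + 1) - θ) / (n:ℝ))) +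
          ((i:ℝ) + 1) * ((1 / ((r:ℝ) + 1) - θ) / (n:ℝ))) =
        ∏ i ∈ Finset.range (r * n), (θ + ((i:ℝ) + 1) * ((1 / ((r:ℝ) + 1) - θ) / (n:ℝ))) := by
      rw [Nat.sub_zero]
      apply Finset.prod_congr rfl
      intro i _
      push_cast
      ring
    rw [hconv, Nat.sub_zero] at hprod
    exact le_of_pow_le_pow_left₀ (by omega) hM0 (le_trans hexp hprod)

/-- **Theorem.** Let `r ≥ 1` and let `φ_r` be the smallest positive solution of
`θ·(1 − 1/(r+1) − (r−1)θ)^{r−1} = w(r,θ)`.  With `H(r,θ) = w(r,φ_r)` for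
`0 ≤ θ ≤ φ_r` and `H(r,θ) = w(r,θ)` for `φ_r ≤ θ ≤ 1/(r+1)`, one has
`h(r,θ) ≥ H(r,θ)` on `[0,1/(r+1)]`. -/
theorem hCov_ge_H (r : ℕ) (hr : 1 ≤ r) (φ : ℝ)
    (hφ : IsLeast {θ : ℝ | 0 < θ ∧
      θ * (1 - 1 / ((r : ℝ) + 1) - ((r : ℝ) - 1) * θ) ^ (r - 1) = wFun r θ} φ) :
    ∀ θ : ℝ, 0 ≤ θ → θ ≤ 1 / ((r : ℝ) + 1) →
      (if θ ≤ φ then wFun r φ else wFun r θ) ≤ hCov r θ := by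
  
  intro θ hθ0 hθc
  have hφc : φ ≤ 1 / ((r:ℝ) + 1) := phi_le_c hr hφ
  by_cases hθceq : θ = 1 / ((r:ℝ) + 1)
  · rw [hCov, if_pos hθceq]
    by_cases hθφ : θ ≤ φ
    · rw [if_pos hθφ]
      have hφeq : φ = 1 / ((r:ℝ) + 1) := le_antisymm hφc (hθceq ▸ hθφ)
      rw [hφeq, wFun, if_pos rfl]
    · rw [if_neg hθφ, hθceq, wFun, if_pos rfl]
  · have hθltc : θ < 1 / ((r:ℝ) + 1) := lt_of_le_of_ne hθc hθceq
    rw [hCov, if_neg hθceq]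
    apply le_csInf
    · exact ⟨hCovN r θ 1, 1, le_refl 1, rfl⟩
    · rintro y ⟨n, hn, rfl⟩
      rw [hCovN]
      obtain ⟨E₀, hE₀⟩ := cover_exists_s19 hr hn hθltc
      apply le_csInf
      · exact ⟨hEdge E₀, E₀, hE₀, rfl⟩
      · rintro y ⟨E, hE, rfl⟩
        exact key hr hφ hn hθ0 hθltc hE

end ListCol
end
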